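/- arXiv:1311.4296 — 8 statements merged into one kernel-verified Lean document; each statement's English description precedes it below -/
import Mathlib

section
/- Let F be a submodular function on V with F(∅) = 0, f its Lovász extension, and x* the unique minimizer of f(x) + (1/2)‖x‖² over ℝ^V. Then for every μ ∈ ℝ, both S_μ^≥ = {i ∈ V : x*_i ≥ μ} and S_μ^> = {i ∈ V : x*_i > μ} minimize the function S ↦ F(S) + μ|S| over all S ⊆ V; moreover every minimizer T of S ↦ F(S) + μ|S| satisfies S_μ^> ⊆ T ⊆ S_μ^≥. In particular (taking μ = 0), {i : x*_i > 0} is the minimal minimizer of F and {i : x*_i ≥ 0} is the maximal minimizer of F. -/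
open Finset
open Finset

def Submodular {n : ℕ} (F : Finset (Fin n) → ℝ) : Prop :=
  ∀ S T : Finset (Fin n), F (S ∪ T) + F (S ∩ T) ≤ F S + F T

def basePolytope {n : ℕ} (F : Finset (Fin n) → ℝ) : Set (Fin n → ℝ) :=
  {y | (∀ S : Finset (Fin n), ∑ i ∈ S, y i ≤ F S) ∧ ∑ i, y i = F Finset.univ}

def SortsDesc {n : ℕ} (x : Fin n → ℝ) (σ : Equiv.Perm (Fin n)) : Prop :=
  ∀ j k : Fin n, j ≤ k → x (σ k) ≤ x (σ j)

def lovaszVal {n : ℕ} (F : Finset (Fin n) → ℝ) (x : Fin n → ℝ) (σ : Equiv.Perm (Fin n)) : ℝ :=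
  ∑ k : Fin n, x (σ k) *
    (F ((Finset.univ.filter (fun j => j ≤ k)).image ⇑σ)
      - F ((Finset.univ.filter (fun j => j < k)).image ⇑σ))

def IsLovasz {n : ℕ} (F : Finset (Fin n) → ℝ) (f : (Fin n → ℝ) → ℝ) : Prop :=
  ∀ (x : Fin n → ℝ) (σ : Equiv.Perm (Fin n)), SortsDesc x σ → f x = lovaszVal F x σ

namespace S9
variable {n : ℕ}

/-- prefix set of the first `m` positions under `σ`. -/
def pre (σ : Equiv.Perm (Fin n)) (m : ℕ) : Finset (Fin n) :=
  (Finset.univ.filter (fun j : Fin n => (j : ℕ) < m)).image σ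

lemma mem_pre {σ : Equiv.Perm (Fin n)} {m : ℕ} {j : Fin n} :
    σ j ∈ pre σ m ↔ (j : ℕ) < m := by
  simp [pre, σ.injective.eq_iff]

lemma mem_pre' {σ : Equiv.Perm (Fin n)} {m : ℕ} {i : Fin n} :
    i ∈ pre σ m ↔ ((σ.symm i : Fin n) : ℕ) < m := by
  have := mem_pre (σ := σ) (m := m) (j := σ.symm i)
  simpa using this

lemma pre_zero (σ : Equiv.Perm (Fin n)) : pre σ 0 = ∅ := by
  simp [pre]

lemma pre_top (σ : Equiv.Perm (Fin n)) {m : ℕ} (h : n ≤ m) : pre σ m = univ := by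
  ext i
  simpa [mem_pre'] using lt_of_lt_of_le (σ.symm i).isLt h

lemma notMem_pre_self (σ : Equiv.Perm (Fin n)) {m : ℕ} (h : m < n) :
    σ ⟨m, h⟩ ∉ pre σ m := by
  simp [mem_pre]

lemma pre_succ (σ : Equiv.Perm (Fin n)) {m : ℕ} (h : m < n) :
    pre σ (m + 1) = insert (σ ⟨m, h⟩) (pre σ m) := by
  ext i
  rw [mem_insert, mem_pre', mem_pre']
  constructor
  · intro hi
    rcases Nat.lt_succ_iff_lt_or_eq.mp hi with h1 | h1
    · exact Or.inr h1
    · left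
      have : σ.symm i = ⟨m, h⟩ := Fin.ext h1
      rw [← this, Equiv.apply_symm_apply]
  · rintro (rfl | h1)
    · simp
    · omega

/-- the greedy vector associated to a permutation. -/
def greedy (F : Finset (Fin n) → ℝ) (σ : Equiv.Perm (Fin n)) (i : Fin n) : ℝ :=
  F (pre σ ((σ.symm i : ℕ) + 1)) - F (pre σ (σ.symm i))

lemma greedy_apply (F : Finset (Fin n) → ℝ) (σ : Equiv.Perm (Fin n)) {m : ℕ} (h : m < n) :
    greedy F σ (σ ⟨m, h⟩) = F (pre σ (m + 1)) - F (pre σ m) := by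
  simp [greedy]

lemma sum_greedy_pre (F : Finset (Fin n) → ℝ) (hF0 : F ∅ = 0) (σ : Equiv.Perm (Fin n))
    {m : ℕ} (h : m ≤ n) : ∑ i ∈ pre σ m, greedy F σ i = F (pre σ m) := by
  induction m with
  | zero => simp [pre_zero, hF0]
  | succ m ih =>
    have hm : m < n := h
    rw [pre_succ σ hm, sum_insert (notMem_pre_self σ hm), greedy_apply F σ hm,
      ih (le_of_lt hm), ← pre_succ σ hm]
    ring

lemma greedy_le (F : Finset (Fin n) → ℝ) (hF0 : F ∅ = 0) (hF : Submodular F)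
    (σ : Equiv.Perm (Fin n)) (S : Finset (Fin n)) :
    ∑ i ∈ S, greedy F σ i ≤ F S := by
  have claim : ∀ m, m ≤ n → ∀ S : Finset (Fin n), S ⊆ pre σ m →
      ∑ i ∈ S, greedy F σ i ≤ F S := by
    intro m
    induction m with
    | zero =>
      intro _ S hS
      rw [pre_zero] at hS
      rw [Finset.subset_empty.mp hS]
      simp [hF0]
    | succ m ih =>
      intro h S hS
      have hm : m < n := h
      rw [pre_succ σ hm] at hS
      by_cases he : σ ⟨m, hm⟩ ∈ S
      · set e := σ ⟨m, hm⟩ with he'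
        have hS' : S.erase e ⊆ pre σ m := by
          intro i hi
          rcases Finset.mem_erase.mp hi with ⟨hne, hiS⟩
          rcases Finset.mem_insert.mp (hS hiS) with h1 | h1
          · exact absurd h1 hne
          · exact h1
        have h1 := ih (le_of_lt hm) (S.erase e) hS'
        have hsub := hF S (pre σ m)
        have hu : S ∪ pre σ m = insert e (pre σ m) := by
          apply Finset.Subset.antisymm
          · exact Finset.union_subset hS (Finset.subset_insert _ _)
          · intro i hi
            rcases Finset.mem_insert.mp hi with rfl | h1
            · exact Finset.mem_union_left _ he
            · exact Finset.mem_union_right _ h1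
        have hi' : S ∩ pre σ m = S.erase e := by
          apply Finset.Subset.antisymm
          · intro i hi
            rcases Finset.mem_inter.mp hi with ⟨h1, h2⟩
            refine Finset.mem_erase.mpr ⟨?_, h1⟩
            rintro rfl
            exact notMem_pre_self σ hm h2
          · intro i hi
            exact Finset.mem_inter.mpr ⟨Finset.mem_of_mem_erase hi, hS' hi⟩
        rw [hu, hi', ← pre_succ σ hm] at hsub
        have h2 : ∑ i ∈ S, greedy F σ i
            = ∑ i ∈ S.erase e, greedy F σ i + greedy F σ e := by
          rw [Finset.sum_erase_add]
          exact he
        rw [h2, he', greedy_apply F σ hm]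
        linarith
      · have : S ⊆ pre σ m := by
          intro i hi
          rcases Finset.mem_insert.mp (hS hi) with rfl | h1
          · exact absurd hi he
          · exact h1
        exact ih (le_of_lt hm) S this
  exact claim n le_rfl S (by rw [pre_top σ le_rfl]; exact Finset.subset_univ S)

lemma greedy_mem_base (F : Finset (Fin n) → ℝ) (hF0 : F ∅ = 0) (hF : Submodular F)
    (σ : Equiv.Perm (Fin n)) : greedy F σ ∈ basePolytope F := by
  constructor
  · exact greedy_le F hF0 hF σ
  · have := sum_greedy_pre F hF0 σ (le_refl n)
    rwa [pre_top σ le_rfl] at this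

/-- value of `x` at position `k` of `σ`, extended by `0`. -/
def Xv (x : Fin n → ℝ) (σ : Equiv.Perm (Fin n)) (k : ℕ) : ℝ :=
  if h : k < n then x (σ ⟨k, h⟩) else 0

lemma Xv_of_lt (x : Fin n → ℝ) (σ : Equiv.Perm (Fin n)) {k : ℕ} (h : k < n) :
    Xv x σ k = x (σ ⟨k, h⟩) := dif_pos h

lemma Xv_n (x : Fin n → ℝ) (σ : Equiv.Perm (Fin n)) : Xv x σ n = 0 := dif_neg (lt_irrefl n)

lemma lovasz_range (F : Finset (Fin n) → ℝ) (x : Fin n → ℝ) (σ : Equiv.Perm (Fin n)) :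
    lovaszVal F x σ = ∑ k ∈ range n, Xv x σ k * (F (pre σ (k + 1)) - F (pre σ k)) := by
  rw [← Fin.sum_univ_eq_sum_range (fun k => Xv x σ k * (F (pre σ (k + 1)) - F (pre σ k))) n]
  apply Finset.sum_congr rfl
  intro k _
  have e1 : (Finset.univ.filter (fun j => j ≤ k))
      = (Finset.univ.filter (fun j : Fin n => (j : ℕ) < (k : ℕ) + 1)) := by
    ext j
    simp only [mem_filter, mem_univ, true_and, Fin.le_def]
    omega
  have e2 : (Finset.univ.filter (fun j => j < k))
      = (Finset.univ.filter (fun j : Fin n => (j : ℕ) < (k : ℕ))) := by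
    ext j
    simp only [mem_filter, mem_univ, true_and, Fin.lt_def]
  have h1 : (Finset.univ.filter (fun j => j ≤ k)).image ⇑σ = pre σ ((k : ℕ) + 1) := by
    rw [pre, e1]
  have h2 : (Finset.univ.filter (fun j => j < k)).image ⇑σ = pre σ (k : ℕ) := by
    rw [pre, e2]
  rw [h1, h2, Xv_of_lt x σ k.isLt]

lemma abel_id (N : ℕ) (X D : ℕ → ℝ) (hD0 : D 0 = 0) (hDn : D N = 0) :
    ∑ k ∈ range N, X k * (D (k + 1) - D k) = ∑ k ∈ range N, (X k - X (k + 1)) * D (k + 1) := by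
  have key : ∑ k ∈ range N, (X k * (D (k + 1) - D k) - (X k - X (k + 1)) * D (k + 1))
      = X N * D N - X 0 * D 0 := by
    rw [← Finset.sum_range_sub (fun k => X k * D k) N]
    apply Finset.sum_congr rfl
    intro k _
    ring
  rw [Finset.sum_sub_distrib] at key
  rw [hD0, hDn] at key
  have : X N * 0 - X 0 * 0 = 0 := by ring
  rw [this] at key
  linarith

lemma main_identity (F : Finset (Fin n) → ℝ) (hF0 : F ∅ = 0) (x : Fin n → ℝ)
    (σ : Equiv.Perm (Fin n)) (y : Fin n → ℝ) (hyV : ∑ i, y i = F Finset.univ) :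
    lovaszVal F x σ - ∑ i, x i * y i
      = ∑ k ∈ range n,
          (Xv x σ k - Xv x σ (k + 1)) * (F (pre σ (k + 1)) - ∑ i ∈ pre σ (k + 1), y i) := by
  set D : ℕ → ℝ := fun m => F (pre σ m) - ∑ i ∈ pre σ m, y i with hD
  have hD0 : D 0 = 0 := by simp [hD, pre_zero, hF0]
  have hDn : D n = 0 := by simp [hD, pre_top σ le_rfl, hyV]
  have hinner : ∑ i, x i * y i
      = ∑ k ∈ range n, Xv x σ k * ((∑ i ∈ pre σ (k + 1), y i) - ∑ i ∈ pre σ k, y i) := by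
    rw [← Equiv.sum_comp σ (fun i => x i * y i)]
    rw [← Fin.sum_univ_eq_sum_range
      (fun k => Xv x σ k * ((∑ i ∈ pre σ (k + 1), y i) - ∑ i ∈ pre σ k, y i)) n]
    apply Finset.sum_congr rfl
    intro k _
    have hk : (k : ℕ) < n := k.isLt
    rw [Xv_of_lt x σ hk]
    have : (∑ i ∈ pre σ ((k : ℕ) + 1), y i) - ∑ i ∈ pre σ (k : ℕ), y i
        = y (σ ⟨(k : ℕ), hk⟩) := by
      rw [pre_succ σ hk, sum_insert (notMem_pre_self σ hk)]
      ring
    rw [this]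
  rw [lovasz_range, hinner, ← Finset.sum_sub_distrib]
  have : ∀ k ∈ range n,
      Xv x σ k * (F (pre σ (k + 1)) - F (pre σ k))
        - Xv x σ k * ((∑ i ∈ pre σ (k + 1), y i) - ∑ i ∈ pre σ k, y i)
      = Xv x σ k * (D (k + 1) - D k) := by
    intro k _
    simp only [hD]
    ring
  rw [Finset.sum_congr rfl this, abel_id n (Xv x σ) D hD0 hDn]

lemma inner_le_lovasz (F : Finset (Fin n) → ℝ) (hF0 : F ∅ = 0) {x : Fin n → ℝ}
    {σ : Equiv.Perm (Fin n)} (hs : SortsDesc x σ) {y : Fin n → ℝ} (hy : y ∈ basePolytope F) :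
    ∑ i, x i * y i ≤ lovaszVal F x σ := by
  have h := main_identity F hF0 x σ y hy.2
  have hnn : 0 ≤ ∑ k ∈ range n,
      (Xv x σ k - Xv x σ (k + 1)) * (F (pre σ (k + 1)) - ∑ i ∈ pre σ (k + 1), y i) := by
    apply Finset.sum_nonneg
    intro k hk
    rw [mem_range] at hk
    by_cases hk1 : k + 1 < n
    · apply mul_nonneg
      · have := hs ⟨k, hk⟩ ⟨k + 1, hk1⟩ (by simp [Fin.le_def])
        rw [Xv_of_lt x σ hk, Xv_of_lt x σ hk1]
        linarith
      · have := hy.1 (pre σ (k + 1))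
        linarith
    · have hkn : k + 1 = n := by omega
      rw [hkn, pre_top σ le_rfl]
      have : F Finset.univ - ∑ i ∈ Finset.univ, y i = 0 := by
        rw [hy.2]; ring
      rw [this, mul_zero]
  linarith

lemma lovasz_eq_inner (F : Finset (Fin n) → ℝ) (x : Fin n → ℝ) (σ : Equiv.Perm (Fin n)) :
    lovaszVal F x σ = ∑ i, x i * greedy F σ i := by
  rw [lovasz_range, ← Equiv.sum_comp σ (fun i => x i * greedy F σ i),
    ← Fin.sum_univ_eq_sum_range (fun k => Xv x σ k * (F (pre σ (k + 1)) - F (pre σ k))) n]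
  apply Finset.sum_congr rfl
  intro k _
  rw [Xv_of_lt x σ k.isLt]
  have : greedy F σ (σ k) = F (pre σ ((k : ℕ) + 1)) - F (pre σ (k : ℕ)) := by
    simp [greedy]
  rw [this]

lemma sortable (x : Fin n → ℝ) : ∃ σ : Equiv.Perm (Fin n), SortsDesc x σ := by
  refine ⟨Tuple.sort (fun i => -x i), fun j k hjk => ?_⟩
  have := Tuple.monotone_sort (fun i => -x i) hjk
  simpa using this

lemma downset_eq {K : Finset (Fin n)} (hK : ∀ j' j : Fin n, j' ≤ j → j ∈ K → j' ∈ K) :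
    K = univ.filter (fun j : Fin n => (j : ℕ) < K.card) := by
  ext j
  simp only [mem_filter, mem_univ, true_and]
  constructor
  · intro hj
    have hsub : Finset.Iic j ⊆ K := fun j' hj' => hK j' j (Finset.mem_Iic.mp hj') hj
    have := Finset.card_le_card hsub
    rw [Fin.card_Iic] at this
    omega
  · intro hj
    by_contra hjK
    have hsub : K ⊆ Finset.Iio j := by
      intro k hk
      rw [Finset.mem_Iio]
      rcases lt_or_ge k j with h | h
      · exact h
      · exact absurd (hK j k h hk) hjK
    have := Finset.card_le_card hsub
    rw [Fin.card_Iio] at this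
    omega

lemma levelset_eq {x : Fin n → ℝ} {σ : Equiv.Perm (Fin n)} (hs : SortsDesc x σ)
    (p : ℝ → Prop) [DecidablePred p] (hp : ∀ v w : ℝ, p v → v ≤ w → p w) :
    univ.filter (fun i => p (x i)) = pre σ (univ.filter (fun i => p (x i))).card := by
  set A := univ.filter (fun i => p (x i)) with hA
  set K := univ.filter (fun j => p (x (σ j))) with hK
  have hAK : A = K.image σ := by
    ext i
    simp only [hA, hK, mem_filter, mem_univ, true_and, mem_image]
    constructor
    · intro h
      exact ⟨σ.symm i, by simpa using h, by simp⟩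
    · rintro ⟨j, hj, rfl⟩
      exact hj
  have hKd : K = univ.filter (fun j : Fin n => (j : ℕ) < K.card) := by
    apply downset_eq
    intro j' j hle hj
    simp only [hK, mem_filter, mem_univ, true_and] at hj ⊢
    exact hp _ _ hj (hs j' j hle)
  rw [pre, hAK, card_image_of_injective _ σ.injective, ← hKd]

lemma lovasz_smul (F : Finset (Fin n) → ℝ) (x : Fin n → ℝ) (σ : Equiv.Perm (Fin n)) (t : ℝ) :
    lovaszVal F (fun i => t * x i) σ = t * lovaszVal F x σ := by
  rw [lovaszVal, lovaszVal, Finset.mul_sum]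
  apply Finset.sum_congr rfl
  intro k _
  ring

lemma sortsDesc_smul {x : Fin n → ℝ} {σ : Equiv.Perm (Fin n)} (hs : SortsDesc x σ) {t : ℝ}
    (ht : 0 ≤ t) : SortsDesc (fun i => t * x i) σ :=
  fun j k hjk => mul_le_mul_of_nonneg_left (hs j k hjk) ht

lemma sortsDesc_const (c : ℝ) (σ : Equiv.Perm (Fin n)) : SortsDesc (fun _ => c) σ :=
  fun _ _ _ => le_refl c

lemma lovasz_const (F : Finset (Fin n) → ℝ) (hF0 : F ∅ = 0) (c : ℝ) (σ : Equiv.Perm (Fin n)) :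
    lovaszVal F (fun _ => c) σ = c * F Finset.univ := by
  rw [lovasz_range]
  have h : ∀ k ∈ range n, Xv (fun _ => c) σ k * (F (pre σ (k + 1)) - F (pre σ k))
      = c * (F (pre σ (k + 1)) - F (pre σ k)) := by
    intro k hk
    rw [mem_range] at hk
    rw [Xv_of_lt _ σ hk]
  rw [Finset.sum_congr rfl h, ← Finset.mul_sum,
    Finset.sum_range_sub (fun m => F (pre σ m)) n, pre_top σ le_rfl, pre_zero, hF0, sub_zero]

lemma pos_lin (a b : ℝ) (h : ∀ t : ℝ, 0 < t → t ≤ 1 → 0 ≤ t * a + t ^ 2 * b) : 0 ≤ a := by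
  by_contra ha
  push_neg at ha
  set t := min 1 (-a / (2 * (|b| + 1))) with ht
  have hb1 : (0 : ℝ) < |b| + 1 := by positivity
  have htpos : 0 < t := lt_min one_pos (div_pos (by linarith) (by positivity))
  have ht1 : t ≤ 1 := min_le_left _ _
  have ht2 : t ≤ -a / (2 * (|b| + 1)) := min_le_right _ _
  have h2 : t * (2 * (|b| + 1)) ≤ -a := by
    rw [← le_div_iff₀ (by positivity)]
    exact ht2
  have hbb : b ≤ |b| := le_abs_self b
  have hmain := h t htpos ht1
  nlinarith [mul_le_mul_of_nonneg_left h2 htpos.le, mul_pos htpos htpos,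
    mul_le_mul_of_nonneg_left hbb (mul_pos htpos htpos).le]

lemma eq_zero_of_quad (a b : ℝ) (h : ∀ t : ℝ, |t| ≤ 1 → 0 ≤ t * a + t ^ 2 * b) : a = 0 := by
  have h1 : 0 ≤ a := by
    apply pos_lin a b
    intro t ht0 ht1
    exact h t (by rw [abs_le]; constructor <;> linarith)
  have h2 : 0 ≤ -a := by
    apply pos_lin (-a) b
    intro t ht0 ht1
    have := h (-t) (by rw [abs_le]; constructor <;> linarith)
    ring_nf at this ⊢
    linarith
  linarith

variable {F : Finset (Fin n) → ℝ} {f : (Fin n → ℝ) → ℝ}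

lemma f_ge_inner (hF0 : F ∅ = 0) (hF : Submodular F) (hf : IsLovasz F f)
    (σ0 : Equiv.Perm (Fin n)) (z : Fin n → ℝ) :
    ∑ i, z i * greedy F σ0 i ≤ f z := by
  obtain ⟨σz, hσz⟩ := sortable z
  rw [hf z σz hσz]
  exact inner_le_lovasz F hF0 hσz (greedy_mem_base F hF0 hF σ0)

lemma f_combo (hF0 : F ∅ = 0) (hF : Submodular F) (hf : IsLovasz F f)
    (a b : ℝ) (ha : 0 ≤ a) (hb : 0 ≤ b) (z w : Fin n → ℝ) :
    f (fun i => a * z i + b * w i) ≤ a * f z + b * f w := by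
  obtain ⟨σ0, hσ0⟩ := sortable (fun i => a * z i + b * w i)
  rw [hf _ σ0 hσ0, lovasz_eq_inner]
  have hsplit : ∑ i, (a * z i + b * w i) * greedy F σ0 i
      = a * ∑ i, z i * greedy F σ0 i + b * ∑ i, w i * greedy F σ0 i := by
    rw [Finset.mul_sum, Finset.mul_sum, ← Finset.sum_add_distrib]
    apply Finset.sum_congr rfl
    intro i _
    ring
  rw [hsplit]
  exact add_le_add (mul_le_mul_of_nonneg_left (f_ge_inner hF0 hF hf σ0 z) ha)
    (mul_le_mul_of_nonneg_left (f_ge_inner hF0 hF hf σ0 w) hb)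

lemma f_smul (hf : IsLovasz F f) {t : ℝ} (ht : 0 ≤ t) (z : Fin n → ℝ) :
    f (fun i => t * z i) = t * f z := by
  obtain ⟨σz, hσz⟩ := sortable z
  rw [hf z σz hσz, hf _ σz (sortsDesc_smul hσz ht), lovasz_smul]

lemma f_ind (hF0 : F ∅ = 0) (hF : Submodular F) (hf : IsLovasz F f) (T : Finset (Fin n)) :
    f (fun i => if i ∈ T then (1 : ℝ) else 0) = F T := by
  obtain ⟨σ0, hσ0⟩ := sortable (fun i => if i ∈ T then (1 : ℝ) else 0)
  rw [hf _ σ0 hσ0, lovasz_eq_inner]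
  have hlev := levelset_eq hσ0 (fun v => (1 : ℝ) ≤ v) (fun v w hv hvw => le_trans hv hvw)
  have hT : univ.filter (fun i => (1 : ℝ) ≤ (if i ∈ T then (1 : ℝ) else 0)) = T := by
    ext i
    by_cases h : i ∈ T <;> simp [h]
  rw [hT] at hlev
  have hcard : T.card ≤ n := le_trans (card_le_univ T) (le_of_eq (by simp))
  have hsum : ∑ i, (if i ∈ T then (1 : ℝ) else 0) * greedy F σ0 i
      = ∑ i ∈ T, greedy F σ0 i := by
    simp [ite_mul, Finset.sum_ite_mem]
  rw [hsum, hlev, sum_greedy_pre F hF0 σ0 hcard, ← hlev]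

end S9
/-- thresholding the proximal solution solves all parametric
problems: if `x*` minimizes `f(x) + ½‖x‖²`, then for every `μ ∈ ℝ` the level
sets `{i : x*_i ≥ μ}` and `{i : x*_i > μ}` minimize `S ↦ F(S) + μ|S|`, and every
minimizer `T` of this function satisfies `{x* > μ} ⊆ T ⊆ {x* ≥ μ}`. -/
theorem statement9 {n : ℕ} (F : Finset (Fin n) → ℝ) (hF0 : F ∅ = 0) (hF : Submodular F)
    (f : (Fin n → ℝ) → ℝ) (hf : IsLovasz F f)
    (xstar : Fin n → ℝ)
    (hxstar : ∀ x : Fin n → ℝ,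
      f xstar + (1/2) * ∑ i, (xstar i)^2 ≤ f x + (1/2) * ∑ i, (x i)^2) :
    ∀ μ : ℝ,
      (∀ T : Finset (Fin n),
        F (Finset.univ.filter (fun i => μ ≤ xstar i))
            + μ * (Finset.univ.filter (fun i => μ ≤ xstar i)).card
          ≤ F T + μ * T.card) ∧
      (∀ T : Finset (Fin n),
        F (Finset.univ.filter (fun i => μ < xstar i))
            + μ * (Finset.univ.filter (fun i => μ < xstar i)).card
          ≤ F T + μ * T.card) ∧
      (∀ T : Finset (Fin n),
        (∀ S : Finset (Fin n), F T + μ * T.card ≤ F S + μ * S.card) →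
        Finset.univ.filter (fun i => μ < xstar i) ⊆ T ∧
          T ⊆ Finset.univ.filter (fun i => μ ≤ xstar i)) := by
  classical
  obtain ⟨σs, hσs⟩ := S9.sortable xstar
  have hq : (0 : ℝ) ≤ ∑ i, (xstar i)^2 := Finset.sum_nonneg (fun i _ => sq_nonneg _)
  -- Step 1 : f xstar = - ∑ xstar²
  have hcq : f xstar + ∑ i, (xstar i)^2 = 0 := by
    apply S9.eq_zero_of_quad _ ((∑ i, (xstar i)^2) / 2)
    intro t ht
    have h1t : (0 : ℝ) ≤ 1 + t := by rw [abs_le] at ht; linarith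
    have hfs : f (fun i => (1 + t) * xstar i) = (1 + t) * f xstar := S9.f_smul hf h1t xstar
    have hx := hxstar (fun i => (1 + t) * xstar i)
    rw [hfs] at hx
    have hsum : ∑ i, ((1 + t) * xstar i)^2 = (1 + t)^2 * ∑ i, (xstar i)^2 := by
      rw [Finset.mul_sum]
      apply Finset.sum_congr rfl
      intro i _
      ring
    rw [hsum] at hx
    nlinarith [hx]
  -- Step 2 : subgradient inequality
  have hsubg : ∀ z : Fin n → ℝ, -(∑ i, xstar i * z i) ≤ f z := by
    intro z
    have key : ∀ t : ℝ, 0 < t → t ≤ 1 →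
        0 ≤ t * (f z + ∑ i, xstar i * z i) + t^2 * ((∑ i, (z i - xstar i)^2) / 2) := by
      intro t ht0 ht1
      have hcombo := S9.f_combo hF0 hF hf (1 - t) t (by linarith) ht0.le xstar z
      have hx := hxstar (fun i => (1 - t) * xstar i + t * z i)
      have hexp : ∑ i, ((1 - t) * xstar i + t * z i)^2
          = (∑ i, (xstar i)^2) + t * (2 * (∑ i, xstar i * z i) - 2 * ∑ i, (xstar i)^2)
            + t^2 * ∑ i, (z i - xstar i)^2 := by
        have e1 : ∀ i : Fin n, ((1 - t) * xstar i + t * z i)^2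
            = (xstar i)^2 + t * (2 * (xstar i * z i) - 2 * (xstar i)^2)
              + t^2 * ((z i - xstar i)^2) := fun i => by ring
        rw [Finset.sum_congr rfl (fun i _ => e1 i), Finset.sum_add_distrib,
          Finset.sum_add_distrib, ← Finset.mul_sum, ← Finset.mul_sum,
          Finset.sum_sub_distrib, ← Finset.mul_sum, ← Finset.mul_sum]
      rw [hexp] at hx
      nlinarith [hx, hcombo, hcq]
    have := S9.pos_lin _ _ key
    linarith
  -- consequence : F dominates the linear function -∑ xstar
  have hFT : ∀ T : Finset (Fin n), -(∑ i ∈ T, xstar i) ≤ F T := by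
    intro T
    have h := hsubg (fun i => if i ∈ T then (1 : ℝ) else 0)
    rw [S9.f_ind hF0 hF hf T] at h
    have e : ∑ i, xstar i * (if i ∈ T then (1 : ℝ) else 0) = ∑ i ∈ T, xstar i := by
      simp [mul_ite, Finset.sum_ite_mem]
    rwa [e] at h
  -- tightness on the ground set
  have hFuniv : F Finset.univ = -(∑ i, xstar i) := by
    have h1 := hFT Finset.univ
    have h2 := hsubg (fun _ => (-1 : ℝ))
    have h3 : f (fun _ => (-1 : ℝ)) = -(F Finset.univ) := by
      rw [hf _ (Equiv.refl _) (S9.sortsDesc_const (-1) _), S9.lovasz_const F hF0 (-1) _]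
      ring
    rw [h3] at h2
    have h4 : ∑ i, xstar i * (-1 : ℝ) = -∑ i, xstar i := by
      simp
    rw [h4] at h2
    have h5 : ∑ i ∈ Finset.univ, xstar i = ∑ i, xstar i := rfl
    rw [h5] at h1
    linarith
  -- tightness along the chain of prefixes of σs
  have hyV : ∑ i, (-(xstar i)) = F Finset.univ := by
    rw [hFuniv]
    simp
  have hid := S9.main_identity F hF0 xstar σs (fun i => -(xstar i)) hyV
  have hLV : lovaszVal F xstar σs = f xstar := (hf xstar σs hσs).symm
  have hinner : ∑ i, xstar i * (-(xstar i)) = -(∑ i, (xstar i)^2) := by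
    rw [← Finset.sum_neg_distrib]
    apply Finset.sum_congr rfl
    intro i _
    ring
  rw [hLV, hinner] at hid
  have hEneg : ∀ m : ℕ, ∑ i ∈ S9.pre σs m, (-(xstar i)) = -∑ i ∈ S9.pre σs m, xstar i := by
    intro m
    simp
  have hterm_nonneg : ∀ k ∈ Finset.range n,
      0 ≤ (S9.Xv xstar σs k - S9.Xv xstar σs (k + 1))
        * (F (S9.pre σs (k + 1)) - ∑ i ∈ S9.pre σs (k + 1), (-(xstar i))) := by
    intro k hk
    rw [Finset.mem_range] at hk
    by_cases hk1 : k + 1 < n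
    · apply mul_nonneg
      · have := hσs ⟨k, hk⟩ ⟨k + 1, hk1⟩ (by simp [Fin.le_def])
        rw [S9.Xv_of_lt xstar σs hk, S9.Xv_of_lt xstar σs hk1]
        linarith
      · rw [hEneg (k + 1)]
        have := hFT (S9.pre σs (k + 1))
        linarith
    · have hkn : k + 1 = n := by omega
      rw [hkn, S9.pre_top σs le_rfl, hyV, sub_self, mul_zero]
  have hsum0 : ∑ k ∈ Finset.range n,
      (S9.Xv xstar σs k - S9.Xv xstar σs (k + 1))
        * (F (S9.pre σs (k + 1)) - ∑ i ∈ S9.pre σs (k + 1), (-(xstar i))) = 0 := by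
    rw [← hid]
    linarith
  have hzero := (Finset.sum_eq_zero_iff_of_nonneg hterm_nonneg).mp hsum0
  have htight : ∀ m : ℕ, 0 < m → m < n →
      S9.Xv xstar σs (m - 1) ≠ S9.Xv xstar σs m →
      F (S9.pre σs m) = -(∑ i ∈ S9.pre σs m, xstar i) := by
    intro m hm0 hmn hne
    have hk := hzero (m - 1) (Finset.mem_range.mpr (by omega))
    have hm1 : m - 1 + 1 = m := by omega
    rw [hm1] at hk
    rcases mul_eq_zero.mp hk with h | h
    · exact absurd (by linarith : S9.Xv xstar σs (m - 1) = S9.Xv xstar σs m) hne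
    · rw [hEneg m] at h
      linarith
  -- tightness on super-level sets
  have htightp : ∀ (p : ℝ → Prop) (inst : DecidablePred p),
      (∀ v w : ℝ, p v → v ≤ w → p w) →
      F (Finset.univ.filter (fun i => p (xstar i)))
        = -(∑ i ∈ Finset.univ.filter (fun i => p (xstar i)), xstar i) := by
    intro p inst hp
    have hAeq := S9.levelset_eq hσs p hp
    set A := Finset.univ.filter (fun i => p (xstar i)) with hA'
    have hmn : A.card ≤ n := le_trans (Finset.card_le_univ A) (le_of_eq (by simp))
    rcases Nat.eq_zero_or_pos A.card with hm0 | hm0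
    · have hAe : A = ∅ := Finset.card_eq_zero.mp hm0
      rw [hAe, hF0]
      simp
    rcases eq_or_lt_of_le hmn with hme | hml
    · have hAu : A = Finset.univ := Finset.eq_univ_of_card A (by rw [hme]; simp)
      rw [hAu]
      exact hFuniv
    · have hmemA : ∀ j : Fin n, σs j ∈ A ↔ (j : ℕ) < A.card := by
        intro j
        have h := S9.mem_pre (σ := σs) (m := A.card) (j := j)
        rw [← hAeq] at h
        exact h
      have hne : S9.Xv xstar σs (A.card - 1) ≠ S9.Xv xstar σs A.card := by
        have hmem1 : σs ⟨A.card - 1, by omega⟩ ∈ A :=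
          (hmemA _).mpr (Nat.sub_lt hm0 one_pos)
        have hmem2 : σs ⟨A.card, hml⟩ ∉ A := by
          intro hmm
          have := (hmemA _).mp hmm
          simp at this
        simp only [hA', Finset.mem_filter] at hmem1
        simp only [hA', Finset.mem_filter] at hmem2
        intro heq
        rw [S9.Xv_of_lt _ _ (show A.card - 1 < n by omega), S9.Xv_of_lt _ _ hml] at heq
        exact hmem2 ⟨Finset.mem_univ _, heq ▸ hmem1.2⟩
      have hres := htight A.card hm0 hml hne
      rw [← hAeq] at hres
      exact hres
  intro μ
  have hge : F (Finset.univ.filter (fun i => μ ≤ xstar i))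
      = -(∑ i ∈ Finset.univ.filter (fun i => μ ≤ xstar i), xstar i) :=
    htightp (fun v => μ ≤ v) inferInstance (fun v w hv hvw => le_trans hv hvw)
  have hgt : F (Finset.univ.filter (fun i => μ < xstar i))
      = -(∑ i ∈ Finset.univ.filter (fun i => μ < xstar i), xstar i) :=
    htightp (fun v => μ < v) inferInstance (fun v w hv hvw => lt_of_lt_of_le hv hvw)
  set Age := Finset.univ.filter (fun i => μ ≤ xstar i) with hAge
  set Agt := Finset.univ.filter (fun i => μ < xstar i) with hAgt
  have hW : ∀ S : Finset (Fin n), ∑ i ∈ S, (μ - xstar i) = μ * S.card - ∑ i ∈ S, xstar i := by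
    intro S
    rw [Finset.sum_sub_distrib, Finset.sum_const, nsmul_eq_mul]
    ring
  have hWle : ∀ T : Finset (Fin n), ∑ i ∈ T, (μ - xstar i) ≤ F T + μ * T.card := by
    intro T
    have h1 := hFT T
    have h2 := hW T
    linarith
  have hWeq_ge : F Age + μ * Age.card = ∑ i ∈ Age, (μ - xstar i) := by
    rw [hW Age, hge]
    ring
  have hWeq_gt : F Agt + μ * Agt.card = ∑ i ∈ Agt, (μ - xstar i) := by
    rw [hW Agt, hgt]
    ring
  have hmemAge : ∀ i : Fin n, i ∈ Age ↔ μ ≤ xstar i := by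
    intro i
    rw [hAge, Finset.mem_filter]
    simp
  have hmemAgt : ∀ i : Fin n, i ∈ Agt ↔ μ < xstar i := by
    intro i
    rw [hAgt, Finset.mem_filter]
    simp
  have hd_ge_pos : ∀ T : Finset (Fin n), 0 ≤ ∑ i ∈ T \ Age, (μ - xstar i) := by
    intro T
    apply Finset.sum_nonneg
    intro i hi
    have h2 := (Finset.mem_sdiff.mp hi).2
    rw [hmemAge i] at h2
    push_neg at h2
    linarith
  have hd_ge_neg : ∀ T : Finset (Fin n), ∑ i ∈ Age \ T, (μ - xstar i) ≤ 0 := by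
    intro T
    apply Finset.sum_nonpos
    intro i hi
    have h2 := (Finset.mem_sdiff.mp hi).1
    rw [hmemAge i] at h2
    linarith
  have hd_gt_pos : ∀ T : Finset (Fin n), 0 ≤ ∑ i ∈ T \ Agt, (μ - xstar i) := by
    intro T
    apply Finset.sum_nonneg
    intro i hi
    have h2 := (Finset.mem_sdiff.mp hi).2
    rw [hmemAgt i] at h2
    push_neg at h2
    linarith
  have hd_gt_neg : ∀ T : Finset (Fin n), ∑ i ∈ Agt \ T, (μ - xstar i) ≤ 0 := by
    intro T
    apply Finset.sum_nonpos
    intro i hi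
    have h2 := (Finset.mem_sdiff.mp hi).1
    rw [hmemAgt i] at h2
    linarith
  have hWmono_ge : ∀ T : Finset (Fin n),
      ∑ i ∈ Age, (μ - xstar i) ≤ ∑ i ∈ T, (μ - xstar i) := by
    intro T
    have e1 := Finset.sum_inter_add_sum_sdiff T Age (fun i => μ - xstar i)
    have e2 := Finset.sum_inter_add_sum_sdiff Age T (fun i => μ - xstar i)
    rw [Finset.inter_comm] at e2
    have h3 := hd_ge_pos T
    have h4 := hd_ge_neg T
    linarith
  have hWmono_gt : ∀ T : Finset (Fin n),
      ∑ i ∈ Agt, (μ - xstar i) ≤ ∑ i ∈ T, (μ - xstar i) := by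
    intro T
    have e1 := Finset.sum_inter_add_sum_sdiff T Agt (fun i => μ - xstar i)
    have e2 := Finset.sum_inter_add_sum_sdiff Agt T (fun i => μ - xstar i)
    rw [Finset.inter_comm] at e2
    have h3 := hd_gt_pos T
    have h4 := hd_gt_neg T
    linarith
  refine ⟨?_, ?_, ?_⟩
  · intro T
    have := hWmono_ge T
    have := hWle T
    linarith [hWeq_ge]
  · intro T
    have := hWmono_gt T
    have := hWle T
    linarith [hWeq_gt]
  · intro T hT
    constructor
    · by_contra hns
      have hne : (Agt \ T).Nonempty := Finset.sdiff_nonempty.mpr hns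
      have h5 : ∑ i ∈ Agt \ T, (μ - xstar i) < 0 := by
        apply Finset.sum_neg ?_ hne
        intro i hi
        have h2 := (Finset.mem_sdiff.mp hi).1
        rw [hmemAgt i] at h2
        linarith
      have hmin := hT Agt
      have e1 := Finset.sum_inter_add_sum_sdiff T Agt (fun i => μ - xstar i)
      have e2 := Finset.sum_inter_add_sum_sdiff Agt T (fun i => μ - xstar i)
      rw [Finset.inter_comm] at e2
      have h3 := hd_gt_pos T
      have hWT := hWle T
      linarith [hWeq_gt]
    · by_contra hns
      have hne : (T \ Age).Nonempty := Finset.sdiff_nonempty.mpr hns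
      have h5 : 0 < ∑ i ∈ T \ Age, (μ - xstar i) := by
        apply Finset.sum_pos ?_ hne
        intro i hi
        have h2 := (Finset.mem_sdiff.mp hi).2
        rw [hmemAge i] at h2
        push_neg at h2
        linarith
      have hmin := hT Age
      have e1 := Finset.sum_inter_add_sum_sdiff T Age (fun i => μ - xstar i)
      have e2 := Finset.sum_inter_add_sum_sdiff Age T (fun i => μ - xstar i)
      rw [Finset.inter_comm] at e2
      have h4 := hd_ge_neg T
      have hWT := hWle T
      linarith [hWeq_ge]
end

section
/- Let F be a submodular function on V with F(∅) = 0, and for each i ∈ V let h_i : ℝ → ℝ be strictly convex and continuously differentiable with sup_{λ∈ℝ} h_i'(λ) = +∞ and inf_{λ∈ℝ} h_i'(λ) = −∞. Let α < β, let S^α be any minimizer of S ↦ F(S) + Σ_{i∈S} h_i'(α), and let S^β be any minimizer of S ↦ F(S) + Σ_{i∈S} h_i'(β). Then S^β ⊆ S^α. -/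
open Finset
open Finset

/-- Proposition: monotonicity of optimizing sets: with `h_i`
strictly convex, continuously differentiable and with surjective-at-infinity
derivatives, if `α < β`, `S^α` minimizes `S ↦ F(S) + Σ_{i∈S} h_i'(α)` and `S^β`
minimizes `S ↦ F(S) + Σ_{i∈S} h_i'(β)`, then `S^β ⊆ S^α`. -/
theorem statement10 {n : ℕ} (F : Finset (Fin n) → ℝ) (hF0 : F ∅ = 0) (hF : Submodular F)
    (h h' : Fin n → ℝ → ℝ)
    (hconv : ∀ i, StrictConvexOn ℝ (Set.univ : Set ℝ) (h i))
    (hderiv : ∀ i t, HasDerivAt (h i) (h' i t) t)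
    (hcont : ∀ i, Continuous (h' i))
    (hsupTop : ∀ i M, ∃ t, M ≤ h' i t)
    (hinfBot : ∀ i M, ∃ t, h' i t ≤ M)
    (α β : ℝ) (hαβ : α < β) (Sα Sβ : Finset (Fin n))
    (hSα : ∀ T : Finset (Fin n), F Sα + ∑ i ∈ Sα, h' i α ≤ F T + ∑ i ∈ T, h' i α)
    (hSβ : ∀ T : Finset (Fin n), F Sβ + ∑ i ∈ Sβ, h' i β ≤ F T + ∑ i ∈ T, h' i β) :
    Sβ ⊆ Sα := by
  have hlt : ∀ i, h' i α < h' i β := by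
    intro i
    have hmono := (hconv i).strictMonoOn_deriv
      (fun x _ => (hderiv i x).differentiableAt)
    have hd : ∀ t, deriv (h i) t = h' i t := fun t => (hderiv i t).deriv
    have := hmono (Set.mem_univ α) (Set.mem_univ β) hαβ
    rwa [hd, hd] at this
  -- key inequalities
  have h1 := hSα (Sα ∪ Sβ)
  have h2 := hSβ (Sα ∩ Sβ)
  have hsub := hF Sα Sβ
  have hdisj1 : Disjoint Sα (Sβ \ Sα) := Finset.disjoint_sdiff
  have hdisj2 : Disjoint (Sα ∩ Sβ) (Sβ \ Sα) := by
    exact Finset.disjoint_sdiff.mono_left (Finset.inter_subset_left)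
  have hu : Sα ∪ Sβ = Sα ∪ (Sβ \ Sα) := by
    rw [Finset.union_sdiff_self_eq_union]
  have hb : Sβ = (Sα ∩ Sβ) ∪ (Sβ \ Sα) := by
    ext i; simp [Finset.mem_union, Finset.mem_inter, Finset.mem_sdiff]; tauto
  have e1 : ∑ i ∈ Sα ∪ Sβ, h' i α = ∑ i ∈ Sα, h' i α + ∑ i ∈ Sβ \ Sα, h' i α := by
    rw [hu, Finset.sum_union hdisj1]
  have e2 : ∑ i ∈ Sβ, h' i β = ∑ i ∈ Sα ∩ Sβ, h' i β + ∑ i ∈ Sβ \ Sα, h' i β := by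
    conv_lhs => rw [hb]
    rw [Finset.sum_union hdisj2]
  have key : ∑ i ∈ Sβ \ Sα, h' i β ≤ ∑ i ∈ Sβ \ Sα, h' i α := by linarith
  by_contra hns
  obtain ⟨i, hiβ, hiα⟩ := Finset.not_subset.mp hns
  have hne : (Sβ \ Sα).Nonempty := ⟨i, Finset.mem_sdiff.mpr ⟨hiβ, hiα⟩⟩
  have : ∑ i ∈ Sβ \ Sα, h' i α < ∑ i ∈ Sβ \ Sα, h' i β :=
    Finset.sum_lt_sum_of_nonempty hne (fun j _ => hlt j)
  linarith
end

section
/- Let F be a submodular function on V with F(∅) = 0 and f its Lovász extension, and for each i ∈ V let h_i : ℝ → ℝ be strictly convex and continuously differentiable with sup_{λ∈ℝ} h_i'(λ) = +∞ and inf_{λ∈ℝ} h_i'(λ) = −∞. Then f(x) + Σ_{i∈V} h_i(x_i) has a unique minimizer x* over ℝ^V, and for every j ∈ V, x*_j = sup { λ ∈ ℝ : there exists a minimizer S of T ↦ F(T) + Σ_{i∈T} h_i'(λ) with j ∈ S }, and this supremum is attained. -/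
open Finset
open Finset

open Finset

namespace Stmt11Aux

variable {n : ℕ} (F : Finset (Fin n) → ℝ) (h' : Fin n → ℝ → ℝ)

/-- The parametric objective. -/
def gVal (lam : ℝ) (T : Finset (Fin n)) : ℝ := F T + ∑ i ∈ T, h' i lam

/-- `S` minimizes the parametric objective at level `lam`. -/
def Mini (lam : ℝ) (S : Finset (Fin n)) : Prop := ∀ T, gVal F h' lam S ≤ gVal F h' lam T

variable {F h'}

lemma exists_mini (lam : ℝ) : ∃ S, Mini F h' lam S := by
  obtain ⟨S, -, hS⟩ := Finset.exists_min_image Finset.univ (gVal F h' lam)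
    ⟨∅, Finset.mem_univ _⟩
  exact ⟨S, fun T => hS T (Finset.mem_univ T)⟩

lemma gVal_union_inter (lam : ℝ) (S T : Finset (Fin n)) (hF : Submodular F) :
    gVal F h' lam (S ∪ T) + gVal F h' lam (S ∩ T) ≤ gVal F h' lam S + gVal F h' lam T := by
  have h1 := hF S T
  have h2 : (∑ i ∈ S ∪ T, h' i lam) + ∑ i ∈ S ∩ T, h' i lam
      = (∑ i ∈ S, h' i lam) + ∑ i ∈ T, h' i lam := Finset.sum_union_inter
  simp only [gVal]; linarith

lemma Mini.union (hF : Submodular F) {lam : ℝ} {S T : Finset (Fin n)}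
    (hS : Mini F h' lam S) (hT : Mini F h' lam T) : Mini F h' lam (S ∪ T) := by
  intro X
  have h1 := gVal_union_inter (h' := h') lam S T hF
  have h2 := hS (S ∩ T)
  have h3 := hT X
  linarith

end Stmt11Aux

namespace Stmt11Aux

variable {n : ℕ} {F : Finset (Fin n) → ℝ} {h' : Fin n → ℝ → ℝ}

/-- Cross-parameter monotonicity: minimizers shrink as `lam` increases. -/
lemma mini_antitone (hF : Submodular F) (hmono : ∀ i, StrictMono (h' i))
    {lam mu : ℝ} (hlt : lam < mu) {S T : Finset (Fin n)}
    (hS : Mini F h' lam S) (hT : Mini F h' mu T) : T ⊆ S := by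
  rw [← Finset.sdiff_eq_empty_iff_subset]
  by_contra hne
  obtain ⟨i0, hi0⟩ := Finset.nonempty_iff_ne_empty.2 hne
  have h1 := hS (S ∪ T)
  have h2 := hT (S ∩ T)
  have hsub := hF S T
  have e1 : (∑ i ∈ S ∪ T, h' i lam) = (∑ i ∈ S, h' i lam) + ∑ i ∈ T \ S, h' i lam := by
    rw [← Finset.sum_union Finset.disjoint_sdiff, Finset.union_sdiff_self_eq_union]
  have e2 : (∑ i ∈ S ∩ T, h' i mu) = (∑ i ∈ T, h' i mu) - ∑ i ∈ T \ S, h' i mu := by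
    have : (∑ i ∈ T \ S, h' i mu) + ∑ i ∈ T ∩ S, h' i mu = ∑ i ∈ T, h' i mu := by
      rw [← Finset.sum_union (Finset.disjoint_sdiff_inter T S), Finset.sdiff_union_inter]
    rw [Finset.inter_comm]; linarith
  have hneg : (∑ i ∈ T \ S, h' i lam) - ∑ i ∈ T \ S, h' i mu < 0 := by
    have : ∀ i ∈ T \ S, h' i lam - h' i mu < 0 := fun i _ => sub_neg.2 (hmono i hlt)
    have hlt' := Finset.sum_lt_sum_of_nonempty ⟨i0, hi0⟩ this
    rw [Finset.sum_sub_distrib] at hlt'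
    simpa using hlt'
  simp only [gVal] at h1 h2
  linarith

/-- A uniform bound on `h'` from above. -/
lemma exists_uniform_ge (hmono : ∀ i, StrictMono (h' i))
    (hsupTop : ∀ i M, ∃ t, M ≤ h' i t) (M : ℝ) :
    ∃ t0 : ℝ, ∀ i : Fin n, ∀ lam, t0 ≤ lam → M ≤ h' i lam := by
  choose t ht using fun i => hsupTop i M
  obtain ⟨t0, ht0⟩ := Finite.exists_le t
  exact ⟨t0, fun i lam hlam => (ht i).trans ((hmono i).monotone ((ht0 i).trans hlam))⟩

/-- A uniform bound on `h'` from below. -/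
lemma exists_uniform_le (hmono : ∀ i, StrictMono (h' i))
    (hinfBot : ∀ i M, ∃ t, h' i t ≤ M) (M : ℝ) :
    ∃ t0 : ℝ, ∀ i : Fin n, ∀ lam, lam ≤ t0 → h' i lam ≤ M := by
  choose t ht using fun i => hinfBot i M
  obtain ⟨t0, ht0⟩ := Finite.exists_le (fun i => -(t i))
  exact ⟨-t0, fun i lam hlam => le_trans ((hmono i).monotone (by linarith [ht0 i])) (ht i)⟩

end Stmt11Aux

namespace Stmt11Aux

variable {n : ℕ} {F : Finset (Fin n) → ℝ} {h' : Fin n → ℝ → ℝ}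

/-- The set of levels at which `j` belongs to some minimizer. -/
def ASet (F : Finset (Fin n) → ℝ) (h' : Fin n → ℝ → ℝ) (j : Fin n) : Set ℝ :=
  {lam : ℝ | ∃ S, Mini F h' lam S ∧ j ∈ S}

/-- A bound on `|F|`. -/
noncomputable def CB (F : Finset (Fin n) → ℝ) : ℝ :=
  2 * (Finset.univ.sup' ⟨∅, Finset.mem_univ _⟩ (fun S => |F S|)) + 1

lemma abs_F_le (S : Finset (Fin n)) : 2 * |F S| + 1 ≤ CB F := by
  have := Finset.le_sup' (fun S => |F S|) (Finset.mem_univ S)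
  simp only [CB]; linarith

lemma CB_pos : (0:ℝ) < CB F := by
  have h := abs_F_le (F := F) ∅
  have := abs_nonneg (F ∅)
  linarith

lemma ASet_isClosed (hcont : ∀ i, Continuous (h' i)) (j : Fin n) :
    IsClosed (ASet F h' j) := by
  have : ASet F h' j =
      ⋃ S ∈ {S : Finset (Fin n) | j ∈ S}, {lam : ℝ | Mini F h' lam S} := by
    ext lam
    simp only [ASet, Set.mem_setOf_eq, Set.mem_iUnion, Set.mem_setOf_eq]
    exact ⟨fun ⟨S, h1, h2⟩ => ⟨S, h2, h1⟩, fun ⟨S, h1, h2⟩ => ⟨S, h2, h1⟩⟩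
  rw [this]
  refine Set.Finite.isClosed_biUnion (Set.toFinite _) (fun S _ => ?_)
  have : {lam : ℝ | Mini F h' lam S} = ⋂ T, {lam : ℝ | gVal F h' lam S ≤ gVal F h' lam T} := by
    ext lam; simp [Mini, Set.mem_iInter]
  rw [this]
  refine isClosed_iInter (fun T => isClosed_le ?_ ?_) <;>
    exact (continuous_const.add (continuous_finset_sum _ (fun i _ => hcont i)))

lemma ASet_bddAbove (hmono : ∀ i, StrictMono (h' i))
    (hsupTop : ∀ i M, ∃ t, M ≤ h' i t) (hF0 : F ∅ = 0) (j : Fin n) :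
    BddAbove (ASet F h' j) := by
  obtain ⟨t0, ht0⟩ := exists_uniform_ge hmono hsupTop (CB F)
  refine ⟨t0, fun lam hlam => ?_⟩
  by_contra hgt
  push_neg at hgt
  obtain ⟨S, hS, hjS⟩ := hlam
  have h1 : gVal F h' lam S ≤ gVal F h' lam ∅ := hS ∅
  have h2 : gVal F h' lam ∅ = 0 := by simp [gVal, hF0]
  have h3 : CB F ≤ ∑ i ∈ S, h' i lam := by
    calc CB F = ∑ _i ∈ ({j} : Finset (Fin n)), CB F := by simp
    _ ≤ ∑ i ∈ S, CB F := by
        refine Finset.sum_le_sum_of_subset_of_nonneg ?_ (fun _ _ _ => CB_pos.le)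
        simpa using hjS
    _ ≤ ∑ i ∈ S, h' i lam := Finset.sum_le_sum (fun i _ => ht0 i lam hgt.le)
  have h4 : -F S ≤ CB F - 1 := by
    have := abs_F_le (F := F) S
    have := neg_abs_le (F S)
    have := abs_nonneg (F S)
    linarith
  have : 1 ≤ gVal F h' lam S := by simp only [gVal]; linarith
  linarith

lemma exists_mini_univ (hmono : ∀ i, StrictMono (h' i))
    (hinfBot : ∀ i M, ∃ t, h' i t ≤ M) :
    ∃ t1 : ℝ, ∀ lam ≤ t1, Mini F h' lam (Finset.univ : Finset (Fin n)) := by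
  obtain ⟨t1, ht1⟩ := exists_uniform_le hmono hinfBot (-CB F)
  refine ⟨t1, fun lam hlam T => ?_⟩
  simp only [gVal]
  have e1 : (∑ i ∈ Finset.univ, h' i lam)
      = (∑ i ∈ T, h' i lam) + ∑ i ∈ Finset.univ \ T, h' i lam := by
    rw [← Finset.sum_union (Finset.sdiff_disjoint).symm,
      Finset.union_sdiff_of_subset (Finset.subset_univ T)]
  rcases eq_or_ne T Finset.univ with rfl | hne
  · simp
  · have hnonempty : (Finset.univ \ T).Nonempty := by
      rw [Finset.sdiff_nonempty]
      exact fun hsub => hne (Finset.eq_univ_iff_forall.2 fun i => hsub (Finset.mem_univ i))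
    have h3 : (∑ i ∈ Finset.univ \ T, h' i lam) ≤ -CB F := by
      calc (∑ i ∈ Finset.univ \ T, h' i lam) ≤ ∑ _i ∈ Finset.univ \ T, (-CB F) :=
            Finset.sum_le_sum (fun i _ => ht1 i lam hlam)
      _ = (Finset.univ \ T).card * (-CB F) := by rw [Finset.sum_const, nsmul_eq_mul]
      _ ≤ 1 * (-CB F) := by
          apply mul_le_mul_of_nonpos_right _ (by linarith [CB_pos (F := F)])
          exact_mod_cast Nat.one_le_iff_ne_zero.2 (Finset.card_ne_zero.2 hnonempty)
      _ = -CB F := one_mul _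
    have h4 := abs_F_le (F := F) T
    have h5 := abs_F_le (F := F) (Finset.univ : Finset (Fin n))
    have := neg_abs_le (F T)
    have := le_abs_self (F Finset.univ)
    linarith

lemma ASet_nonempty (hmono : ∀ i, StrictMono (h' i))
    (hinfBot : ∀ i M, ∃ t, h' i t ≤ M) (j : Fin n) :
    (ASet F h' j).Nonempty := by
  obtain ⟨t1, ht1⟩ := exists_mini_univ (F := F) hmono hinfBot
  exact ⟨t1, Finset.univ, ht1 t1 le_rfl, Finset.mem_univ j⟩

end Stmt11Aux

namespace Stmt11Aux

variable {n : ℕ} {F : Finset (Fin n) → ℝ} {h' : Fin n → ℝ → ℝ}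

noncomputable def xstar (F : Finset (Fin n) → ℝ) (h' : Fin n → ℝ → ℝ) (j : Fin n) : ℝ :=
  sSup (ASet F h' j)

section Main

variable (hF : Submodular F) (hF0 : F ∅ = 0)
  (hmono : ∀ i, StrictMono (h' i)) (hcont : ∀ i, Continuous (h' i))
  (hsupTop : ∀ i M, ∃ t, M ≤ h' i t) (hinfBot : ∀ i M, ∃ t, h' i t ≤ M)

include hF hF0 hmono hcont hsupTop hinfBot

lemma xstar_isGreatest (j : Fin n) : IsGreatest (ASet F h' j) (xstar F h' j) := by
  have hcl := ASet_isClosed (F := F) hcont j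
  have hne := ASet_nonempty (F := F) hmono hinfBot j
  have hbdd := ASet_bddAbove hmono hsupTop hF0 j
  exact ⟨hcl.csSup_mem hne hbdd, fun lam hlam => le_csSup hbdd hlam⟩

lemma mem_ASet_iff {j : Fin n} {lam : ℝ} : lam ∈ ASet F h' j ↔ lam ≤ xstar F h' j := by
  obtain ⟨hmem, hub⟩ := xstar_isGreatest hF hF0 hmono hcont hsupTop hinfBot j
  refine ⟨fun hl => hub hl, fun hle => ?_⟩
  rcases eq_or_lt_of_le hle with rfl | hlt
  · exact hmem
  · obtain ⟨S, hS⟩ := exists_mini (F := F) (h' := h') lam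
    obtain ⟨T, hT, hjT⟩ := hmem
    exact ⟨S, hS, mini_antitone hF hmono hlt hS hT hjT⟩

/-- The closed level set `{j : lam ≤ xstar j}`. -/
noncomputable def levelSet (F : Finset (Fin n) → ℝ) (h' : Fin n → ℝ → ℝ) (lam : ℝ) : Finset (Fin n) :=
  Finset.univ.filter (fun j => lam ≤ xstar F h' j)

/-- The open level set `{j : lam < xstar j}`. -/
noncomputable def levelSetGt (F : Finset (Fin n) → ℝ) (h' : Fin n → ℝ → ℝ) (lam : ℝ) : Finset (Fin n) :=
  Finset.univ.filter (fun j => lam < xstar F h' j)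

lemma mini_levelSet (lam : ℝ) : Mini F h' lam (levelSet F h' lam) := by
  -- every finset of elements of `ASet`-membership is contained in a minimizer
  have key : ∀ B : Finset (Fin n), (∀ j ∈ B, lam ∈ ASet F h' j) →
      ∃ M, Mini F h' lam M ∧ B ⊆ M := by
    intro B
    induction B using Finset.induction with
    | empty => intro _; obtain ⟨S, hS⟩ := exists_mini (F := F) (h' := h') lam
               exact ⟨S, hS, Finset.empty_subset S⟩
    | insert _ _ hj ih =>
      rename_i j B
      intro hmem
      obtain ⟨M, hM, hBM⟩ := ih (fun i hi => hmem i (Finset.mem_insert_of_mem hi))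
      obtain ⟨S, hS, hjS⟩ := hmem j (Finset.mem_insert_self j B)
      refine ⟨M ∪ S, hM.union hF hS, Finset.insert_subset ?_ (hBM.trans Finset.subset_union_left)⟩
      exact Finset.mem_union_right M hjS
  obtain ⟨M, hM, hsub⟩ := key (levelSet F h' lam) (fun j hj => by
    rw [mem_ASet_iff hF hF0 hmono hcont hsupTop hinfBot]
    exact (Finset.mem_filter.1 hj).2)
  have hsup : M ⊆ levelSet F h' lam := by
    intro j hjM
    refine Finset.mem_filter.2 ⟨Finset.mem_univ j, ?_⟩
    rw [← mem_ASet_iff hF hF0 hmono hcont hsupTop hinfBot]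
    exact ⟨M, hM, hjM⟩
  rwa [Finset.Subset.antisymm hsup hsub] at hM
  
omit hF hF0 hmono hcont hsupTop hinfBot in
lemma subset_levelSetGt {lam mu : ℝ} (hlt : lam < mu) :
    levelSet F h' mu ⊆ levelSetGt F h' lam := fun j hj =>
  Finset.mem_filter.2 ⟨Finset.mem_univ j, hlt.trans_le (Finset.mem_filter.1 hj).2⟩

omit hF hF0 hmono hcont hsupTop hinfBot in
lemma levelSet_eventually_eq (lam : ℝ) :
    ∃ δ > 0, ∀ mu, lam < mu → mu < lam + δ → levelSet F h' mu = levelSetGt F h' lam := by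
  classical
  by_cases hne : (levelSetGt F h' lam).Nonempty
  · set δ := (levelSetGt F h' lam).inf' hne (fun j => xstar F h' j) - lam with hδ
    have hδpos : 0 < δ := by
      rw [hδ, sub_pos, Finset.lt_inf'_iff]
      exact fun j hj => (Finset.mem_filter.1 hj).2
    refine ⟨δ, hδpos, fun mu h1 h2 => Finset.Subset.antisymm (subset_levelSetGt h1) ?_⟩
    intro j hj
    refine Finset.mem_filter.2 ⟨Finset.mem_univ j, ?_⟩
    have : lam + δ ≤ xstar F h' j := by
      have := Finset.inf'_le (fun j => xstar F h' j) hj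
      rw [hδ]; linarith
    linarith
  · refine ⟨1, one_pos, fun mu h1 h2 => ?_⟩
    rw [Finset.not_nonempty_iff_eq_empty] at hne
    rw [hne, Finset.eq_empty_iff_forall_notMem]
    exact fun j hj => (Finset.eq_empty_iff_forall_notMem.1 hne j) (subset_levelSetGt h1 hj)

lemma mini_levelSetGt (lam : ℝ) : Mini F h' lam (levelSetGt F h' lam) := by
  obtain ⟨δ, hδpos, hδ⟩ := levelSet_eventually_eq (F := F) (h' := h') lam
  intro T
  have hev : ∀ mu ∈ Set.Ioo lam (lam + δ),
      gVal F h' mu (levelSetGt F h' lam) - gVal F h' mu T ≤ 0 := by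
    intro mu hmu
    rw [← hδ mu hmu.1 hmu.2]
    have := mini_levelSet hF hF0 hmono hcont hsupTop hinfBot mu T
    linarith
  have hconti : Continuous (fun mu => gVal F h' mu (levelSetGt F h' lam) - gVal F h' mu T) := by
    refine Continuous.sub ?_ ?_ <;>
      exact (continuous_const.add (continuous_finset_sum _ (fun i _ => hcont i)))
  have hlim : Filter.Tendsto (fun mu => gVal F h' mu (levelSetGt F h' lam) - gVal F h' mu T)
      (nhdsWithin lam (Set.Ioi lam)) (nhds (gVal F h' lam (levelSetGt F h' lam) - gVal F h' lam T)) :=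
    (hconti.continuousAt).continuousWithinAt.tendsto
  have : gVal F h' lam (levelSetGt F h' lam) - gVal F h' lam T ≤ 0 := by
    refine le_of_tendsto hlim ?_
    filter_upwards [Ioo_mem_nhdsGT (by linarith : lam < lam + δ)] with mu hmu
    exact hev mu hmu
  linarith

end Main

end Stmt11Aux

namespace Stmt11Aux

variable {n : ℕ} {F : Finset (Fin n) → ℝ} {h' : Fin n → ℝ → ℝ}

noncomputable def yv (F : Finset (Fin n) → ℝ) (h' : Fin n → ℝ → ℝ) (i : Fin n) : ℝ :=
  -(h' i (xstar F h' i))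

section Main2

variable (hF : Submodular F) (hF0 : F ∅ = 0)
  (hmono : ∀ i, StrictMono (h' i)) (hcont : ∀ i, Continuous (h' i))
  (hsupTop : ∀ i M, ∃ t, M ≤ h' i t) (hinfBot : ∀ i M, ∃ t, h' i t ≤ M)

include hF hF0 hmono hcont hsupTop hinfBot

lemma sum_y_levelSet_aux : ∀ c : ℕ, ∀ lam : ℝ, (levelSet F h' lam).card ≤ c →
    ∑ i ∈ levelSet F h' lam, yv F h' i = F (levelSet F h' lam) := by
  intro c
  induction c with
  | zero =>
    intro lam hcard
    have : levelSet F h' lam = ∅ := Finset.card_eq_zero.1 (Nat.le_zero.1 hcard)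
    rw [this, Finset.sum_empty, hF0]
  | succ c ih =>
    intro lam hcard
    rcases Finset.eq_empty_or_nonempty (levelSet F h' lam) with hemp | hne
    · rw [hemp, Finset.sum_empty, hF0]
    · obtain ⟨i0, hi0mem, hi0min⟩ :=
        Finset.exists_min_image (levelSet F h' lam) (xstar F h') hne
      set lam' := xstar F h' i0 with hlam'
      have hlamle : lam ≤ lam' := (Finset.mem_filter.1 hi0mem).2
      have hLL : levelSet F h' lam = levelSet F h' lam' := by
        apply Finset.Subset.antisymm
        · exact fun j hj => Finset.mem_filter.2 ⟨Finset.mem_univ j, hi0min j hj⟩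
        · exact fun j hj => Finset.mem_filter.2
            ⟨Finset.mem_univ j, hlamle.trans (Finset.mem_filter.1 hj).2⟩
      obtain ⟨δ, hδpos, hδ⟩ := levelSet_eventually_eq (F := F) (h' := h') lam'
      have hmu : levelSet F h' (lam' + δ/2) = levelSetGt F h' lam' :=
        hδ (lam' + δ/2) (by linarith) (by linarith)
      have hGtsub : levelSetGt F h' lam' ⊆ levelSet F h' lam' := fun j hj =>
        Finset.mem_filter.2 ⟨Finset.mem_univ j, (Finset.mem_filter.1 hj).2.le⟩
      have hi0Lam' : i0 ∈ levelSet F h' lam' := by rw [← hLL]; exact hi0mem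
      have hi0notGt : i0 ∉ levelSetGt F h' lam' := by
        simp [levelSetGt, hlam'.symm]
      have hcardlt : (levelSetGt F h' lam').card < (levelSet F h' lam').card :=
        Finset.card_lt_card ⟨hGtsub, fun hsub => hi0notGt (hsub hi0Lam')⟩
      have hih : ∑ i ∈ levelSetGt F h' lam', yv F h' i = F (levelSetGt F h' lam') := by
        rw [← hmu]
        apply ih
        rw [hmu]
        rw [← hLL] at hcardlt
        omega
      -- equality of objective values of the two minimizers at lam'
      have heq : gVal F h' lam' (levelSet F h' lam') = gVal F h' lam' (levelSetGt F h' lam') :=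
        le_antisymm
          (mini_levelSet hF hF0 hmono hcont hsupTop hinfBot lam' (levelSetGt F h' lam'))
          (mini_levelSetGt hF hF0 hmono hcont hsupTop hinfBot lam' (levelSet F h' lam'))
      have hDval : ∀ i ∈ levelSet F h' lam' \ levelSetGt F h' lam', xstar F h' i = lam' := by
        intro i hi
        rw [Finset.mem_sdiff] at hi
        have h1 := (Finset.mem_filter.1 hi.1).2
        have h2 : ¬ lam' < xstar F h' i := fun hc => hi.2 (Finset.mem_filter.2 ⟨Finset.mem_univ i, hc⟩)
        exact le_antisymm (not_lt.1 h2) h1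
      have hsplitY : ∑ i ∈ levelSet F h' lam', yv F h' i
          = (∑ i ∈ levelSetGt F h' lam', yv F h' i)
            + ∑ i ∈ levelSet F h' lam' \ levelSetGt F h' lam', yv F h' i := by
        rw [← Finset.sum_union Finset.disjoint_sdiff,
          Finset.union_sdiff_of_subset hGtsub]
      have hsplitH : ∑ i ∈ levelSet F h' lam', h' i lam'
          = (∑ i ∈ levelSetGt F h' lam', h' i lam')
            + ∑ i ∈ levelSet F h' lam' \ levelSetGt F h' lam', h' i lam' := by
        rw [← Finset.sum_union Finset.disjoint_sdiff,
          Finset.union_sdiff_of_subset hGtsub]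
      have hDy : ∑ i ∈ levelSet F h' lam' \ levelSetGt F h' lam', yv F h' i
          = -∑ i ∈ levelSet F h' lam' \ levelSetGt F h' lam', h' i lam' := by
        rw [← Finset.sum_neg_distrib]
        exact Finset.sum_congr rfl (fun i hi => by rw [yv, hDval i hi])
      simp only [gVal] at heq
      rw [hLL, hsplitY, hih, hDy]
      linarith
  
end Main2

end Stmt11Aux

namespace Stmt11Aux

variable {n : ℕ} {F : Finset (Fin n) → ℝ} {h' : Fin n → ℝ → ℝ}

section Main3

variable (hF : Submodular F) (hF0 : F ∅ = 0)
  (hmono : ∀ i, StrictMono (h' i)) (hcont : ∀ i, Continuous (h' i))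
  (hsupTop : ∀ i M, ∃ t, M ≤ h' i t) (hinfBot : ∀ i M, ∃ t, h' i t ≤ M)

include hF hF0 hmono hcont hsupTop hinfBot

lemma sum_y_levelSet (lam : ℝ) :
    ∑ i ∈ levelSet F h' lam, yv F h' i = F (levelSet F h' lam) :=
  sum_y_levelSet_aux hF hF0 hmono hcont hsupTop hinfBot (levelSet F h' lam).card lam le_rfl

lemma sum_y_univ : ∑ i ∈ Finset.univ, yv F h' i = F Finset.univ := by
  rcases Finset.eq_empty_or_nonempty (Finset.univ : Finset (Fin n)) with hemp | hne
  · rw [hemp, Finset.sum_empty, hF0]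
  · obtain ⟨i0, -, hi0min⟩ := Finset.exists_min_image Finset.univ (xstar F h') hne
    have huniv : levelSet F h' (xstar F h' i0) = Finset.univ :=
      Finset.eq_univ_iff_forall.2 fun j =>
        Finset.mem_filter.2 ⟨Finset.mem_univ j, hi0min j (Finset.mem_univ j)⟩
    rw [← huniv]
    exact sum_y_levelSet hF hF0 hmono hcont hsupTop hinfBot _

lemma sum_y_le_aux : ∀ c : ℕ, ∀ A : Finset (Fin n), A.card ≤ c →
    ∑ i ∈ A, yv F h' i ≤ F A := by
  intro c
  induction c with
  | zero =>
    intro A hcard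
    rw [Finset.card_eq_zero.1 (Nat.le_zero.1 hcard), Finset.sum_empty, hF0]
  | succ c ih =>
    intro A hcard
    rcases Finset.eq_empty_or_nonempty A with rfl | hne
    · rw [Finset.sum_empty, hF0]
    · obtain ⟨i0, hi0mem, hi0min⟩ := Finset.exists_min_image A (xstar F h') hne
      set lam := xstar F h' i0 with hlam
      classical
      set C := A.filter (fun i => xstar F h' i = lam) with hC
      have hCA : C ⊆ A := Finset.filter_subset _ _
      have hi0C : i0 ∈ C := Finset.mem_filter.2 ⟨hi0mem, rfl⟩
      set A' := A \ C with hA'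
      have hA'card : A'.card ≤ c := by
        have h1 : A'.card < A.card :=
          Finset.card_lt_card ⟨Finset.sdiff_subset, fun hsub =>
            (Finset.mem_sdiff.1 (hsub (hCA hi0C))).2 hi0C⟩
        omega
      have hIH := ih A' hA'card
      set Gt := levelSetGt F h' lam with hGt
      have hA'Gt : A' ⊆ Gt := by
        intro i hi
        rw [Finset.mem_sdiff] at hi
        refine Finset.mem_filter.2 ⟨Finset.mem_univ i, ?_⟩
        have h1 := hi0min i hi.1
        have h2 : ¬ (xstar F h' i = lam) := fun hc => hi.2 (Finset.mem_filter.2 ⟨hi.1, hc⟩)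
        exact lt_of_le_of_ne h1 (fun hc => h2 hc.symm)
      have hCGt : Disjoint C Gt := by
        rw [Finset.disjoint_left]
        intro i hiC hiGt
        have := (Finset.mem_filter.1 hiC).2
        have := (Finset.mem_filter.1 hiGt).2
        linarith
      -- inequality from minimality of Gt at lam
      have hmini := mini_levelSetGt hF hF0 hmono hcont hsupTop hinfBot lam (Gt ∪ C)
      have hsplitGC : ∑ i ∈ Gt ∪ C, h' i lam = (∑ i ∈ Gt, h' i lam) + ∑ i ∈ C, h' i lam :=
        Finset.sum_union hCGt.symm
      have hCy : ∑ i ∈ C, yv F h' i = -∑ i ∈ C, h' i lam := by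
        rw [← Finset.sum_neg_distrib]
        refine Finset.sum_congr rfl (fun i hi => ?_)
        rw [yv, (Finset.mem_filter.1 hi).2]
      -- submodularity
      have hsub := hF A Gt
      have hAGt1 : A ∪ Gt = Gt ∪ C := by
        ext i
        simp only [Finset.mem_union]
        constructor
        · rintro (hiA | hiGt)
          · by_cases hc : xstar F h' i = lam
            · exact Or.inr (Finset.mem_filter.2 ⟨hiA, hc⟩)
            · exact Or.inl (hA'Gt (Finset.mem_sdiff.2 ⟨hiA, fun hic =>
                hc (Finset.mem_filter.1 hic).2⟩))
          · exact Or.inl hiGt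
        · rintro (hiGt | hiC)
          · exact Or.inr hiGt
          · exact Or.inl (hCA hiC)
      have hAGt2 : A ∩ Gt = A' := by
        ext i
        simp only [Finset.mem_inter, hA', Finset.mem_sdiff]
        constructor
        · rintro ⟨hiA, hiGt⟩
          refine ⟨hiA, fun hiC => ?_⟩
          have := (Finset.mem_filter.1 hiC).2
          have := (Finset.mem_filter.1 hiGt).2
          linarith
        · rintro ⟨hiA, hiC⟩
          exact ⟨hiA, hA'Gt (Finset.mem_sdiff.2 ⟨hiA, hiC⟩)⟩
      rw [hAGt1, hAGt2] at hsub
      have hsplitA : (∑ i ∈ A', yv F h' i) + ∑ i ∈ C, yv F h' i = ∑ i ∈ A, yv F h' i :=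
        Finset.sum_sdiff hCA
      simp only [gVal] at hmini
      rw [hsplitGC] at hmini
      linarith

lemma sum_y_le (A : Finset (Fin n)) : ∑ i ∈ A, yv F h' i ≤ F A :=
  sum_y_le_aux hF hF0 hmono hcont hsupTop hinfBot A.card A le_rfl

end Main3

end Stmt11Aux

namespace Stmt11Aux

variable {n : ℕ} {F : Finset (Fin n) → ℝ}

lemma abel_id (a d : ℕ → ℝ) (m : ℕ) :
    ∑ k ∈ Finset.range m, a k * (d (k+1) - d k)
      = a m * d m - a 0 * d 0 - ∑ k ∈ Finset.range m, (a (k+1) - a k) * d (k+1) := by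
  induction m with
  | zero => simp
  | succ m ih => rw [Finset.sum_range_succ, Finset.sum_range_succ, ih]; ring

/-- The set of the first `k` elements in the order given by `σ`. -/
def prefixSet (σ : Equiv.Perm (Fin n)) (k : ℕ) : Finset (Fin n) :=
  (Finset.univ.filter (fun j : Fin n => (j : ℕ) < k)).image ⇑σ

noncomputable def aSeq (x : Fin n → ℝ) (σ : Equiv.Perm (Fin n)) (k : ℕ) : ℝ :=
  if h : k < n then x (σ ⟨k, h⟩) else 0

noncomputable def dSeq (F : Finset (Fin n) → ℝ) (y : Fin n → ℝ) (σ : Equiv.Perm (Fin n))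
    (k : ℕ) : ℝ :=
  F (prefixSet σ k) - ∑ i ∈ prefixSet σ k, y i

lemma prefixSet_zero (σ : Equiv.Perm (Fin n)) : prefixSet σ 0 = ∅ := by
  simp [prefixSet]

lemma prefixSet_n (σ : Equiv.Perm (Fin n)) : prefixSet σ n = Finset.univ := by
  apply Finset.eq_univ_iff_forall.2
  intro i
  refine Finset.mem_image.2 ⟨σ.symm i, ?_, by simp⟩
  exact Finset.mem_filter.2 ⟨Finset.mem_univ _, (σ.symm i).isLt⟩

lemma prefixSet_succ (σ : Equiv.Perm (Fin n)) (k : ℕ) (hk : k < n) :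
    prefixSet σ (k+1) = insert (σ ⟨k, hk⟩) (prefixSet σ k) := by
  rw [prefixSet, prefixSet]
  have : Finset.univ.filter (fun j : Fin n => (j : ℕ) < k + 1)
      = insert (⟨k, hk⟩ : Fin n) (Finset.univ.filter (fun j : Fin n => (j : ℕ) < k)) := by
    ext j
    simp only [Finset.mem_filter, Finset.mem_insert, Finset.mem_univ, true_and]
    constructor
    · intro hj
      rcases Nat.lt_succ_iff_lt_or_eq.1 hj with h | h
      · exact Or.inr h
      · exact Or.inl (Fin.ext h)
    · rintro (rfl | hj)
      · exact Nat.lt_succ_self k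
      · exact hj.trans (Nat.lt_succ_self k)
  rw [this, Finset.image_insert]

lemma not_mem_prefixSet_self (σ : Equiv.Perm (Fin n)) (k : Fin n) :
    σ k ∉ prefixSet σ (k : ℕ) := by
  rw [prefixSet]
  intro hmem
  obtain ⟨j, hj, hje⟩ := Finset.mem_image.1 hmem
  have := σ.injective hje
  rw [this] at hj
  simp at hj

lemma dSeq_zero (hF0 : F ∅ = 0) (y : Fin n → ℝ) (σ : Equiv.Perm (Fin n)) :
    dSeq F y σ 0 = 0 := by
  simp [dSeq, prefixSet_zero, hF0]

lemma dSeq_n (huniv : ∑ i, y i = F Finset.univ) (σ : Equiv.Perm (Fin n)) :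
    dSeq F y σ n = 0 := by
  simp [dSeq, prefixSet_n, huniv]

lemma abel_master (x : Fin n → ℝ) (σ : Equiv.Perm (Fin n)) (y : Fin n → ℝ)
    (hF0 : F ∅ = 0) (huniv : ∑ i, y i = F Finset.univ) :
    lovaszVal F x σ - ∑ i, y i * x i
      = ∑ k ∈ Finset.range n, (aSeq x σ k - aSeq x σ (k+1)) * dSeq F y σ (k+1) := by
  have hlov : lovaszVal F x σ
      = ∑ k ∈ Finset.range n, aSeq x σ k * (F (prefixSet σ (k+1)) - F (prefixSet σ k)) := by
    rw [lovaszVal, ← Fin.sum_univ_eq_sum_range]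
    refine Finset.sum_congr rfl (fun k _ => ?_)
    have ha : aSeq x σ (k : ℕ) = x (σ k) := by rw [aSeq, dif_pos k.isLt]
    have h1 : Finset.univ.filter (fun j : Fin n => j ≤ k)
        = Finset.univ.filter (fun j : Fin n => (j : ℕ) < (k : ℕ) + 1) := by
      apply Finset.filter_congr; intro j _
      simp only [Fin.le_def, Nat.lt_succ_iff]
    have h2 : Finset.univ.filter (fun j : Fin n => j < k)
        = Finset.univ.filter (fun j : Fin n => (j : ℕ) < (k : ℕ)) := by
      apply Finset.filter_congr; intro j _
      simp only [Fin.lt_def]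
    rw [ha, h1, h2, prefixSet, prefixSet]
  have hinner : ∑ i, y i * x i
      = ∑ k ∈ Finset.range n,
          aSeq x σ k * ((∑ i ∈ prefixSet σ (k+1), y i) - ∑ i ∈ prefixSet σ k, y i) := by
    rw [← Equiv.sum_comp σ (fun i => y i * x i), ← Fin.sum_univ_eq_sum_range]
    refine Finset.sum_congr rfl (fun k _ => ?_)
    have ha : aSeq x σ (k : ℕ) = x (σ k) := by rw [aSeq, dif_pos k.isLt]
    have hs : prefixSet σ ((k : ℕ)+1) = insert (σ k) (prefixSet σ (k : ℕ)) := by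
      rw [prefixSet_succ σ k k.isLt, Fin.eta]
    rw [ha, hs, Finset.sum_insert (not_mem_prefixSet_self σ k)]
    ring
  have : lovaszVal F x σ - ∑ i, y i * x i
      = ∑ k ∈ Finset.range n, aSeq x σ k * (dSeq F y σ (k+1) - dSeq F y σ k) := by
    rw [hlov, hinner, ← Finset.sum_sub_distrib]
    refine Finset.sum_congr rfl (fun k _ => ?_)
    simp only [dSeq]; ring
  rw [this, abel_id, dSeq_zero hF0, dSeq_n huniv]
  have : ∑ k ∈ Finset.range n, (aSeq x σ (k+1) - aSeq x σ k) * dSeq F y σ (k+1)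
      = -∑ k ∈ Finset.range n, (aSeq x σ k - aSeq x σ (k+1)) * dSeq F y σ (k+1) := by
    rw [← Finset.sum_neg_distrib]
    exact Finset.sum_congr rfl (fun k _ => by ring)
  rw [this]
  ring

lemma aSeq_antitone (x : Fin n → ℝ) (σ : Equiv.Perm (Fin n)) (hσ : SortsDesc x σ)
    (k : ℕ) (hk : k + 1 < n) : aSeq x σ (k+1) ≤ aSeq x σ k := by
  rw [aSeq, aSeq, dif_pos hk, dif_pos (Nat.lt_of_succ_lt hk)]
  exact hσ ⟨k, Nat.lt_of_succ_lt hk⟩ ⟨k+1, hk⟩ (by simp [Fin.le_def])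

/-- Support-function inequality: any `y` in the base polytope has `⟨y,x⟩ ≤ f(x)`. -/
lemma inner_le_lovasz (x : Fin n → ℝ) (σ : Equiv.Perm (Fin n)) (hσ : SortsDesc x σ)
    (y : Fin n → ℝ) (hF0 : F ∅ = 0) (hle : ∀ A, ∑ i ∈ A, y i ≤ F A)
    (huniv : ∑ i, y i = F Finset.univ) :
    ∑ i, y i * x i ≤ lovaszVal F x σ := by
  have := abel_master x σ y hF0 huniv
  have hnn : ∀ k ∈ Finset.range n, 0 ≤ (aSeq x σ k - aSeq x σ (k+1)) * dSeq F y σ (k+1) := by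
    intro k hk
    rw [Finset.mem_range] at hk
    by_cases hlt : k + 1 < n
    · exact mul_nonneg (sub_nonneg.2 (aSeq_antitone x σ hσ k hlt))
        (sub_nonneg.2 (hle _))
    · have heq : k + 1 = n := by omega
      rw [heq, dSeq_n huniv, mul_zero]
  nlinarith [Finset.sum_nonneg hnn]

/-- Equality case: if `y` is tight on all level sets of `x`. -/
lemma inner_eq_lovasz (x : Fin n → ℝ) (σ : Equiv.Perm (Fin n)) (hσ : SortsDesc x σ)
    (y : Fin n → ℝ) (hF0 : F ∅ = 0)
    (huniv : ∑ i, y i = F Finset.univ)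
    (htight : ∀ i : Fin n, ∑ jj ∈ Finset.univ.filter (fun j => x i ≤ x j), y jj
      = F (Finset.univ.filter (fun j => x i ≤ x j))) :
    ∑ i, y i * x i = lovaszVal F x σ := by
  have hmaster := abel_master x σ y hF0 huniv
  have hzero : ∀ k ∈ Finset.range n, (aSeq x σ k - aSeq x σ (k+1)) * dSeq F y σ (k+1) = 0 := by
    intro k hk
    rw [Finset.mem_range] at hk
    rcases (by omega : k + 1 = n ∨ k + 1 < n) with heq | hlt
    · rw [heq, dSeq_n huniv, mul_zero]
    · by_cases hcase : aSeq x σ k = aSeq x σ (k+1)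
      · rw [hcase, sub_self, zero_mul]
      · have hklt : aSeq x σ (k+1) < aSeq x σ k :=
          lt_of_le_of_ne (aSeq_antitone x σ hσ k hlt) (fun hc => hcase hc.symm)
        have hkn : k < n := Nat.lt_of_succ_lt hlt
        have hU : prefixSet σ (k+1)
            = Finset.univ.filter (fun j => x (σ ⟨k, hkn⟩) ≤ x j) := by
          ext i
          simp only [prefixSet, Finset.mem_image, Finset.mem_filter, Finset.mem_univ, true_and]
          constructor
          · rintro ⟨j, hj, rfl⟩
            exact hσ j ⟨k, hkn⟩ (by simp [Fin.le_def, Nat.lt_succ_iff.1 hj])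
          · intro hxi
            refine ⟨σ.symm i, ?_, by simp⟩
            by_contra hge
            push_neg at hge
            have hle2 : (⟨k+1, hlt⟩ : Fin n) ≤ σ.symm i := by
              simp only [Fin.le_def]
              omega
            have := hσ ⟨k+1, hlt⟩ (σ.symm i) hle2
            rw [Equiv.apply_symm_apply] at this
            have hak1 : aSeq x σ (k+1) = x (σ ⟨k+1, hlt⟩) := by rw [aSeq, dif_pos hlt]
            have hak : aSeq x σ k = x (σ ⟨k, hkn⟩) := by rw [aSeq, dif_pos hkn]
            rw [hak1, hak] at hklt
            linarith
        have : dSeq F y σ (k+1) = 0 := by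
          rw [dSeq, hU, htight (σ ⟨k, hkn⟩), sub_self]
        rw [this, mul_zero]
  rw [Finset.sum_congr rfl hzero] at hmaster
  simp at hmaster
  linarith

end Stmt11Aux


/-- Proposition: characterization of the proximal solution:
`f(x) + Σ_i h_i(x_i)` has a unique minimizer `x*`, and each coordinate satisfies
`x*_j = max {λ : ∃ minimizer S of T ↦ F(T) + Σ_{i∈T} h_i'(λ) with j ∈ S}`,
the supremum being attained. -/
theorem statement11 {n : ℕ} (F : Finset (Fin n) → ℝ) (hF0 : F ∅ = 0) (hF : Submodular F)
    (f : (Fin n → ℝ) → ℝ) (hf : IsLovasz F f)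
    (h h' : Fin n → ℝ → ℝ)
    (hconv : ∀ i, StrictConvexOn ℝ (Set.univ : Set ℝ) (h i))
    (hderiv : ∀ i t, HasDerivAt (h i) (h' i t) t)
    (hcont : ∀ i, Continuous (h' i))
    (hsupTop : ∀ i M, ∃ t, M ≤ h' i t)
    (hinfBot : ∀ i M, ∃ t, h' i t ≤ M) :
    ∃ xstar : Fin n → ℝ,
      (∀ x : Fin n → ℝ, f xstar + ∑ i, h i (xstar i) ≤ f x + ∑ i, h i (x i)) ∧
      (∀ x : Fin n → ℝ, f x + ∑ i, h i (x i) = f xstar + ∑ i, h i (xstar i) → x = xstar) ∧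
      ∀ j : Fin n,
        IsGreatest {lam : ℝ | ∃ S : Finset (Fin n), j ∈ S ∧
          ∀ T : Finset (Fin n),
            F S + ∑ i ∈ S, h' i lam ≤ F T + ∑ i ∈ T, h' i lam} (xstar j) := by
  classical
  open Stmt11Aux in
  -- strict monotonicity of the derivatives
  have hmono : ∀ i, StrictMono (h' i) := by
    intro i
    have hsm : StrictMonoOn (deriv (h i)) Set.univ :=
      (hconv i).strictMonoOn_deriv (fun t _ => (hderiv i t).differentiableAt)
    intro s t hst
    have := hsm (Set.mem_univ s) (Set.mem_univ t) hst
    rwa [(hderiv i s).deriv, (hderiv i t).deriv] at this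
  -- the tangent-line inequality, strict version
  have htan : ∀ i (s t : ℝ), s ≠ t → h i s + h' i s * (t - s) < h i t := by
    intro i s t hst
    rcases lt_or_gt_of_ne hst with hlt | hgt
    · have := (hconv i).lt_slope_of_hasDerivAt (Set.mem_univ s) (Set.mem_univ t) hlt
        (hderiv i s)
      rw [slope_def_field, lt_div_iff₀ (by linarith : (0:ℝ) < t - s)] at this
      linarith
    · have := (hconv i).slope_lt_of_hasDerivAt (Set.mem_univ t) (Set.mem_univ s) hgt
        (hderiv i s)
      rw [slope_def_field, div_lt_iff₀ (by linarith : (0:ℝ) < s - t)] at this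
      nlinarith
  have htan' : ∀ i (s t : ℝ), h i s + h' i s * (t - s) ≤ h i t := by
    intro i s t
    rcases eq_or_ne s t with rfl | hne
    · simp
    · exact (htan i s t hne).le
  set xs : Fin n → ℝ := Stmt11Aux.xstar F h' with hxs
  set y : Fin n → ℝ := Stmt11Aux.yv F h' with hy
  have hyh : ∀ i, y i = -(h' i (xs i)) := fun i => rfl
  have hle : ∀ A : Finset (Fin n), ∑ i ∈ A, y i ≤ F A :=
    Stmt11Aux.sum_y_le hF hF0 hmono hcont hsupTop hinfBot
  have huniv : ∑ i, y i = F Finset.univ :=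
    Stmt11Aux.sum_y_univ hF hF0 hmono hcont hsupTop hinfBot
  have htight : ∀ i : Fin n, ∑ jj ∈ Finset.univ.filter (fun j => xs i ≤ xs j), y jj
      = F (Finset.univ.filter (fun j => xs i ≤ xs j)) :=
    fun i => Stmt11Aux.sum_y_levelSet hF hF0 hmono hcont hsupTop hinfBot (xs i)
  -- sorting permutations
  have hsort : ∀ x : Fin n → ℝ, ∃ σ : Equiv.Perm (Fin n), SortsDesc x σ := by
    intro x
    refine ⟨Tuple.sort (fun i => -x i), fun j k hjk => ?_⟩
    have := Tuple.monotone_sort (fun i => -x i) hjk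
    simp only [Function.comp_apply] at this
    linarith
  obtain ⟨σs, hσs⟩ := hsort xs
  have hfxs : f xs = ∑ i, y i * xs i := by
    rw [hf xs σs hσs, ← Stmt11Aux.inner_eq_lovasz xs σs hσs y hF0 huniv htight]
  -- per-coordinate inequality
  have hcoord : ∀ (x : Fin n → ℝ) i, y i * xs i + h i (xs i) ≤ y i * x i + h i (x i) := by
    intro x i
    have := htan' i (xs i) (x i)
    rw [hyh i]
    nlinarith [this]
  have hcoordStrict : ∀ (x : Fin n → ℝ) i, x i ≠ xs i →
      y i * xs i + h i (xs i) < y i * x i + h i (x i) := by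
    intro x i hne
    have := htan i (xs i) (x i) (fun hc => hne hc.symm)
    rw [hyh i]
    nlinarith [this]
  have hmin : ∀ x : Fin n → ℝ, f xs + ∑ i, h i (xs i) ≤ f x + ∑ i, h i (x i) := by
    intro x
    obtain ⟨σx, hσx⟩ := hsort x
    have h1 : ∑ i, y i * x i ≤ f x := by
      rw [hf x σx hσx]
      exact Stmt11Aux.inner_le_lovasz x σx hσx y hF0 hle huniv
    have h2 : ∑ i, (y i * xs i + h i (xs i)) ≤ ∑ i, (y i * x i + h i (x i)) :=
      Finset.sum_le_sum (fun i _ => hcoord x i)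
    rw [Finset.sum_add_distrib, Finset.sum_add_distrib] at h2
    rw [hfxs]
    linarith
  refine ⟨xs, hmin, ?_, ?_⟩
  · -- uniqueness
    intro x hx
    by_contra hne
    obtain ⟨i0, hi0⟩ := Function.ne_iff.1 hne
    obtain ⟨σx, hσx⟩ := hsort x
    have h1 : ∑ i, y i * x i ≤ f x := by
      rw [hf x σx hσx]
      exact Stmt11Aux.inner_le_lovasz x σx hσx y hF0 hle huniv
    have h2 : ∑ i, (y i * xs i + h i (xs i)) < ∑ i, (y i * x i + h i (x i)) :=
      Finset.sum_lt_sum (fun i _ => hcoord x i) ⟨i0, Finset.mem_univ i0, hcoordStrict x i0 hi0⟩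
    rw [Finset.sum_add_distrib, Finset.sum_add_distrib] at h2
    rw [hfxs] at hx
    linarith
  · -- the IsGreatest statement
    intro j
    have hAeq : {lam : ℝ | ∃ S : Finset (Fin n), j ∈ S ∧
        ∀ T : Finset (Fin n),
          F S + ∑ i ∈ S, h' i lam ≤ F T + ∑ i ∈ T, h' i lam}
        = Stmt11Aux.ASet F h' j := by
      ext lam
      simp only [Set.mem_setOf_eq, Stmt11Aux.ASet, Stmt11Aux.Mini, Stmt11Aux.gVal]
      exact ⟨fun ⟨S, h1, h2⟩ => ⟨S, h2, h1⟩, fun ⟨S, h1, h2⟩ => ⟨S, h2, h1⟩⟩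
    rw [hAeq]
    exact Stmt11Aux.xstar_isGreatest hF hF0 hmono hcont hsupTop hinfBot j
end

section
/- Let F be a submodular function on V with F(∅) = 0, f its Lovász extension, and x* the unique minimizer of f(x) + (1/2)‖x‖² over ℝ^V. Let λ be any value attained by some coordinate of x*, and set S' = {i ∈ V : x*_i ≥ λ} and S = {i ∈ V : x*_i > λ}. Then λ = − (F(S') − F(S)) / (|S'| − |S|). -/
open Finset
open Finset

lemma downclosed_eq {n : ℕ} (Q : Finset (Fin n))
    (hQ : ∀ j k : Fin n, j ≤ k → k ∈ Q → j ∈ Q) :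
    Q = univ.filter (fun j : Fin n => (j : ℕ) < Q.card) := by
  ext j
  simp only [mem_filter, mem_univ, true_and]
  constructor
  · intro hj
    have hsub : Finset.Iic j ⊆ Q := fun j' hj' => hQ j' j (Finset.mem_Iic.mp hj') hj
    have := Finset.card_le_card hsub
    rw [Fin.card_Iic] at this; omega
  · intro hj
    by_contra hjQ
    have hsub : Q ⊆ Finset.Iio j := by
      intro k hk
      rw [Finset.mem_Iio]
      by_contra hk2
      exact hjQ (hQ j k (not_lt.mp hk2) hk)
    have := Finset.card_le_card hsub
    rw [Fin.card_Iio] at this; omega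

lemma prefix_lemma {n : ℕ} (x : Fin n → ℝ) (σ : Equiv.Perm (Fin n))
    (hσ : SortsDesc x σ) (P : ℝ → Prop) [DecidablePred P]
    (hP : ∀ u v : ℝ, u ≤ v → P u → P v) :
    (∀ k : Fin n, (P (x (σ k)) ↔ (k : ℕ) < (univ.filter fun i => P (x i)).card)) ∧
    (univ.filter (fun j : Fin n => (j : ℕ) < (univ.filter fun i => P (x i)).card)).image σ
      = univ.filter fun i => P (x i) := by
  set T := univ.filter fun i => P (x i) with hT
  set Q := univ.filter fun j => P (x (σ j)) with hQdef
  have hQT : Q.image σ = T := by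
    ext i
    simp only [hQdef, hT, Finset.mem_image, mem_filter, mem_univ, true_and]
    constructor
    · rintro ⟨j, hj, rfl⟩; exact hj
    · intro h; exact ⟨σ.symm i, by simpa using h, by simp⟩
  have hcard : Q.card = T.card := by
    rw [← hQT]; exact (Finset.card_image_of_injective _ σ.injective).symm
  have hdc : Q = univ.filter (fun j : Fin n => (j : ℕ) < Q.card) := by
    apply downclosed_eq
    intro j k hjk hk
    simp only [hQdef, mem_filter, mem_univ, true_and] at hk ⊢
    exact hP _ _ (hσ j k hjk) hk
  constructor
  · intro k
    have : P (x (σ k)) ↔ k ∈ Q := by simp [hQdef]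
    rw [this, hdc, hcard]; simp
  · rw [← hcard, ← hdc, hQT]

/-- value of a constant block of the proximal solution:
if `λ` is a value attained by a coordinate of the minimizer `x*` of
`f(x) + ½‖x‖²`, and `S' = {x* ≥ λ}`, `S = {x* > λ}`, then
`λ = −(F(S') − F(S)) / (|S'| − |S|)`. -/
theorem statement13 {n : ℕ} (F : Finset (Fin n) → ℝ) (hF0 : F ∅ = 0) (hF : Submodular F)
    (f : (Fin n → ℝ) → ℝ) (hf : IsLovasz F f)
    (xstar : Fin n → ℝ)
    (hxstar : ∀ x : Fin n → ℝ,
      f xstar + (1/2) * ∑ i, (xstar i)^2 ≤ f x + (1/2) * ∑ i, (x i)^2)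
    (lam : ℝ) (hlam : ∃ j, xstar j = lam) :
    lam = -(F (Finset.univ.filter (fun i => lam ≤ xstar i))
              - F (Finset.univ.filter (fun i => lam < xstar i))) /
      (((Finset.univ.filter (fun i => lam ≤ xstar i)).card : ℝ)
        - ((Finset.univ.filter (fun i => lam < xstar i)).card : ℝ)) := by
  classical
  -- the sorting permutation
  obtain ⟨σ, hσ⟩ : ∃ σ : Equiv.Perm (Fin n), SortsDesc xstar σ := by
    refine ⟨(Fin.revPerm).trans (Tuple.sort xstar), ?_⟩
    intro j k hjk
    have hmono := Tuple.monotone_sort xstar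
    have : (Fin.rev k) ≤ Fin.rev j := Fin.rev_le_rev.mpr hjk
    simpa using hmono this
  set B := univ.filter (fun i => lam ≤ xstar i) with hBdef
  set A := univ.filter (fun i => lam < xstar i) with hAdef
  set a := A.card with hadef
  set b := B.card with hbdef
  have hPB := prefix_lemma xstar σ hσ (fun u => lam ≤ u) (fun u v huv h => le_trans h huv)
  have hPA := prefix_lemma xstar σ hσ (fun u => lam < u) (fun u v huv h => lt_of_lt_of_le h huv)
  have hB1 : ∀ k : Fin n, lam ≤ xstar (σ k) ↔ (k : ℕ) < b := fun k => hPB.1 k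
  have hA1 : ∀ k : Fin n, lam < xstar (σ k) ↔ (k : ℕ) < a := fun k => hPA.1 k
  have hB2 : (univ.filter (fun j : Fin n => (j : ℕ) < b)).image ⇑σ = B := hPB.2
  have hA2 : (univ.filter (fun j : Fin n => (j : ℕ) < a)).image ⇑σ = A := hPA.2
  -- the block C
  set C := univ.filter (fun i => xstar i = lam) with hCdef
  have hCBA : C = B \ A := by
    ext i
    simp only [hCdef, hBdef, hAdef, mem_filter, mem_univ, true_and, Finset.mem_sdiff]
    constructor
    · intro h; exact ⟨le_of_eq h.symm, by simp [h]⟩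
    · rintro ⟨h1, h2⟩
      simp only [mem_filter, mem_univ, true_and, not_lt] at h2
      linarith
  have hAB : A ⊆ B := by
    intro i hi
    simp only [hAdef, hBdef, mem_filter, mem_univ, true_and] at hi ⊢
    exact le_of_lt hi
  have hab : a ≤ b := Finset.card_le_card hAB
  set m := C.card with hmdef
  have hmba : m = b - a := by rw [hmdef, hCBA, Finset.card_sdiff_of_subset hAB]
  have hmpos : 0 < m := by
    obtain ⟨j, hj⟩ := hlam
    apply Finset.card_pos.mpr
    exact ⟨j, by simp [hCdef, hj]⟩
  have hmcast : (m : ℝ) = (b : ℝ) - (a : ℝ) := by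
    rw [hmba]; push_cast [hab]; ring
  -- g : prefix values
  set g : ℕ → ℝ := fun t => F ((univ.filter (fun j : Fin n => (j : ℕ) < t)).image ⇑σ) with hgdef
  have hga : g a = F A := congrArg F hA2
  have hgb : g b = F B := congrArg F hB2
  -- lovaszVal as a sum with coefficients g(k+1) - g(k)
  have hlov : ∀ y : Fin n → ℝ,
      lovaszVal F y σ = ∑ k : Fin n, y (σ k) * (g ((k : ℕ) + 1) - g (k : ℕ)) := by
    intro y
    unfold lovaszVal
    refine Finset.sum_congr rfl fun k _ => ?_
    have h1 : univ.filter (fun j : Fin n => j ≤ k)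
        = univ.filter (fun j : Fin n => (j : ℕ) < (k : ℕ) + 1) := by
      apply Finset.filter_congr; intro j _
      simp only [eq_iff_iff, Fin.le_def, Nat.lt_succ_iff]
    have h2 : univ.filter (fun j : Fin n => j < k)
        = univ.filter (fun j : Fin n => (j : ℕ) < (k : ℕ)) := by
      apply Finset.filter_congr; intro j _
      simp only [eq_iff_iff, Fin.lt_def]
    rw [h1, h2]
  -- the perturbed vectors
  set xe : ℝ → Fin n → ℝ := fun ε i => xstar i + (if xstar i = lam then ε else 0) with hxedef
  -- block positions
  have hblock : univ.filter (fun k : Fin n => xstar (σ k) = lam)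
      = univ.filter (fun k : Fin n => a ≤ (k : ℕ) ∧ (k : ℕ) < b) := by
    apply Finset.filter_congr; intro k _
    constructor
    · intro h
      refine ⟨?_, (hB1 k).mp (le_of_eq h.symm)⟩
      by_contra hka
      push_neg at hka
      have := (hA1 k).mpr hka
      linarith
    · rintro ⟨h1, h2⟩
      have hBk : lam ≤ xstar (σ k) := (hB1 k).mpr h2
      have hAk : ¬ lam < xstar (σ k) := fun hc => by
        have := (hA1 k).mp hc; omega
      linarith [not_lt.mp hAk]
  -- lovaszVal of perturbed vector
  have hlovxe : ∀ ε : ℝ, lovaszVal F (xe ε) σ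
      = lovaszVal F xstar σ + ε * (F B - F A) := by
    intro ε
    rw [hlov, hlov]
    have hsplit : ∑ k : Fin n, xe ε (σ k) * (g ((k : ℕ) + 1) - g (k : ℕ))
        = ∑ k : Fin n, xstar (σ k) * (g ((k : ℕ) + 1) - g (k : ℕ))
          + ∑ k : Fin n, (if xstar (σ k) = lam then ε else 0) * (g ((k : ℕ) + 1) - g (k : ℕ)) := by
      rw [← Finset.sum_add_distrib]
      refine Finset.sum_congr rfl fun k _ => ?_
      rw [hxedef]; ring
    rw [hsplit]
    congr 1
    have hite : ∀ k : Fin n, (if xstar (σ k) = lam then ε else 0) * (g ((k : ℕ) + 1) - g (k : ℕ))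
        = if xstar (σ k) = lam then ε * (g ((k : ℕ) + 1) - g (k : ℕ)) else 0 := by
      intro k; split <;> ring
    rw [Finset.sum_congr rfl fun k _ => hite k, ← Finset.sum_filter]
    rw [show (univ.filter fun k : Fin n => xstar (σ k) = lam)
        = univ.filter (fun k : Fin n => a ≤ (k : ℕ) ∧ (k : ℕ) < b) from hblock]
    have hbij : ∑ k ∈ univ.filter (fun k : Fin n => a ≤ (k : ℕ) ∧ (k : ℕ) < b),
        ε * (g ((k : ℕ) + 1) - g (k : ℕ))
        = ∑ t ∈ Finset.Ico a b, ε * (g (t + 1) - g t) := by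
      apply Finset.sum_bij (fun (k : Fin n) _ => (k : ℕ))
      · intro k hk
        simp only [mem_filter, mem_univ, true_and] at hk
        exact Finset.mem_Ico.mpr hk
      · intro k1 h1 k2 h2 h
        exact Fin.val_injective h
      · intro t ht
        rw [Finset.mem_Ico] at ht
        have hbn : b ≤ n := by
          calc b = B.card := rfl
          _ ≤ (univ : Finset (Fin n)).card := Finset.card_le_univ B
          _ = n := by simp
        refine ⟨⟨t, lt_of_lt_of_le ht.2 hbn⟩, by simp [ht.1, ht.2], rfl⟩
      · intro k hk; rfl
    rw [hbij, ← Finset.mul_sum, Finset.sum_Ico_eq_sub _ hab,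
      Finset.sum_range_sub g, Finset.sum_range_sub g, hga, hgb]
    ring
  -- quadratic part of perturbed vector
  have hsq : ∀ ε : ℝ, ∑ i, (xe ε i) ^ 2
      = ∑ i, (xstar i) ^ 2 + (m : ℝ) * (2 * lam * ε + ε ^ 2) := by
    intro ε
    have : ∀ i : Fin n, (xe ε i) ^ 2
        = (xstar i) ^ 2 + (if xstar i = lam then 2 * lam * ε + ε ^ 2 else 0) := by
      intro i
      rw [hxedef]
      by_cases h : xstar i = lam
      · simp only [h, if_pos]; ring
      · simp [h]
    rw [Finset.sum_congr rfl fun i _ => this i, Finset.sum_add_distrib]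
    congr 1
    rw [← Finset.sum_filter, Finset.sum_const, nsmul_eq_mul]
  -- sortedness of perturbed vector for small ε
  obtain ⟨δ, hδpos, hδ⟩ : ∃ δ : ℝ, 0 < δ ∧ ∀ i, xstar i ≠ lam → δ ≤ |xstar i - lam| := by
    by_cases hD : (univ.filter (fun i : Fin n => xstar i ≠ lam)).Nonempty
    · set D := univ.filter (fun i : Fin n => xstar i ≠ lam) with hDdef
      set E := D.image (fun i => |xstar i - lam|) with hEdef
      have hE : E.Nonempty := hD.image _
      refine ⟨E.min' hE, ?_, ?_⟩
      · obtain ⟨i, hi, hival⟩ := Finset.mem_image.mp (E.min'_mem hE)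
        rw [← hival]
        simp only [hDdef, mem_filter, mem_univ, true_and] at hi
        exact abs_pos.mpr (sub_ne_zero.mpr hi)
      · intro i hi
        exact E.min'_le _ (Finset.mem_image.mpr ⟨i, by simp [hDdef, hi], rfl⟩)
    · refine ⟨1, one_pos, fun i hi => absurd ?_ (fun h => hD ⟨i, h⟩)⟩
      simp [hi]
  have hsorted : ∀ ε : ℝ, |ε| ≤ δ → SortsDesc (xe ε) σ := by
    intro ε hε j k hjk
    have hεle := abs_le.mp hε
    have horder := hσ j k hjk
    show xstar (σ k) + (if xstar (σ k) = lam then ε else 0)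
      ≤ xstar (σ j) + (if xstar (σ j) = lam then ε else 0)
    by_cases hjc : xstar (σ j) = lam <;> by_cases hkc : xstar (σ k) = lam
    · rw [if_pos hjc, if_pos hkc]; linarith
    · rw [if_pos hjc, if_neg hkc]
      have h1 : δ ≤ |xstar (σ k) - lam| := hδ _ hkc
      have h2 : xstar (σ k) ≤ lam := hjc ▸ horder
      rw [abs_sub_comm, abs_of_nonneg (by linarith)] at h1
      linarith
    · rw [if_neg hjc, if_pos hkc]
      have h1 : δ ≤ |xstar (σ j) - lam| := hδ _ hjc
      have h2 : lam ≤ xstar (σ j) := hkc ▸ horder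
      rw [abs_of_nonneg (by linarith)] at h1
      linarith
    · rw [if_neg hjc, if_neg hkc]; linarith
  -- the key optimality inequality
  set q : ℝ := F B - F A + lam * (m : ℝ) with hqdef
  have hkey : ∀ ε : ℝ, |ε| ≤ δ → 0 ≤ ε * q + (m : ℝ) / 2 * ε ^ 2 := by
    intro ε hε
    have hopt := hxstar (xe ε)
    rw [hf xstar σ hσ, hf (xe ε) σ (hsorted ε hε), hlovxe ε, hsq ε] at hopt
    rw [hqdef]
    nlinarith [hopt]
  -- conclude q = 0
  have hq0 : q = 0 := by
    by_contra hq
    have hmR : (0 : ℝ) < m := by exact_mod_cast hmpos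
    rcases lt_or_gt_of_ne hq with hqneg | hqpos
    · set s := min δ (-q / (m : ℝ)) with hsdef
      have hspos : 0 < s := lt_min hδpos (div_pos (by linarith) hmR)
      have h1 := hkey s (by rw [abs_of_pos hspos]; exact min_le_left _ _)
      have h2 : s ≤ -q / (m : ℝ) := min_le_right _ _
      have h3 : s * (m : ℝ) ≤ -q := (le_div_iff₀ hmR).mp h2
      nlinarith
    · set s := min δ (q / (m : ℝ)) with hsdef
      have hspos : 0 < s := lt_min hδpos (div_pos (by linarith) hmR)
      have h1 := hkey (-s) (by rw [abs_neg, abs_of_pos hspos]; exact min_le_left _ _)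
      have h2 : s ≤ q / (m : ℝ) := min_le_right _ _
      have h3 : s * (m : ℝ) ≤ q := (le_div_iff₀ hmR).mp h2
      nlinarith
  -- final algebra
  have hmR : (0 : ℝ) < m := by exact_mod_cast hmpos
  have hne : (b : ℝ) - (a : ℝ) ≠ 0 := by rw [← hmcast]; exact ne_of_gt hmR
  show lam = -(F B - F A) / ((b : ℝ) - (a : ℝ))
  rw [← hmcast]
  field_simp
  rw [hqdef] at hq0
  linarith
end

section
/- Let F and G be submodular functions on V with F(∅) = G(∅) = 0. Then F + G is submodular and its base polytope is the Minkowski sum of the individual base polytopes: B(F + G) = B(F) + B(G) = {y + z : y ∈ B(F), z ∈ B(G)}. -/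
open Finset
open Finset

namespace S14

variable {n : ℕ}

/-- prefix set of the first `m` elements in the order `σ`. -/
def q (σ : Equiv.Perm (Fin n)) (m : ℕ) : Finset (Fin n) :=
  (univ.filter (fun j : Fin n => (j : ℕ) < m)).image σ

lemma mem_q (σ : Equiv.Perm (Fin n)) (m : ℕ) (i : Fin n) :
    i ∈ q σ m ↔ ((σ.symm i : Fin n) : ℕ) < m := by
  simp only [q, mem_image, mem_filter, mem_univ, true_and]
  constructor
  · rintro ⟨t, ht, rfl⟩; simpa using ht
  · intro h; exact ⟨σ.symm i, h, by simp⟩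

lemma q_zero (σ : Equiv.Perm (Fin n)) : q σ 0 = ∅ := by
  ext i; simp [mem_q]

lemma q_top (σ : Equiv.Perm (Fin n)) (m : ℕ) (hm : n ≤ m) : q σ m = univ := by
  ext i; simp only [mem_q, mem_univ, iff_true]
  exact lt_of_lt_of_le (σ.symm i).isLt hm

lemma q_succ (σ : Equiv.Perm (Fin n)) (k : Fin n) :
    q σ ((k : ℕ) + 1) = insert (σ k) (q σ (k : ℕ)) := by
  ext i
  simp only [mem_q, mem_insert]
  constructor
  · intro h
    rcases Nat.lt_succ_iff_lt_or_eq.mp h with h | h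
    · exact Or.inr h
    · left
      have : σ.symm i = k := Fin.ext h
      rw [← this]; simp
  · rintro (rfl | h)
    · simp
    · exact Nat.lt_succ_of_lt h

lemma sigma_not_mem_q (σ : Equiv.Perm (Fin n)) (k : Fin n) : σ k ∉ q σ (k : ℕ) := by
  simp [mem_q]

lemma prefix_le (σ : Equiv.Perm (Fin n)) (k : Fin n) :
    (univ.filter (fun j => j ≤ k)).image ⇑σ = q σ ((k : ℕ) + 1) := by
  ext i
  simp only [mem_image, mem_filter, mem_univ, true_and, mem_q]
  constructor
  · rintro ⟨t, ht, rfl⟩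
    simpa using ht
  · intro h
    exact ⟨σ.symm i, by rw [Fin.le_def]; exact Nat.lt_succ_iff.mp h, by simp⟩

lemma prefix_lt (σ : Equiv.Perm (Fin n)) (k : Fin n) :
    (univ.filter (fun j => j < k)).image ⇑σ = q σ (k : ℕ) := by
  ext i
  simp only [mem_image, mem_filter, mem_univ, true_and, mem_q]
  constructor
  · rintro ⟨t, ht, rfl⟩
    simp only [Equiv.symm_apply_apply]
    exact ht
  · intro h
    exact ⟨σ.symm i, by rw [Fin.lt_def]; exact h, by simp⟩

lemma lovaszVal_eq (F : Finset (Fin n) → ℝ) (x : Fin n → ℝ) (σ : Equiv.Perm (Fin n)) :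
    lovaszVal F x σ = ∑ k : Fin n, x (σ k) * (F (q σ ((k : ℕ) + 1)) - F (q σ (k : ℕ))) := by
  unfold lovaszVal
  refine Finset.sum_congr rfl fun k _ => ?_
  rw [prefix_le, prefix_lt]


lemma abel_aux (a d : ℕ → ℝ) (hd : ∀ m, 0 ≤ d m) (hd0 : d 0 = 0) :
    ∀ N : ℕ, (∀ m, m + 1 < N → a (m + 1) ≤ a m) →
      a (N - 1) * d N ≤ ∑ m ∈ Finset.range N, a m * (d (m + 1) - d m) := by
  intro N
  induction N with
  | zero => intro _; simp [hd0]
  | succ N ih =>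
    intro ha
    rcases Nat.eq_zero_or_pos N with rfl | hN
    · simp [hd0]
    · have h1 : a (N - 1) * d N ≤ ∑ m ∈ Finset.range N, a m * (d (m + 1) - d m) :=
        ih (fun m hm => ha m (Nat.lt_succ_of_lt hm))
      rw [Finset.sum_range_succ]
      have h2 : a N ≤ a (N - 1) := by
        have := ha (N - 1) (by omega)
        rwa [Nat.sub_add_cancel hN] at this
      have h3 : 0 ≤ (a (N - 1) - a N) * d N := mul_nonneg (by linarith) (hd N)
      have : (N + 1 - 1) = N := by omega
      rw [this]
      nlinarith [hd N, hd (N+1)]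

/-- the coefficient sequence extended by junk. -/
noncomputable def acoef (x : Fin n → ℝ) (σ : Equiv.Perm (Fin n)) : ℕ → ℝ :=
  fun m => if h : m < n then x (σ ⟨m, h⟩) else 0

lemma sum_mul_eq_range (x w : Fin n → ℝ) (σ : Equiv.Perm (Fin n)) :
    ∑ i, x i * w i =
      ∑ m ∈ Finset.range n, acoef x σ m * ((∑ i ∈ q σ (m + 1), w i) - ∑ i ∈ q σ m, w i) := by
  rw [← Fin.sum_univ_eq_sum_range, ← Equiv.sum_comp σ (fun i => x i * w i)]
  refine Finset.sum_congr rfl fun k _ => ?_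
  have h1 : acoef x σ (k : ℕ) = x (σ k) := by
    simp [acoef, k.isLt]
  have h2 : (∑ i ∈ q σ ((k : ℕ) + 1), w i) - ∑ i ∈ q σ (k : ℕ), w i = w (σ k) := by
    rw [q_succ, Finset.sum_insert (sigma_not_mem_q σ k)]; ring
  rw [h1, h2]

lemma lovasz_eq_range (F : Finset (Fin n) → ℝ) (x : Fin n → ℝ) (σ : Equiv.Perm (Fin n)) :
    lovaszVal F x σ = ∑ m ∈ Finset.range n, acoef x σ m * (F (q σ (m + 1)) - F (q σ m)) := by
  rw [lovaszVal_eq, ← Fin.sum_univ_eq_sum_range]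
  refine Finset.sum_congr rfl fun k _ => ?_
  have h1 : acoef x σ (k : ℕ) = x (σ k) := by simp [acoef, k.isLt]
  rw [h1]

lemma le_lovasz (H : Finset (Fin n) → ℝ) (hH0 : H ∅ = 0) (x w : Fin n → ℝ)
    (σ : Equiv.Perm (Fin n)) (hs : SortsDesc x σ) (hw : w ∈ basePolytope H) :
    ∑ i, x i * w i ≤ lovaszVal H x σ := by
  set d : ℕ → ℝ := fun m => H (q σ m) - ∑ i ∈ q σ m, w i with hd_def
  have hd : ∀ m, 0 ≤ d m := fun m => by
    have := hw.1 (q σ m); simp only [hd_def]; linarith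
  have hd0 : d 0 = 0 := by simp [hd_def, q_zero, hH0]
  have hdn : d n = 0 := by
    simp only [hd_def, q_top σ n le_rfl]
    have := hw.2; linarith
  have ha : ∀ m, m + 1 < n → acoef x σ (m + 1) ≤ acoef x σ m := by
    intro m hm
    have hm' : m < n := by omega
    simp only [acoef, dif_pos hm, dif_pos hm']
    exact hs ⟨m, hm'⟩ ⟨m + 1, hm⟩ (by simp [Fin.le_def])
  have key := abel_aux (acoef x σ) d hd hd0 n ha
  rw [hdn, mul_zero] at key
  have hrw : lovaszVal H x σ - ∑ i, x i * w i =
      ∑ m ∈ Finset.range n, acoef x σ m * (d (m + 1) - d m) := by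
    rw [lovasz_eq_range, sum_mul_eq_range x w σ, ← Finset.sum_sub_distrib]
    refine Finset.sum_congr rfl fun m _ => ?_
    simp only [hd_def]; ring
  linarith [hrw ▸ key]

noncomputable def greedy (F : Finset (Fin n) → ℝ) (σ : Equiv.Perm (Fin n)) : Fin n → ℝ :=
  fun i => F (q σ (((σ.symm i : Fin n) : ℕ) + 1)) - F (q σ ((σ.symm i : Fin n) : ℕ))

lemma greedy_apply (F : Finset (Fin n) → ℝ) (σ : Equiv.Perm (Fin n)) (k : Fin n) :
    greedy F σ (σ k) = F (q σ ((k : ℕ) + 1)) - F (q σ (k : ℕ)) := by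
  simp [greedy]

lemma greedy_feas (F : Finset (Fin n) → ℝ) (hF0 : F ∅ = 0) (hF : Submodular F)
    (σ : Equiv.Perm (Fin n)) (S : Finset (Fin n)) :
    ∑ i ∈ S, greedy F σ i ≤ F S := by
  induction S using Finset.strongInduction with
  | _ S ih =>
    rcases S.eq_empty_or_nonempty with rfl | hS
    · simp [hF0]
    · have hne : (S.image σ.symm).Nonempty := hS.image _
      set k := (S.image σ.symm).max' hne with hk
      have hkmem : k ∈ S.image σ.symm := Finset.max'_mem _ hne
      obtain ⟨i0, hi0S, hi0⟩ := Finset.mem_image.mp hkmem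
      have hi0' : σ k = i0 := by rw [← hi0]; simp
      have hmax : ∀ j ∈ S, σ.symm j ≤ k :=
        fun j hj => Finset.le_max' _ _ (Finset.mem_image_of_mem _ hj)
      have hUnion : S ∪ q σ (k : ℕ) = q σ ((k : ℕ) + 1) := by
        ext j
        simp only [Finset.mem_union, mem_q]
        constructor
        · rintro (hj | hj)
          · exact Nat.lt_succ_of_le (hmax j hj)
          · exact Nat.lt_succ_of_lt hj
        · intro hj
          rcases Nat.lt_succ_iff_lt_or_eq.mp hj with hj | hj
          · exact Or.inr hj
          · left
            have : σ.symm j = k := Fin.ext hj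
            have : j = σ k := by rw [← this]; simp
            rw [this, hi0']; exact hi0S
      have hInter : S ∩ q σ (k : ℕ) = S.erase i0 := by
        ext j
        simp only [Finset.mem_inter, mem_q, Finset.mem_erase]
        constructor
        · rintro ⟨hj, hj'⟩
          refine ⟨?_, hj⟩
          intro hji
          rw [hji, ← hi0'] at hj'
          simp at hj'
        · rintro ⟨hji, hj⟩
          refine ⟨hj, ?_⟩
          have hle : ((σ.symm j : Fin n) : ℕ) ≤ (k : ℕ) := hmax j hj
          refine Nat.lt_of_le_of_ne hle (fun hc => hji ?_)
          have : σ.symm j = k := Fin.ext hc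
          rw [← hi0', ← this]; simp
      have hsub := hF S (q σ (k : ℕ))
      rw [hUnion, hInter] at hsub
      have hgi : greedy F σ i0 = F (q σ ((k : ℕ) + 1)) - F (q σ (k : ℕ)) := by
        rw [← hi0', greedy_apply]
      have hsum : ∑ i ∈ S, greedy F σ i = greedy F σ i0 + ∑ j ∈ S.erase i0, greedy F σ j :=
        (Finset.add_sum_erase _ _ hi0S).symm
      have hih := ih (S.erase i0) (Finset.erase_ssubset hi0S)
      rw [hsum, hgi]
      linarith

lemma greedy_sum_univ (F : Finset (Fin n) → ℝ) (hF0 : F ∅ = 0) (σ : Equiv.Perm (Fin n)) :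
    ∑ i, greedy F σ i = F univ := by
  rw [← Equiv.sum_comp σ (greedy F σ)]
  have : ∀ k : Fin n, greedy F σ (σ k) = F (q σ ((k : ℕ) + 1)) - F (q σ (k : ℕ)) :=
    greedy_apply F σ
  rw [Finset.sum_congr rfl (fun k _ => this k), Fin.sum_univ_eq_sum_range
    (fun m => F (q σ (m + 1)) - F (q σ m)) n, Finset.sum_range_sub (fun m => F (q σ m)) n,
    q_zero, q_top σ n le_rfl, hF0, sub_zero]

lemma greedy_mem (F : Finset (Fin n) → ℝ) (hF0 : F ∅ = 0) (hF : Submodular F)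
    (σ : Equiv.Perm (Fin n)) : greedy F σ ∈ basePolytope F :=
  ⟨greedy_feas F hF0 hF σ, greedy_sum_univ F hF0 σ⟩

lemma inner_greedy (F : Finset (Fin n) → ℝ) (x : Fin n → ℝ) (σ : Equiv.Perm (Fin n)) :
    ∑ i, x i * greedy F σ i = lovaszVal F x σ := by
  rw [lovaszVal_eq, ← Equiv.sum_comp σ (fun i => x i * greedy F σ i)]
  exact Finset.sum_congr rfl fun k _ => by rw [greedy_apply]

lemma bp_closed (F : Finset (Fin n) → ℝ) : IsClosed (basePolytope F) := by
  have hrw : basePolytope F =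
      (⋂ S : Finset (Fin n), {y : Fin n → ℝ | ∑ i ∈ S, y i ≤ F S}) ∩
        {y : Fin n → ℝ | ∑ i, y i = F univ} := by
    ext y; simp [basePolytope, Set.mem_iInter]
  rw [hrw]
  have hc : ∀ S : Finset (Fin n), Continuous (fun y : Fin n → ℝ => ∑ i ∈ S, y i) :=
    fun S => continuous_finset_sum S (fun i _ => continuous_apply i)
  exact IsClosed.inter (isClosed_iInter fun S => isClosed_le (hc S) continuous_const)
    (isClosed_eq (hc univ) continuous_const)

lemma bp_convex (F : Finset (Fin n) → ℝ) : Convex ℝ (basePolytope F) := by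
  intro y hy z hz a b ha hb hab
  have key : ∀ S : Finset (Fin n),
      ∑ i ∈ S, (a • y + b • z) i = a * ∑ i ∈ S, y i + b * ∑ i ∈ S, z i := by
    intro S
    rw [Finset.mul_sum, Finset.mul_sum, ← Finset.sum_add_distrib]
    exact Finset.sum_congr rfl fun i _ => by simp [smul_eq_mul]
  constructor
  · intro S
    have h1 := hy.1 S; have h2 := hz.1 S
    rw [key S]
    have h3 := mul_le_mul_of_nonneg_left h1 ha
    have h4 := mul_le_mul_of_nonneg_left h2 hb
    have h5 : a * F S + b * F S = F S := by rw [← add_mul, hab, one_mul]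
    linarith
  · have h1 := hy.2; have h2 := hz.2
    rw [key univ, h1, h2, ← add_mul, hab, one_mul]

lemma bp_compact (F : Finset (Fin n) → ℝ) : IsCompact (basePolytope F) := by
  refine IsCompact.of_isClosed_subset
    (isCompact_univ_pi (fun i : Fin n => isCompact_Icc
      (a := F univ - F (univ.erase i)) (b := F {i}))) (bp_closed F) ?_
  intro y hy
  rw [Set.mem_univ_pi]
  intro i
  constructor
  · have h1 := hy.1 (univ.erase i)
    have h2 := hy.2
    have h3 : ∑ j, y j = y i + ∑ j ∈ univ.erase i, y j :=
      (Finset.add_sum_erase _ _ (mem_univ i)).symm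
    linarith
  · have := hy.1 {i}; simpa using this

end S14

open Pointwise

/-- the sum of two submodular functions is submodular, and the
base polytope of the sum is the Minkowski sum of the base polytopes. -/
theorem statement14 {n : ℕ} (F G : Finset (Fin n) → ℝ)
    (hF0 : F ∅ = 0) (hG0 : G ∅ = 0) (hF : Submodular F) (hG : Submodular G) :
    Submodular (fun S => F S + G S) ∧
    basePolytope (fun S => F S + G S) =
      {w : Fin n → ℝ | ∃ y ∈ basePolytope F, ∃ z ∈ basePolytope G, w = y + z} := by
  constructor
  · intro S T
    have h1 := hF S T; have h2 := hG S T
    simp only []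
    linarith
  · ext w
    simp only [Set.mem_setOf_eq]
    constructor
    · intro hw
      by_contra hcon
      push_neg at hcon
      set M : Set (Fin n → ℝ) := basePolytope F + basePolytope G with hM
      have hwM : w ∉ M := by
        intro hmem
        rw [Set.mem_add] at hmem
        obtain ⟨y, hy, z, hz, hyz⟩ := hmem
        exact hcon y hy z hz hyz.symm
      have hMconv : Convex ℝ M := (S14.bp_convex F).add (S14.bp_convex G)
      have hMclosed : IsClosed M := by
        have himg : M = (fun p : (Fin n → ℝ) × (Fin n → ℝ) => p.1 + p.2) ''
            (basePolytope F ×ˢ basePolytope G) := by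
          ext u
          simp only [hM, Set.mem_add, Set.mem_image, Set.mem_prod, Prod.exists]
          constructor
          · rintro ⟨y, hy, z, hz, h⟩; exact ⟨y, z, ⟨hy, hz⟩, h⟩
          · rintro ⟨y, z, ⟨hy, hz⟩, h⟩; exact ⟨y, hy, z, hz, h⟩
        rw [himg]
        exact ((((S14.bp_compact F).prod (S14.bp_compact G)).image
          (continuous_fst.add continuous_snd)).isClosed)
      obtain ⟨f, u, hfw, hfb⟩ := geometric_hahn_banach_point_closed hMconv hMclosed hwM
      set x : Fin n → ℝ := fun i => -(f (fun j => if i = j then (1 : ℝ) else 0)) with hx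
      have hflin : ∀ v : Fin n → ℝ, ∑ i, x i * v i = -(f v) := by
        intro v
        have hfv : f v = ∑ i, v i * f (fun j => if i = j then (1 : ℝ) else 0) := by
          conv_lhs => rw [pi_eq_sum_univ v, map_sum]
          exact Finset.sum_congr rfl fun i _ => by rw [map_smul]; simp [smul_eq_mul]
        have h1 : ∑ i, x i * v i =
            ∑ i, -(v i * f (fun j => if i = j then (1 : ℝ) else 0)) :=
          Finset.sum_congr rfl fun i _ => by rw [hx]; ring
        rw [h1, Finset.sum_neg_distrib, hfv]
      set σ : Equiv.Perm (Fin n) := Tuple.sort (fun i => -x i) with hσ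
      have hsort : SortsDesc x σ := by
        intro j k hjk
        have hmono := Tuple.monotone_sort (fun i => -x i) hjk
        simp only [Function.comp_apply] at hmono
        linarith
      have hbF := S14.greedy_mem F hF0 hF σ
      have hbG := S14.greedy_mem G hG0 hG σ
      have hmemM : S14.greedy F σ + S14.greedy G σ ∈ M := Set.add_mem_add hbF hbG
      have h1 : ∑ i, x i * w i ≤ lovaszVal (fun S => F S + G S) x σ :=
        S14.le_lovasz _ (by simp [hF0, hG0]) x w σ hsort hw
      have h2 : lovaszVal (fun S => F S + G S) x σ = lovaszVal F x σ + lovaszVal G x σ := by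
        unfold lovaszVal
        rw [← Finset.sum_add_distrib]
        exact Finset.sum_congr rfl fun k _ => by ring
      have h3 : lovaszVal F x σ + lovaszVal G x σ =
          ∑ i, x i * (S14.greedy F σ + S14.greedy G σ) i := by
        rw [← S14.inner_greedy F x σ, ← S14.inner_greedy G x σ, ← Finset.sum_add_distrib]
        exact Finset.sum_congr rfl fun i _ => by simp only [Pi.add_apply]; ring
      have hw' := hflin w
      have hb' := hflin (S14.greedy F σ + S14.greedy G σ)
      have hlt := hfb _ hmemM
      linarith
    · rintro ⟨y, hy, z, hz, rfl⟩
      constructor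
      · intro S
        have h1 := hy.1 S; have h2 := hz.1 S
        simp only [Pi.add_apply]
        rw [Finset.sum_add_distrib]
        exact add_le_add h1 h2
      · have h1 := hy.2; have h2 := hz.2
        simp only [Pi.add_apply]
        rw [Finset.sum_add_distrib, h1, h2]
end

section
/- Let A and B be nonempty closed convex subsets of ℝ^n with A ∩ B ≠ ∅, and let T = (1/2)(R_A R_B + id). Then for any z_0 ∈ ℝ^n, the sequence defined by z_{k+1} = T(z_k) converges to a fixed point of T. -/
open Filter InnerProductSpace
set_option linter.unusedSectionVars false
variable {F : Type*} [NormedAddCommGroup F] [InnerProductSpace ℝ F]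

lemma norm_le_of_sq_le_sq {a b : F} (h : ‖a‖^2 ≤ ‖b‖^2) : ‖a‖ ≤ ‖b‖ := by
  nlinarith [norm_nonneg a, norm_nonneg b]

/-- Variational inequality for a metric projection onto a convex set. -/
lemma proj_inner {C : Set F} (hC : Convex ℝ C) {P : F → F}
    (hmem : ∀ x, P x ∈ C) (hmin : ∀ x, ∀ w ∈ C, ‖x - P x‖ ≤ ‖x - w‖) :
    ∀ x, ∀ w ∈ C, ⟪x - P x, w - P x⟫_ℝ ≤ 0 := by
  intro x
  have hne : Nonempty C := ⟨⟨P x, hmem x⟩⟩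
  have hbd : BddBelow (Set.range fun w : C => ‖x - (w : F)‖) :=
    ⟨0, by rintro _ ⟨w, rfl⟩; exact norm_nonneg _⟩
  have heq : ‖x - P x‖ = ⨅ w : C, ‖x - (w : F)‖ :=
    le_antisymm (le_ciInf fun w => hmin x w w.2) (ciInf_le hbd ⟨P x, hmem x⟩)
  exact (norm_eq_iInf_iff_real_inner_le_zero hC (hmem x)).mp heq

/-- Firm nonexpansiveness of the projection. -/
lemma proj_firm {C : Set F} (hC : Convex ℝ C) {P : F → F}
    (hmem : ∀ x, P x ∈ C) (hmin : ∀ x, ∀ w ∈ C, ‖x - P x‖ ≤ ‖x - w‖) :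
    ∀ x y, ‖P x - P y‖^2 ≤ ⟪x - y, P x - P y⟫_ℝ := by
  intro x y
  have h1 := proj_inner hC hmem hmin x (P y) (hmem y)
  have h2 := proj_inner hC hmem hmin y (P x) (hmem x)
  have e : ⟪x - y, P x - P y⟫_ℝ - ‖P x - P y‖^2
      = -⟪x - P x, P y - P x⟫_ℝ - ⟪y - P y, P x - P y⟫_ℝ := by
    rw [← real_inner_self_eq_norm_sq]
    simp only [inner_sub_left, inner_sub_right]
    rw [real_inner_comm (P y) (P x), real_inner_comm (P x) x, real_inner_comm (P y) x,
      real_inner_comm (P x) y, real_inner_comm (P y) y]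
    ring
  nlinarith [h1, h2]

/-- The reflection `2P - id` is nonexpansive (squared form). -/
lemma refl_nonexp {C : Set F} (hC : Convex ℝ C) {P : F → F}
    (hmem : ∀ x, P x ∈ C) (hmin : ∀ x, ∀ w ∈ C, ‖x - P x‖ ≤ ‖x - w‖) :
    ∀ x y, ‖((2:ℝ) • P x - x) - ((2:ℝ) • P y - y)‖^2 ≤ ‖x - y‖^2 := by
  intro x y
  have hf := proj_firm hC hmem hmin x y
  have e : ((2:ℝ) • P x - x) - ((2:ℝ) • P y - y) = (2:ℝ) • (P x - P y) - (x - y) := by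
    module
  rw [e, norm_sub_sq_real, norm_smul, real_inner_smul_left]
  have : ‖(2:ℝ)‖ = 2 := by norm_num
  rw [this, real_inner_comm]
  nlinarith [hf]

/-- Firm-nonexpansiveness-type inequality for `T = ½(N + id)` with `N` nonexpansive. -/
lemma T_key {N : F → F} (hN : ∀ x y, ‖N x - N y‖^2 ≤ ‖x - y‖^2) (f x : F)
    (hf : (1/2:ℝ) • (N f + f) = f) :
    ‖(1/2:ℝ) • (N x + x) - f‖^2 + ‖x - (1/2:ℝ) • (N x + x)‖^2 ≤ ‖x - f‖^2 := by
  have hNf : N f = f := by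
    have h2 : N f + f = f + f := by
      have : ((2:ℝ) • ((1/2:ℝ) • (N f + f)) : F) = (2:ℝ) • f := by rw [hf]
      have e : ((2:ℝ) • ((1/2:ℝ) • (N f + f)) : F) = N f + f := by module
      rw [e, two_smul] at this; exact this
    exact add_right_cancel h2
  have e1 : (1/2:ℝ) • (N x + x) - f = (1/2:ℝ) • ((N x - N f) + (x - f)) := by
    rw [hNf]; module
  have e2 : x - (1/2:ℝ) • (N x + x) = (1/2:ℝ) • ((x - f) - (N x - N f)) := by
    rw [hNf]; module
  have hnn := hN x f
  have p1 := norm_add_sq_real (N x - N f) (x - f)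
  have p2 := norm_sub_sq_real (x - f) (N x - N f)
  have hc : ⟪N x - N f, x - f⟫_ℝ = ⟪x - f, N x - N f⟫_ℝ := real_inner_comm _ _
  rw [e1, e2, norm_smul, norm_smul, Real.norm_eq_abs,
    abs_of_nonneg (by norm_num : (0:ℝ) ≤ 1/2)]
  nlinarith [hnn, p1, p2]

/-- Convergence of the iteration of a "firmly nonexpansive" map with a fixed point,
in a proper space. -/
lemma converge_of_key {E : Type*} [NormedAddCommGroup E] [InnerProductSpace ℝ E]
    [ProperSpace E]
    (T : E → E) (hTcont : Continuous T) (f : E) (hTf : T f = f)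
    (hkey : ∀ g : E, T g = g → ∀ x, ‖T x - g‖^2 + ‖x - T x‖^2 ≤ ‖x - g‖^2)
    (z : ℕ → E) (hz : ∀ k, z (k+1) = T (z k)) :
    ∃ zstar, T zstar = zstar ∧ Tendsto z atTop (nhds zstar) := by
  have mono : ∀ g, T g = g → Antitone fun k => ‖z k - g‖ := by
    intro g hg
    apply antitone_nat_of_succ_le
    intro k
    have h := hkey g hg (z k)
    rw [← hz k] at h
    nlinarith [norm_nonneg (z (k+1) - g), norm_nonneg (z k - g),
      sq_nonneg ‖z k - z (k+1)‖]
  obtain ⟨zstar, _, φ, hφ, hφt⟩ := (isCompact_closedBall f ‖z 0 - f‖).tendsto_subseq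
      (x := z) (fun k => by
        rw [Metric.mem_closedBall, dist_eq_norm]
        exact mono f hTf (Nat.zero_le k))
  have hd2 : Tendsto (fun k => ‖z k - z (k+1)‖^2) atTop (nhds 0) := by
    have haA : Antitone fun k => ‖z k - f‖ := mono f hTf
    have hbdd : BddBelow (Set.range fun k => ‖z k - f‖) :=
      ⟨0, by rintro _ ⟨k, rfl⟩; exact norm_nonneg _⟩
    have hL : Tendsto (fun k => ‖z k - f‖) atTop (nhds (⨅ k, ‖z k - f‖)) :=
      tendsto_atTop_ciInf haA hbdd
    have hL2 : Tendsto (fun k => ‖z k - f‖^2) atTop (nhds ((⨅ k, ‖z k - f‖)^2)) :=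
      hL.pow 2
    have hL2' : Tendsto (fun k => ‖z (k+1) - f‖^2) atTop (nhds ((⨅ k, ‖z k - f‖)^2)) :=
      hL2.comp (tendsto_add_atTop_nat 1)
    have hdiff : Tendsto (fun k => ‖z k - f‖^2 - ‖z (k+1) - f‖^2) atTop (nhds 0) := by
      simpa using hL2.sub hL2'
    apply squeeze_zero (fun k => sq_nonneg _) _ hdiff
    intro k
    have h := hkey f hTf (z k)
    rw [← hz k] at h
    linarith
  have hd : Tendsto (fun k => ‖z k - z (k+1)‖) atTop (nhds 0) := by
    have h := hd2.sqrt
    simpa [Real.sqrt_sq (norm_nonneg _)] using h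
  have hv : Tendsto (fun j => z (φ j + 1)) atTop (nhds zstar) := by
    have h1 : Tendsto (fun j => z (φ j + 1) - z (φ j)) atTop (nhds 0) := by
      rw [tendsto_zero_iff_norm_tendsto_zero]
      have h2 := hd.comp hφ.tendsto_atTop
      simpa [Function.comp_def, norm_sub_rev] using h2
    have h3 := h1.add hφt
    simpa using h3
  have hTz : T zstar = zstar := by
    have h2 : Tendsto (fun j => T (z (φ j))) atTop (nhds (T zstar)) :=
      (hTcont.tendsto zstar).comp hφt
    have h3 : (fun j => T (z (φ j))) = fun j => z (φ j + 1) :=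
      funext fun j => (hz (φ j)).symm
    rw [h3] at h2
    exact tendsto_nhds_unique h2 hv
  refine ⟨zstar, hTz, ?_⟩
  have hbA : Antitone fun k => ‖z k - zstar‖ := mono zstar hTz
  have hbdd : BddBelow (Set.range fun k => ‖z k - zstar‖) :=
    ⟨0, by rintro _ ⟨k, rfl⟩; exact norm_nonneg _⟩
  have hbL : Tendsto (fun k => ‖z k - zstar‖) atTop (nhds (⨅ k, ‖z k - zstar‖)) :=
    tendsto_atTop_ciInf hbA hbdd
  have hb0 : Tendsto (fun j => ‖z (φ j) - zstar‖) atTop (nhds 0) := by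
    have h := tendsto_iff_norm_sub_tendsto_zero.mp hφt
    simpa [Function.comp] using h
  have hinf : (⨅ k, ‖z k - zstar‖) = 0 := by
    refine tendsto_nhds_unique ?_ hb0
    exact hbL.comp hφ.tendsto_atTop
  rw [hinf] at hbL
  exact tendsto_iff_norm_sub_tendsto_zero.mpr hbL
/-- `P` is the (Euclidean) orthogonal projection onto `C`: it maps every point to
its nearest point of `C` in the Euclidean distance. -/
def IsEuclProjection {n : ℕ} (C : Set (Fin n → ℝ)) (P : (Fin n → ℝ) → (Fin n → ℝ)) : Prop :=
  ∀ x : Fin n → ℝ, P x ∈ C ∧ ∀ w ∈ C, ∑ i, (x i - P x i)^2 ≤ ∑ i, (x i - w i)^2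

private lemma euclid_norm_sub_sq {n : ℕ} (x y : EuclideanSpace ℝ (Fin n)) :
    ‖x - y‖^2 = ∑ i, (x i - y i)^2 := by
  rw [EuclideanSpace.norm_eq, Real.sq_sqrt (by positivity)]
  refine Finset.sum_congr rfl fun i _ => ?_
  rw [Real.norm_eq_abs, sq_abs]
  rfl

private lemma proj_fix {n : ℕ} {C : Set (Fin n → ℝ)} {P : (Fin n → ℝ) → (Fin n → ℝ)}
    (hP : IsEuclProjection C P) {g : Fin n → ℝ} (hg : g ∈ C) : P g = g := by
  have h0 : ∑ i, (g i - P g i)^2 = 0 :=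
    le_antisymm (by simpa using (hP g).2 g hg) (Finset.sum_nonneg fun i _ => sq_nonneg _)
  funext i
  have hi := (Finset.sum_eq_zero_iff_of_nonneg (fun i _ => sq_nonneg (g i - P g i))).mp
    h0 i (Finset.mem_univ i)
  have h := sq_eq_zero_iff.mp hi
  linarith

/-- convergence of Douglas–Rachford iterations in the consistent
case: for nonempty closed convex `A, B ⊆ ℝ^n` with `A ∩ B ≠ ∅` and
`T = ½(R_A R_B + id)`, the iteration `z_{k+1} = T(z_k)` converges to a fixed point
of `T`, for every starting point `z_0`. -/
theorem statement15 {n : ℕ} (A B : Set (Fin n → ℝ))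
    (hAne : A.Nonempty) (hBne : B.Nonempty)
    (hAcl : IsClosed A) (hBcl : IsClosed B)
    (hAcv : Convex ℝ A) (hBcv : Convex ℝ B)
    (hAB : (A ∩ B).Nonempty)
    (PA PB : (Fin n → ℝ) → (Fin n → ℝ))
    (hPA : IsEuclProjection A PA) (hPB : IsEuclProjection B PB)
    (z : ℕ → Fin n → ℝ)
    (hz : ∀ k, z (k+1) = (1/2 : ℝ) •
      ((((2:ℝ) • PA ((2:ℝ) • PB (z k) - z k) - ((2:ℝ) • PB (z k) - z k))) + z k)) :
    ∃ zstar : Fin n → ℝ,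
      (1/2 : ℝ) •
        ((((2:ℝ) • PA ((2:ℝ) • PB zstar - zstar) - ((2:ℝ) • PB zstar - zstar))) + zstar)
        = zstar ∧
      Tendsto z atTop (nhds zstar) := by
  -- view everything in Euclidean space
  let PAe : EuclideanSpace ℝ (Fin n) → EuclideanSpace ℝ (Fin n) :=
    fun x => WithLp.toLp 2 (PA (WithLp.ofLp x))
  let PBe : EuclideanSpace ℝ (Fin n) → EuclideanSpace ℝ (Fin n) :=
    fun x => WithLp.toLp 2 (PB (WithLp.ofLp x))
  let Ne : EuclideanSpace ℝ (Fin n) → EuclideanSpace ℝ (Fin n) :=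
    fun x => (2:ℝ) • PAe ((2:ℝ) • PBe x - x) - ((2:ℝ) • PBe x - x)
  let Te : EuclideanSpace ℝ (Fin n) → EuclideanSpace ℝ (Fin n) :=
    fun x => (1/2:ℝ) • (Ne x + x)
  let ze : ℕ → EuclideanSpace ℝ (Fin n) := fun k => WithLp.toLp 2 (z k)
  let Ae : Set (EuclideanSpace ℝ (Fin n)) := WithLp.ofLp ⁻¹' A
  let Be : Set (EuclideanSpace ℝ (Fin n)) := WithLp.ofLp ⁻¹' B
  have hAcve : Convex ℝ Ae := by
    exact hAcv.linear_preimage (WithLp.linearEquiv 2 ℝ (Fin n → ℝ)).toLinearMap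
  have hBcve : Convex ℝ Be := by
    exact hBcv.linear_preimage (WithLp.linearEquiv 2 ℝ (Fin n → ℝ)).toLinearMap
  have hPAmem : ∀ x : EuclideanSpace ℝ (Fin n), PAe x ∈ Ae := fun x => (hPA (WithLp.ofLp x)).1
  have hPBmem : ∀ x : EuclideanSpace ℝ (Fin n), PBe x ∈ Be := fun x => (hPB (WithLp.ofLp x)).1
  have hPAmin : ∀ x w : EuclideanSpace ℝ (Fin n), w ∈ Ae → ‖x - PAe x‖ ≤ ‖x - w‖ := by
    intro x w hw
    apply norm_le_of_sq_le_sq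
    rw [euclid_norm_sub_sq, euclid_norm_sub_sq]
    exact (hPA (WithLp.ofLp x)).2 (WithLp.ofLp w) hw
  have hPBmin : ∀ x w : EuclideanSpace ℝ (Fin n), w ∈ Be → ‖x - PBe x‖ ≤ ‖x - w‖ := by
    intro x w hw
    apply norm_le_of_sq_le_sq
    rw [euclid_norm_sub_sq, euclid_norm_sub_sq]
    exact (hPB (WithLp.ofLp x)).2 (WithLp.ofLp w) hw
  have hAnonexp := refl_nonexp (F := EuclideanSpace ℝ (Fin n)) hAcve hPAmem hPAmin
  have hBnonexp := refl_nonexp (F := EuclideanSpace ℝ (Fin n)) hBcve hPBmem hPBmin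
  have hN_sq : ∀ x y : EuclideanSpace ℝ (Fin n), ‖Ne x - Ne y‖^2 ≤ ‖x - y‖^2 := by
    intro x y
    calc ‖Ne x - Ne y‖^2
        ≤ ‖((2:ℝ) • PBe x - x) - ((2:ℝ) • PBe y - y)‖^2 :=
          hAnonexp ((2:ℝ) • PBe x - x) ((2:ℝ) • PBe y - y)
      _ ≤ ‖x - y‖^2 := hBnonexp x y
  -- continuity of T
  have hNlip : LipschitzWith 1 Ne := by
    apply LipschitzWith.of_dist_le_mul
    intro x y
    rw [dist_eq_norm, dist_eq_norm]
    simpa using norm_le_of_sq_le_sq (hN_sq x y)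
  have hTcont : Continuous Te :=
    by exact (hNlip.continuous.add continuous_id).const_smul (1/2:ℝ)
  -- a fixed point
  obtain ⟨f, hfA, hfB⟩ := hAB
  let fe : EuclideanSpace ℝ (Fin n) := WithLp.toLp 2 f
  have hPBfe : PBe fe = fe := by exact congrArg (WithLp.toLp 2) (proj_fix hPB hfB)
  have hPAfe : PAe fe = fe := by exact congrArg (WithLp.toLp 2) (proj_fix hPA hfA)
  have h1 : (2:ℝ) • PBe fe - fe = fe := by
    rw [hPBfe]; module
  have hNf : Ne fe = fe := by
    show (2:ℝ) • PAe ((2:ℝ) • PBe fe - fe) - ((2:ℝ) • PBe fe - fe) = fe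
    rw [h1, hPAfe]; module
  have hTf : Te fe = fe := by
    show (1/2:ℝ) • (Ne fe + fe) = fe
    rw [hNf]; module
  -- key inequality
  have hkey : ∀ g : EuclideanSpace ℝ (Fin n), Te g = g →
      ∀ x, ‖Te x - g‖^2 + ‖x - Te x‖^2 ≤ ‖x - g‖^2 := by
    intro g hg x
    exact T_key hN_sq g x hg
  -- the iteration
  have hzT : ∀ k, ze (k+1) = Te (ze k) := fun k => by exact congrArg (WithLp.toLp 2) (hz k)
  obtain ⟨zstar, hfix, htend⟩ := converge_of_key Te hTcont fe hTf hkey ze hzT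
  exact ⟨WithLp.ofLp zstar, by exact congrArg WithLp.ofLp hfix,
    by exact ((PiLp.continuous_ofLp 2 _).tendsto zstar).comp htend⟩
end

section
/- Let A and B be nonempty polyhedral convex subsets of ℝ^n with A ∩ B = ∅, and let T = (1/2)(R_A R_B + id). Then for any z_0 ∈ ℝ^n, the sequence defined by z_{k+1} = T(z_k) satisfies ‖z_k‖ → ∞ as k → ∞. -/
open Filter

/-- A polyhedral convex set: an intersection of finitely many closed halfspaces. -/
def Polyhedral {n : ℕ} (C : Set (Fin n → ℝ)) : Prop :=
  ∃ (m : ℕ) (a : Fin m → Fin n → ℝ) (b : Fin m → ℝ),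
    C = {x : Fin n → ℝ | ∀ i, ∑ j, a i j * x j ≤ b i}

section Aux

/-- Halfspace-intersection description with linear maps. -/
def HPoly {E : Type*} [AddCommGroup E] [Module ℝ E] (P : Set E) : Prop :=
  ∃ (m : ℕ) (f : Fin m → E →ₗ[ℝ] ℝ) (b : Fin m → ℝ), P = {x | ∀ i, f i x ≤ b i}

variable {E F : Type*} [AddCommGroup E] [Module ℝ E] [AddCommGroup F] [Module ℝ F]

lemma hpoly_of_fintype {ι : Type*} [Fintype ι] (f : ι → E →ₗ[ℝ] ℝ) (b : ι → ℝ) :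
    HPoly {x | ∀ i, f i x ≤ b i} := by
  let e := Fintype.equivFin ι
  refine ⟨Fintype.card ι, f ∘ e.symm, b ∘ e.symm, ?_⟩
  ext x
  simp only [Set.mem_setOf_eq, Function.comp]
  exact ⟨fun h i => h _, fun h i => by simpa using h (e i)⟩

lemma HPoly.preimage (L : F →ₗ[ℝ] E) {P : Set E} (h : HPoly P) : HPoly (L ⁻¹' P) := by
  obtain ⟨m, f, b, rfl⟩ := h
  exact ⟨m, fun i => (f i).comp L, b, rfl⟩

lemma HPoly.inter {P Q : Set E} (hP : HPoly P) (hQ : HPoly Q) : HPoly (P ∩ Q) := by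
  obtain ⟨m1, f1, b1, rfl⟩ := hP
  obtain ⟨m2, f2, b2, rfl⟩ := hQ
  refine ⟨m1 + m2, Fin.append f1 f2, Fin.append b1 b2, ?_⟩
  ext x
  simp only [Set.mem_inter_iff, Set.mem_setOf_eq]
  constructor
  · rintro ⟨h1, h2⟩ i
    refine Fin.addCases (fun i => ?_) (fun i => ?_) i <;>
      simp [Fin.append_left, Fin.append_right, h1 _, h2 _]
  · intro h
    refine ⟨fun i => ?_, fun i => ?_⟩
    · simpa [Fin.append_left] using h (Fin.castAdd m2 i)
    · simpa [Fin.append_right] using h (Fin.natAdd m1 i)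


lemma HPoly.elim1 {P : Set E} (h : HPoly P) (u : E) :
    HPoly {x | ∃ t : ℝ, x + t • u ∈ P} := by
  classical
  obtain ⟨m, f, b, rfl⟩ := h
  set c : Fin m → ℝ := fun i => f i u with hc
  let g : Fin m ⊕ (Fin m × Fin m) → E →ₗ[ℝ] ℝ := fun k =>
    match k with
    | .inl i => if c i = 0 then f i else 0
    | .inr (i, j) => if c i < 0 ∧ 0 < c j then c j • f i - c i • f j else 0
  let d : Fin m ⊕ (Fin m × Fin m) → ℝ := fun k =>
    match k with
    | .inl i => if c i = 0 then b i else 0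
    | .inr (i, j) => if c i < 0 ∧ 0 < c j then c j * b i - c i * b j else 0
  have key : {x : E | ∃ t : ℝ, x + t • u ∈ {x | ∀ i, f i x ≤ b i}}
      = {x | ∀ k, g k x ≤ d k} := by
    ext x
    simp only [Set.mem_setOf_eq]
    constructor
    · rintro ⟨t, ht⟩ k
      have ht' : ∀ i, f i x + t * c i ≤ b i := by
        intro i; have := ht i; simpa [map_add, map_smul, smul_eq_mul, mul_comm] using this
      match k with
      | .inl i =>
        by_cases h0 : c i = 0
        · simp only [g, d, if_pos h0]
          have := ht' i; rw [h0] at this; linarith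
        · simp [g, d, if_neg h0]
      | .inr (i, j) =>
        by_cases hij : c i < 0 ∧ 0 < c j
        · simp only [g, d, if_pos hij, LinearMap.sub_apply, LinearMap.smul_apply, smul_eq_mul]
          obtain ⟨hi, hj⟩ := hij
          have h1 := ht' i
          have h2 := ht' j
          nlinarith [mul_le_mul_of_nonneg_left h1 hj.le, mul_le_mul_of_nonpos_left h2 hi.le]
        · simp [g, d, if_neg hij]
    · intro h
      have hzero : ∀ i, c i = 0 → f i x ≤ b i := by
        intro i h0
        have := h (.inl i)
        simpa [g, d, if_pos h0] using this
      have hpair : ∀ i j, c i < 0 → 0 < c j →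
          c j * f i x - c i * f j x ≤ c j * b i - c i * b j := by
        intro i j hi hj
        have := h (.inr (i, j))
        simpa [g, d, if_pos (⟨hi, hj⟩ : c i < 0 ∧ 0 < c j), LinearMap.sub_apply,
          LinearMap.smul_apply, smul_eq_mul] using this
      set U : Finset (Fin m) := Finset.univ.filter (fun j => 0 < c j) with hU
      set L : Finset (Fin m) := Finset.univ.filter (fun i => c i < 0) with hL
      have goalform : ∀ t : ℝ, (∀ i, f i x + t * c i ≤ b i) → ∃ t : ℝ, x + t • u ∈ {x | ∀ i, f i x ≤ b i} := by
        intro t ht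
        exact ⟨t, fun i => by
          have := ht i
          simpa [map_add, map_smul, smul_eq_mul, mul_comm] using this⟩
      by_cases hUne : U.Nonempty
      · set t : ℝ := (U.image (fun j => (b j - f j x) / c j)).min' (hUne.image _) with htdef
        obtain ⟨j0, hj0U, hj0⟩ := Finset.mem_image.mp
          ((U.image (fun j => (b j - f j x) / c j)).min'_mem (hUne.image _))
        have hj0pos : 0 < c j0 := (Finset.mem_filter.mp hj0U).2
        refine goalform t (fun i => ?_)
        rcases lt_trichotomy (c i) 0 with hi | hi | hi
        · -- lower bound: use cross constraint with j0
          have hcross := hpair i j0 hi hj0pos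
          have htj : t * c j0 = b j0 - f j0 x := by
            rw [htdef, ← hj0]; field_simp
          nlinarith
        · have := hzero i hi; rw [hi]; linarith
        · have hiU : i ∈ U := Finset.mem_filter.mpr ⟨Finset.mem_univ _, hi⟩
          have h1 : t ≤ (b i - f i x) / c i := by
            rw [htdef]; exact Finset.min'_le _ _ (Finset.mem_image_of_mem _ hiU)
          have := (le_div_iff₀ hi).mp h1
          linarith
      · by_cases hLne : L.Nonempty
        · set t : ℝ := (L.image (fun i => (b i - f i x) / c i)).max' (hLne.image _) with htdef
          refine goalform t (fun i => ?_)
          rcases lt_trichotomy (c i) 0 with hi | hi | hi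
          · have hiL : i ∈ L := Finset.mem_filter.mpr ⟨Finset.mem_univ _, hi⟩
            have h1 : (b i - f i x) / c i ≤ t := by
              rw [htdef]
              apply Finset.le_max'
              exact Finset.mem_image_of_mem _ hiL
            have := (div_le_iff_of_neg hi).mp h1
            linarith
          · have := hzero i hi; rw [hi]; linarith
          · exact absurd (Finset.mem_filter.mpr ⟨Finset.mem_univ _, hi⟩ : i ∈ U)
              (fun h => hUne ⟨i, h⟩)
        · refine goalform 0 (fun i => ?_)
          rcases lt_trichotomy (c i) 0 with hi | hi | hi
          · exact absurd (Finset.mem_filter.mpr ⟨Finset.mem_univ _, hi⟩ : i ∈ L)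
              (fun h => hLne ⟨i, h⟩)
          · have := hzero i hi; simpa using this
          · exact absurd (Finset.mem_filter.mpr ⟨Finset.mem_univ _, hi⟩ : i ∈ U)
              (fun h => hUne ⟨i, h⟩)
  rw [key]
  exact hpoly_of_fintype g d


end Aux

section Elim
variable {E : Type*} [AddCommGroup E] [Module ℝ E]

def elimSet (u : E) (P : Set E) : Set E := {x | ∃ t : ℝ, x + t • u ∈ P}

def elimList : List E → Set E → Set E
  | [], P => P
  | u :: l, P => elimList l (elimSet u P)

lemma hpoly_elimList (l : List E) {P : Set E} (h : HPoly P) : HPoly (elimList l P) := by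
  induction l generalizing P with
  | nil => exact h
  | cons u l ih => exact ih (h.elim1 u)

lemma mem_elimList (l : List E) (P : Set E) (x : E) :
    x ∈ elimList l P ↔ ∃ v ∈ Submodule.span ℝ {u | u ∈ l}, x + v ∈ P := by
  induction l generalizing P x with
  | nil =>
    simp [elimList, Submodule.span_empty]
  | cons u l ih =>
    rw [elimList, ih]
    have hins : ({w | w ∈ u :: l} : Set E) = insert u {w | w ∈ l} := by
      ext w; simp [List.mem_cons]
    constructor
    · rintro ⟨v, hv, t, hvt⟩
      refine ⟨t • u + v, ?_, ?_⟩
      · rw [hins, Submodule.mem_span_insert]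
        exact ⟨t, v, hv, rfl⟩
      · convert hvt using 1; abel
    · rintro ⟨w, hw, hxw⟩
      rw [hins, Submodule.mem_span_insert] at hw
      obtain ⟨t, v, hv, rfl⟩ := hw
      refine ⟨v, hv, t, ?_⟩
      convert hxw using 1; abel

end Elim

section Sub
variable {n : ℕ}

lemma single_sum (w : Fin n → ℝ) : ∑ j, w j • (Pi.single j 1 : Fin n → ℝ) = w := by
  funext x
  simp [Finset.sum_apply, Pi.single_apply, mul_ite, Finset.sum_ite_eq']

lemma hpoly_sub {A B : Set (Fin n → ℝ)} (hA : HPoly A) (hB : HPoly B) :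
    HPoly {x : Fin n → ℝ | ∃ a ∈ A, ∃ b ∈ B, x = a - b} := by
  classical
  set C : Set (Fin n → ℝ) := (-LinearMap.id : (Fin n → ℝ) →ₗ[ℝ] (Fin n → ℝ)) ⁻¹' B with hCdef
  have hC : HPoly C := hB.preimage _
  have hCmem : ∀ y : (Fin n → ℝ), y ∈ C ↔ -y ∈ B := by
    intro y
    simp [hCdef, Set.mem_preimage]
  set S : Set ((Fin n → ℝ) × (Fin n → ℝ)) :=
    (LinearMap.fst ℝ (Fin n → ℝ) (Fin n → ℝ) ⁻¹' A) ∩ (LinearMap.snd ℝ (Fin n → ℝ) (Fin n → ℝ) ⁻¹' C) with hSdef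
  have hS : HPoly S := (hA.preimage _).inter (hC.preimage _)
  set l : List ((Fin n → ℝ) × (Fin n → ℝ)) :=
    List.ofFn (fun j : Fin n => ((Pi.single j 1 : (Fin n → ℝ)), -(Pi.single j 1 : (Fin n → ℝ)))) with hldef
  set V := Submodule.span ℝ {u : (Fin n → ℝ) × (Fin n → ℝ) | u ∈ l} with hVdef
  have hVmem : ∀ w : (Fin n → ℝ), ((w, -w) : (Fin n → ℝ) × (Fin n → ℝ)) ∈ V := by
    intro w
    have key : ((w, -w) : (Fin n → ℝ) × (Fin n → ℝ))
        = ∑ j, w j • (((Pi.single j 1 : (Fin n → ℝ)), -(Pi.single j 1 : (Fin n → ℝ))) : (Fin n → ℝ) × (Fin n → ℝ)) := by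
      apply Prod.ext
      · rw [Prod.fst_sum]
        simp only [Prod.smul_fst]
        exact (single_sum w).symm
      · rw [Prod.snd_sum]
        simp only [Prod.smul_snd, smul_neg]
        have hs : (∑ x : Fin n, -(w x • (Pi.single x 1 : Fin n → ℝ)))
            = -∑ x : Fin n, w x • (Pi.single x 1 : Fin n → ℝ) := Finset.sum_neg_distrib _
        rw [hs, single_sum w]
    rw [key]
    refine Submodule.sum_mem _ (fun j _ => Submodule.smul_mem _ _ (Submodule.subset_span ?_))
    simp only [Set.mem_setOf_eq, hldef, List.mem_ofFn]
    exact ⟨j, rfl⟩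
  have hVker : ∀ v ∈ V, v.2 = -v.1 := by
    intro v hv
    have hle : V ≤ LinearMap.ker (LinearMap.fst ℝ (Fin n → ℝ) (Fin n → ℝ) + LinearMap.snd ℝ (Fin n → ℝ) (Fin n → ℝ)) := by
      rw [hVdef, Submodule.span_le]
      rintro p hp
      simp only [Set.mem_setOf_eq, hldef, List.mem_ofFn] at hp
      obtain ⟨j, rfl⟩ := hp
      simp [LinearMap.mem_ker]
    have h0 := hle hv
    simp only [LinearMap.mem_ker, LinearMap.add_apply, LinearMap.fst_apply,
      LinearMap.snd_apply] at h0
    exact (neg_eq_of_add_eq_zero_right h0).symm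
  have hfinal : {x : (Fin n → ℝ) | ∃ a ∈ A, ∃ b ∈ B, x = a - b}
      = (LinearMap.inl ℝ (Fin n → ℝ) (Fin n → ℝ)) ⁻¹' (elimList l S) := by
    ext x
    rw [Set.mem_preimage, LinearMap.inl_apply, mem_elimList]
    constructor
    · rintro ⟨a, ha, b, hb, rfl⟩
      refine ⟨(b, -b), hVmem b, ?_, ?_⟩
      · show (a - b) + b ∈ A
        simpa using ha
      · show (0 : (Fin n → ℝ)) + (-b) ∈ C
        rw [zero_add, hCmem]
        simpa using hb
    · rintro ⟨v, hv, h1, h2⟩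
      have hv2 := hVker v hv
      refine ⟨x + v.1, h1, -v.2, ?_, ?_⟩
      · rw [← hCmem]
        simpa using h2
      · rw [hv2]; abel
  rw [hfinal]
  exact (hpoly_elimList l hS).preimage _

end Sub


lemma Polyhedral.hpoly {n : ℕ} {C : Set (Fin n → ℝ)} (h : Polyhedral C) : HPoly C := by
  obtain ⟨m, a, b, rfl⟩ := h
  refine ⟨m, fun i => ∑ j, a i j • LinearMap.proj j, b, ?_⟩
  ext x
  simp [LinearMap.sum_apply, LinearMap.smul_apply, LinearMap.proj_apply, smul_eq_mul]

lemma HPoly.isClosed {E : Type*} [NormedAddCommGroup E] [NormedSpace ℝ E]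
    [FiniteDimensional ℝ E] {P : Set E} (h : HPoly P) : IsClosed P := by
  obtain ⟨m, f, b, rfl⟩ := h
  have : {x : E | ∀ i, f i x ≤ b i} = ⋂ i, (f i) ⁻¹' Set.Iic (b i) := by
    ext x; simp [Set.mem_iInter]
  rw [this]
  exact isClosed_iInter fun i =>
    IsClosed.preimage (f i).continuous_of_finiteDimensional isClosed_Iic

lemma HPoly.convex {E : Type*} [AddCommGroup E] [Module ℝ E] {P : Set E}
    (h : HPoly P) : Convex ℝ P := by
  obtain ⟨m, f, b, rfl⟩ := h
  have : {x : E | ∀ i, f i x ≤ b i} = ⋂ i, {x | f i x ≤ b i} := by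
    ext x; simp [Set.mem_iInter]
  rw [this]
  exact convex_iInter fun i => convex_halfSpace_le (f i).isLinear _


/-- divergence of Douglas–Rachford iterations in the
inconsistent case, Bauschke–Combettes–Luke: for nonempty polyhedral convex
`A, B ⊆ ℝ^n` with `A ∩ B = ∅` and `T = ½(R_A R_B + id)`, the iterates
`z_{k+1} = T(z_k)` satisfy `‖z_k‖ → ∞`. -/
theorem statement16 {n : ℕ} (A B : Set (Fin n → ℝ))
    (hApoly : Polyhedral A) (hBpoly : Polyhedral B)
    (hAne : A.Nonempty) (hBne : B.Nonempty)
    (hAB : A ∩ B = ∅)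
    (PA PB : (Fin n → ℝ) → (Fin n → ℝ))
    (hPA : IsEuclProjection A PA) (hPB : IsEuclProjection B PB)
    (z : ℕ → Fin n → ℝ)
    (hz : ∀ k, z (k+1) = (1/2 : ℝ) •
      ((((2:ℝ) • PA ((2:ℝ) • PB (z k) - z k) - ((2:ℝ) • PB (z k) - z k))) + z k)) :
    Tendsto (fun k => Real.sqrt (∑ i, (z k i)^2)) atTop atTop := by
  classical
  set D : Set (Fin n → ℝ) := {x | ∃ a ∈ A, ∃ b ∈ B, x = a - b} with hDdef
  have hD : HPoly D := hpoly_sub hApoly.hpoly hBpoly.hpoly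
  have h0D : (0 : Fin n → ℝ) ∉ D := by
    rintro ⟨a, ha, b, hb, hab⟩
    have : a = b := by
      have := hab.symm
      rwa [sub_eq_zero] at this
    have : a ∈ A ∩ B := ⟨ha, this ▸ hb⟩
    rw [hAB] at this
    exact this
  obtain ⟨f, u, hfu, hsep⟩ := geometric_hahn_banach_point_closed hD.convex hD.isClosed h0D
  have hu : 0 < u := by simpa using hfu
  -- key increment inequality
  have key : ∀ k, f (z k) + u ≤ f (z (k+1)) := by
    intro k
    set y := (2:ℝ) • PB (z k) - z k with hy
    have hA' : PA y ∈ A := (hPA y).1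
    have hB' : PB (z k) ∈ B := (hPB (z k)).1
    have hd : PA y - PB (z k) ∈ D := ⟨_, hA', _, hB', rfl⟩
    have hsep' := hsep _ hd
    rw [map_sub] at hsep'
    have hlin : f (z (k+1)) = f (PA y) - f (PB (z k)) + f (z k) := by
      rw [hz k]
      simp only [map_smul, map_add, map_sub, smul_eq_mul]
      ring
    rw [hlin]
    linarith
  have grow : ∀ k : ℕ, f (z 0) + k * u ≤ f (z k) := by
    intro k
    induction k with
    | zero => simp
    | succ k ih =>
      have := key k
      push_cast
      push_cast at ih
      linarith
  have hfne : f ≠ 0 := by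
    intro h0
    obtain ⟨a0, ha0⟩ := hAne
    obtain ⟨b0, hb0⟩ := hBne
    have := hsep _ (⟨a0, ha0, b0, hb0, rfl⟩ : a0 - b0 ∈ D)
    rw [h0] at this
    simp at this
    linarith
  have hfnorm : 0 < ‖f‖ := norm_pos_iff.mpr hfne
  have hbound : ∀ k, f (z k) / ‖f‖ ≤ Real.sqrt (∑ i, (z k i)^2) := by
    intro k
    have h1 : f (z k) ≤ ‖f‖ * ‖z k‖ := by
      calc f (z k) ≤ ‖f (z k)‖ := le_abs_self _
        _ ≤ ‖f‖ * ‖z k‖ := f.le_opNorm _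
    have h2 : ‖z k‖ ≤ Real.sqrt (∑ i, (z k i)^2) := by
      rw [pi_norm_le_iff_of_nonneg (Real.sqrt_nonneg _)]
      intro i
      rw [Real.norm_eq_abs, ← Real.sqrt_sq_eq_abs]
      apply Real.sqrt_le_sqrt
      exact Finset.single_le_sum (fun j _ => sq_nonneg (z k j)) (Finset.mem_univ i)
    rw [div_le_iff₀ hfnorm]
    calc f (z k) ≤ ‖f‖ * ‖z k‖ := h1
      _ ≤ ‖f‖ * Real.sqrt (∑ i, (z k i)^2) := by
          exact mul_le_mul_of_nonneg_left h2 hfnorm.le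
      _ = Real.sqrt (∑ i, (z k i)^2) * ‖f‖ := mul_comm _ _
  have hlow : Tendsto (fun k : ℕ => (f (z 0) + k * u) / ‖f‖) atTop atTop := by
    apply Tendsto.atTop_div_const hfnorm
    apply tendsto_atTop_add_const_left
    exact Tendsto.atTop_mul_const hu tendsto_natCast_atTop_atTop
  refine tendsto_atTop_mono (fun k => ?_) hlow
  calc (f (z 0) + k * u) / ‖f‖ ≤ f (z k) / ‖f‖ := by
        gcongr
        exact grow k
    _ ≤ Real.sqrt (∑ i, (z k i)^2) := hbound k
end

section
/- Let A and B be nonempty polyhedral convex subsets of ℝ^n, let z_0 ∈ ℝ^n, and define z_{k+1} = (1/2)(R_A R_B + id)(z_k) and x_k = Π_B(z_k). Then the sequences {x_k} and {Π_A Π_B z_k} are bounded, and every cluster point of the sequence {(Π_A R_B z_k, x_k)} as well as every cluster point of the sequence {(Π_A x_k, x_k)} is a pair (a, b) with a ∈ A, b ∈ B, and ‖a − b‖ = inf{‖u − v‖ : u ∈ A, v ∈ B}. -/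
open Filter

open Topology

namespace S17
variable {n : ℕ}

noncomputable def ip (x y : Fin n → ℝ) : ℝ := ∑ i, x i * y i
noncomputable def Q (x : Fin n → ℝ) : ℝ := ∑ i, (x i)^2

lemma Q_eq (x : Fin n → ℝ) : Q x = ip x x := by
  simp [Q, ip, sq]

lemma ip_comm (x y : Fin n → ℝ) : ip x y = ip y x := by
  simp [ip, mul_comm]

lemma ip_add_left (x y z : Fin n → ℝ) : ip (x + y) z = ip x z + ip y z := by
  simp [ip, ← Finset.sum_add_distrib, add_mul]

lemma ip_sub_left (x y z : Fin n → ℝ) : ip (x - y) z = ip x z - ip y z := by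
  simp [ip, ← Finset.sum_sub_distrib, sub_mul]

lemma ip_smul_left (c : ℝ) (x y : Fin n → ℝ) : ip (c • x) y = c * ip x y := by
  simp [ip, Finset.mul_sum, mul_assoc]

lemma ip_add_right (x y z : Fin n → ℝ) : ip x (y + z) = ip x y + ip x z := by
  rw [ip_comm, ip_add_left, ip_comm y x, ip_comm z x]

lemma ip_sub_right (x y z : Fin n → ℝ) : ip x (y - z) = ip x y - ip x z := by
  rw [ip_comm, ip_sub_left, ip_comm y x, ip_comm z x]

lemma ip_smul_right (c : ℝ) (x y : Fin n → ℝ) : ip x (c • y) = c * ip x y := by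
  rw [ip_comm, ip_smul_left, ip_comm]

lemma ip_neg_left (x y : Fin n → ℝ) : ip (-x) y = - ip x y := by
  simp [ip, ← Finset.sum_neg_distrib]

lemma Q_nonneg (x : Fin n → ℝ) : 0 ≤ Q x :=
  Finset.sum_nonneg fun i _ => sq_nonneg _

lemma Q_eq_zero {x : Fin n → ℝ} (h : Q x = 0) : x = 0 := by
  funext i
  have := (Finset.sum_eq_zero_iff_of_nonneg (fun i _ => sq_nonneg (x i))).1 h i (Finset.mem_univ i)
  exact pow_eq_zero_iff (by norm_num) |>.1 this

lemma Q_sub (x y : Fin n → ℝ) : Q (x - y) = Q x - 2 * ip x y + Q y := by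
  rw [Q_eq, Q_eq, Q_eq, ip_sub_left, ip_sub_right, ip_sub_right, ip_comm y x]; ring

lemma Q_add (x y : Fin n → ℝ) : Q (x + y) = Q x + 2 * ip x y + Q y := by
  rw [Q_eq, Q_eq, Q_eq, ip_add_left, ip_add_right, ip_add_right, ip_comm y x]; ring

lemma Q_smul (c : ℝ) (x : Fin n → ℝ) : Q (c • x) = c^2 * Q x := by
  rw [Q_eq, Q_eq, ip_smul_left, ip_smul_right]; ring

lemma Q_neg (x : Fin n → ℝ) : Q (-x) = Q x := by
  rw [Q_eq, Q_eq, ip_neg_left, ip_comm, ip_neg_left]; ring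

lemma parallelogram (u w : Fin n → ℝ) :
    Q ((1/2 : ℝ) • (u + w)) + Q ((1/2 : ℝ) • (u - w)) = (Q u + Q w) / 2 := by
  rw [Q_smul, Q_smul, Q_add, Q_sub]; ring



lemma Polyhedral.convex {C : Set (Fin n → ℝ)} (h : Polyhedral C) : Convex ℝ C := by
  obtain ⟨m, a, b, rfl⟩ := h
  intro x hx y hy s t hs ht hst
  intro i
  have hsum : ∑ j, a i j * (s • x + t • y) j
      = s * (∑ j, a i j * x j) + t * (∑ j, a i j * y j) := by
    rw [Finset.mul_sum, Finset.mul_sum, ← Finset.sum_add_distrib]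
    refine Finset.sum_congr rfl fun j _ => ?_
    simp [Pi.add_apply]; ring
  calc ∑ j, a i j * (s • x + t • y) j
      = s * (∑ j, a i j * x j) + t * (∑ j, a i j * y j) := hsum
    _ ≤ s * b i + t * b i :=
        add_le_add (mul_le_mul_of_nonneg_left (hx i) hs) (mul_le_mul_of_nonneg_left (hy i) ht)
    _ = b i := by rw [← add_mul, hst, one_mul]

lemma Polyhedral.isClosed {C : Set (Fin n → ℝ)} (h : Polyhedral C) : IsClosed C := by
  obtain ⟨m, a, b, rfl⟩ := h
  have : {x : Fin n → ℝ | ∀ i, ∑ j, a i j * x j ≤ b i}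
      = ⋂ i, {x : Fin n → ℝ | ∑ j, a i j * x j ≤ b i} := by
    ext x; simp
  rw [this]
  exact isClosed_iInter fun i =>
    isClosed_le (by exact continuous_finset_sum _ fun j _ => continuous_const.mul (continuous_apply j))
      continuous_const


lemma min_varineq {C : Set (Fin n → ℝ)} (hC : Convex ℝ C) {x q : Fin n → ℝ} (hq : q ∈ C)
    (hmin : ∀ w ∈ C, Q (x - q) ≤ Q (x - w)) {w : Fin n → ℝ} (hw : w ∈ C) :
    ip (x - q) (w - q) ≤ 0 := by
  by_contra hcon
  push_neg at hcon
  have hQd : 0 < Q (w - q) := by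
    rcases (Q_nonneg (w - q)).eq_or_lt with h | h
    · exfalso
      have hd0 : w - q = 0 := Q_eq_zero h.symm
      rw [hd0] at hcon
      have hz : ip (x - q) 0 = 0 := by
        have := ip_sub_right (x - q) 0 0
        simpa using this
      linarith
    · exact h
  have key : ∀ t : ℝ, 0 < t → t ≤ 1 → Q (x - q) ≤ Q ((x - q) - t • (w - q)) := by
    intro t ht0 ht1
    have hmem : q + t • (w - q) ∈ C := by
      have h2 := hC hq hw (by linarith : (0:ℝ) ≤ 1 - t) ht0.le (by ring)
      have he : (1 - t) • q + t • w = q + t • (w - q) := by module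
      rwa [he] at h2
    have h2 : Q (x - q) ≤ Q (x - (q + t • (w - q))) := hmin _ hmem
    have h3 : x - (q + t • (w - q)) = (x - q) - t • (w - q) := by module
    rwa [h3] at h2
  set r := ip (x - q) (w - q) / Q (w - q) with hr
  have hrpos : 0 < r := div_pos hcon hQd
  have ht0 : 0 < min 1 r := lt_min one_pos hrpos
  have ht1 : min 1 r ≤ 1 := min_le_left _ _
  have h2 := key _ ht0 ht1
  rw [Q_sub (x - q) (min 1 r • (w - q)), ip_smul_right, Q_smul] at h2
  have h4 : 2 * ip (x - q) (w - q) ≤ min 1 r * Q (w - q) := by nlinarith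
  have h5 : min 1 r * Q (w - q) ≤ ip (x - q) (w - q) := by
    have hle : min 1 r ≤ r := min_le_right _ _
    calc min 1 r * Q (w - q) ≤ r * Q (w - q) := mul_le_mul_of_nonneg_right hle hQd.le
      _ = ip (x - q) (w - q) := by rw [hr]; field_simp
  linarith

lemma varineq_min {C : Set (Fin n → ℝ)} {x q : Fin n → ℝ}
    (h : ∀ w ∈ C, ip (x - q) (w - q) ≤ 0) {w : Fin n → ℝ} (hw : w ∈ C) :
    Q (x - q) ≤ Q (x - w) := by
  have hxw : x - w = (x - q) - (w - q) := by module
  rw [hxw, Q_sub (x - q) (w - q)]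
  have := h w hw
  have := Q_nonneg (w - q)
  linarith

lemma proj_Qmin {C : Set (Fin n → ℝ)} {P : (Fin n → ℝ) → (Fin n → ℝ)}
    (hP : IsEuclProjection C P) (x : Fin n → ℝ) {w : Fin n → ℝ} (hw : w ∈ C) :
    Q (x - P x) ≤ Q (x - w) := by
  have := (hP x).2 w hw
  simpa [Q] using this

lemma proj_varineq {C : Set (Fin n → ℝ)} {P : (Fin n → ℝ) → (Fin n → ℝ)}
    (hP : IsEuclProjection C P) (hC : Convex ℝ C) (x : Fin n → ℝ) {w : Fin n → ℝ} (hw : w ∈ C) :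
    ip (x - P x) (w - P x) ≤ 0 :=
  min_varineq hC (hP x).1 (fun w hw => proj_Qmin hP x hw) hw

lemma proj_eq {C : Set (Fin n → ℝ)} {P : (Fin n → ℝ) → (Fin n → ℝ)}
    (hP : IsEuclProjection C P) {x q : Fin n → ℝ} (hq : q ∈ C)
    (h : ∀ w ∈ C, ip (x - q) (w - q) ≤ 0) : P x = q := by
  have h1 : Q (x - q) ≤ Q (x - P x) := varineq_min h (hP x).1
  have h2 : Q (x - P x) ≤ Q (x - q) := proj_Qmin hP x hq
  have h3 : x - P x = (x - q) - (P x - q) := by module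
  have h4 := h (P x) (hP x).1
  rw [h3, Q_sub] at h2
  have h5 : Q (P x - q) ≤ 0 := by linarith
  have h6 : Q (P x - q) = 0 := le_antisymm h5 (Q_nonneg _)
  have := Q_eq_zero h6
  have : P x - q = 0 := this
  funext i
  have := congrFun this i
  simpa [sub_eq_zero] using this

lemma proj_firm {C : Set (Fin n → ℝ)} {P : (Fin n → ℝ) → (Fin n → ℝ)}
    (hP : IsEuclProjection C P) (hC : Convex ℝ C) (x y : Fin n → ℝ) :
    Q (P x - P y) ≤ ip (P x - P y) (x - y) := by
  have h1 := proj_varineq hP hC x (hP y).1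
  have h2 := proj_varineq hP hC y (hP x).1
  simp only [ip_sub_left, ip_sub_right, Q_eq] at *
  linarith [ip_comm x (P x), ip_comm x (P y), ip_comm y (P x), ip_comm y (P y),
    ip_comm (P x) (P y), ip_comm x y]

lemma proj_nonexp {C : Set (Fin n → ℝ)} {P : (Fin n → ℝ) → (Fin n → ℝ)}
    (hP : IsEuclProjection C P) (hC : Convex ℝ C) (x y : Fin n → ℝ) :
    Q (P x - P y) ≤ Q (x - y) := by
  have h1 := proj_firm hP hC x y
  have h2 := Q_nonneg ((P x - P y) - (x - y))
  rw [Q_sub] at h2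
  linarith

lemma refl_nonexp {C : Set (Fin n → ℝ)} {P : (Fin n → ℝ) → (Fin n → ℝ)}
    (hP : IsEuclProjection C P) (hC : Convex ℝ C) (x y : Fin n → ℝ) :
    Q (((2:ℝ) • P x - x) - ((2:ℝ) • P y - y)) ≤ Q (x - y) := by
  have h1 := proj_firm hP hC x y
  have hid : ((2:ℝ) • P x - x) - ((2:ℝ) • P y - y) = (2:ℝ) • (P x - P y) - (x - y) := by module
  rw [hid, Q_sub, ip_smul_left, Q_smul]
  nlinarith




lemma polyhedral_of_fintype {ι : Type} [Fintype ι] (a : ι → Fin n → ℝ) (b : ι → ℝ) :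
    Polyhedral {x : Fin n → ℝ | ∀ i, ∑ j, a i j * x j ≤ b i} := by
  classical
  refine ⟨Fintype.card ι, fun k => a ((Fintype.equivFin ι).symm k),
    fun k => b ((Fintype.equivFin ι).symm k), ?_⟩
  ext x
  constructor
  · intro h k; exact h _
  · intro h i
    have := h (Fintype.equivFin ι i)
    simpa using this

lemma exists_t_iff {m : ℕ} (c r : Fin m → ℝ) :
    (∃ t : ℝ, ∀ i, c i * t ≤ r i) ↔
      ((∀ i, c i = 0 → 0 ≤ r i) ∧ ∀ i j, c i < 0 → 0 < c j → c i * r j ≤ c j * r i) := by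
  classical
  constructor
  · rintro ⟨t, ht⟩
    constructor
    · intro i h0; have := ht i; rw [h0] at this; linarith
    · intro i j hi hj
      have h1 := ht i
      have h2 := ht j
      nlinarith
  · rintro ⟨h0, hpair⟩
    by_cases hneg : ∃ i, c i < 0
    · obtain ⟨i0, hi0⟩ := hneg
      set S := Finset.univ.filter (fun i => c i < 0) with hS
      have hSne : S.Nonempty := ⟨i0, by simp [hS, hi0]⟩
      refine ⟨S.sup' hSne (fun i => r i / c i), ?_⟩
      intro i
      rcases lt_trichotomy (c i) 0 with h | h | h
      · have hle : r i / c i ≤ S.sup' hSne (fun i => r i / c i) :=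
          Finset.le_sup' (fun i => r i / c i) (show i ∈ S by rw [hS]; exact Finset.mem_filter.2 ⟨Finset.mem_univ _, h⟩)
        have h2 : c i * (S.sup' hSne fun i => r i / c i) ≤ c i * (r i / c i) :=
          mul_le_mul_of_nonpos_left hle h.le
        calc c i * (S.sup' hSne fun i => r i / c i) ≤ c i * (r i / c i) := h2
          _ = r i := by rw [mul_comm]; exact div_mul_cancel₀ _ (by intro h0; rw [h0] at h; exact lt_irrefl 0 h)
      · rw [h]; simpa using h0 i h
      · have hle : S.sup' hSne (fun j => r j / c j) ≤ r i / c i := by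
          apply Finset.sup'_le
          intro j hj
          have hj' : c j < 0 := by simpa [hS] using hj
          have hp := hpair j i hj' h
          have hXj : r j / c j * c j = r j := div_mul_cancel₀ _ hj'.ne
          rw [le_div_iff₀ h]
          nlinarith [hXj]
        have h2 : c i * (S.sup' hSne fun j => r j / c j) ≤ c i * (r i / c i) :=
          mul_le_mul_of_nonneg_left hle h.le
        calc c i * (S.sup' hSne fun j => r j / c j) ≤ c i * (r i / c i) := h2
          _ = r i := by rw [mul_comm]; exact div_mul_cancel₀ _ (by intro h0; rw [h0] at h; exact lt_irrefl 0 h)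
    · push_neg at hneg
      by_cases hpos : ∃ i, 0 < c i
      · obtain ⟨i0, hi0⟩ := hpos
        set S := Finset.univ.filter (fun i => 0 < c i) with hS
        have hSne : S.Nonempty := ⟨i0, by simp [hS, hi0]⟩
        refine ⟨S.inf' hSne (fun i => r i / c i), ?_⟩
        intro i
        rcases lt_trichotomy (c i) 0 with h | h | h
        · exact absurd h (not_lt.2 (hneg i))
        · rw [h]; simpa using h0 i h
        · have hle : S.inf' hSne (fun j => r j / c j) ≤ r i / c i :=
            Finset.inf'_le (fun i => r i / c i) (show i ∈ S by rw [hS]; exact Finset.mem_filter.2 ⟨Finset.mem_univ _, h⟩)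
          have h2 : c i * (S.inf' hSne fun j => r j / c j) ≤ c i * (r i / c i) :=
            mul_le_mul_of_nonneg_left hle h.le
          calc c i * (S.inf' hSne fun j => r j / c j) ≤ c i * (r i / c i) := h2
            _ = r i := by rw [mul_comm]; exact div_mul_cancel₀ _ (by intro h0; rw [h0] at h; exact lt_irrefl 0 h)
      · push_neg at hpos
        refine ⟨0, fun i => ?_⟩
        have hci : c i = 0 := le_antisymm (hpos i) (hneg i)
        rw [hci]; simpa using h0 i hci

lemma proj_one {k : ℕ} {P : Set (Fin (k+1) → ℝ)} (h : Polyhedral P) :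
    Polyhedral {x : Fin k → ℝ | ∃ t, Fin.snoc x t ∈ P} := by
  classical
  obtain ⟨m, a, b, rfl⟩ := h
  set c : Fin m → ℝ := fun i => a i (Fin.last k) with hc
  set A : Fin m → Fin k → ℝ := fun i j => a i j.castSucc with hA
  have key : ∀ (x : Fin k → ℝ) (t : ℝ) (i : Fin m),
      ∑ j, a i j * (Fin.snoc x t : Fin (k+1) → ℝ) j
        = (∑ j : Fin k, A i j * x j) + c i * t := by
    intro x t i
    rw [Fin.sum_univ_castSucc]
    simp [hA, hc]
  set A' : (Fin m ⊕ Fin m × Fin m) → Fin k → ℝ :=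
    Sum.elim (fun i => if c i = 0 then A i else 0)
      (fun p => if c p.1 < 0 ∧ 0 < c p.2 then
        (fun l => c p.2 * A p.1 l - c p.1 * A p.2 l) else 0) with hA'
  set b' : (Fin m ⊕ Fin m × Fin m) → ℝ :=
    Sum.elim (fun i => if c i = 0 then b i else 0)
      (fun p => if c p.1 < 0 ∧ 0 < c p.2 then c p.2 * b p.1 - c p.1 * b p.2 else 0) with hb'
  have hpoly := polyhedral_of_fintype A' b'
  have hsum : ∀ (x : Fin k → ℝ) (i j : Fin m),
      ∑ l, (c j * A i l - c i * A j l) * x l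
        = c j * (∑ l, A i l * x l) - c i * (∑ l, A j l * x l) := by
    intro x i j
    rw [Finset.mul_sum, Finset.mul_sum, ← Finset.sum_sub_distrib]
    exact Finset.sum_congr rfl fun l _ => by ring
  have hset : {x : Fin k → ℝ | ∃ t, (Fin.snoc x t : Fin (k+1) → ℝ) ∈
        {y : Fin (k+1) → ℝ | ∀ i, ∑ j, a i j * y j ≤ b i}}
      = {x : Fin k → ℝ | ∀ i, ∑ j, A' i j * x j ≤ b' i} := by
    ext x
    simp only [Set.mem_setOf_eq]
    have hiff : (∃ t, ∀ i, ∑ j, a i j * (Fin.snoc x t : Fin (k+1) → ℝ) j ≤ b i)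
        ↔ ∃ t, ∀ i, c i * t ≤ (b i - ∑ j, A i j * x j) := by
      constructor
      · rintro ⟨t, ht⟩; exact ⟨t, fun i => by have := ht i; rw [key] at this; linarith⟩
      · rintro ⟨t, ht⟩; exact ⟨t, fun i => by rw [key]; have := ht i; linarith⟩
    rw [hiff, exists_t_iff]
    constructor
    · rintro ⟨h1, h2⟩ i'
      rcases i' with i | ⟨i, j⟩
      · simp only [hA', hb', Sum.elim_inl]
        by_cases h : c i = 0
        · rw [if_pos h, if_pos h]
          have := h1 i h; linarith
        · rw [if_neg h, if_neg h]; simp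
      · simp only [hA', hb', Sum.elim_inr]
        by_cases h : c i < 0 ∧ 0 < c j
        · rw [if_pos h, if_pos h]
          have := h2 i j h.1 h.2
          rw [hsum]
          nlinarith
        · rw [if_neg h, if_neg h]; simp
    · intro h'
      constructor
      · intro i hci
        have := h' (Sum.inl i)
        simp only [hA', hb', Sum.elim_inl, if_pos hci] at this
        linarith
      · intro i j hi hj
        have := h' (Sum.inr (i, j))
        simp only [hA', hb', Sum.elim_inr, if_pos (And.intro hi hj)] at this
        rw [hsum] at this
        nlinarith
  rw [hset]
  exact hpoly

lemma proj_many {k : ℕ} : ∀ (l : ℕ) (P : Set (Fin (k+l) → ℝ)), Polyhedral P →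
    Polyhedral {x : Fin k → ℝ | ∃ z : Fin (k+l) → ℝ,
      (∀ j : Fin k, z (Fin.castAdd l j) = x j) ∧ z ∈ P}
  | 0, P, hP => by
    have hs : {x : Fin k → ℝ | ∃ z : Fin (k+0) → ℝ,
        (∀ j : Fin k, z (Fin.castAdd 0 j) = x j) ∧ z ∈ P} = P := by
      ext x
      constructor
      · rintro ⟨z, hz1, hz2⟩
        have hzx : z = x := funext fun j => by
          have := hz1 j
          rwa [show Fin.castAdd 0 j = j from Fin.ext rfl] at this
        rwa [← hzx]
      · intro hx
        exact ⟨x, fun j => by rw [show Fin.castAdd 0 j = j from Fin.ext rfl], hx⟩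
    rw [hs]; exact hP
  | (l+1), P, hP => by
    have h1 : Polyhedral {w : Fin (k+l) → ℝ | ∃ t, Fin.snoc w t ∈ P} := proj_one hP
    have h2 := proj_many l _ h1
    have hs : {x : Fin k → ℝ | ∃ z : Fin (k+(l+1)) → ℝ,
          (∀ j : Fin k, z (Fin.castAdd (l+1) j) = x j) ∧ z ∈ P}
        = {x : Fin k → ℝ | ∃ w : Fin (k+l) → ℝ,
          (∀ j : Fin k, w (Fin.castAdd l j) = x j) ∧
            w ∈ {w : Fin (k+l) → ℝ | ∃ t, Fin.snoc w t ∈ P}} := by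
      ext x
      constructor
      · rintro ⟨z, hz1, hz2⟩
        refine ⟨Fin.init z, fun j => ?_, z (Fin.last (k+l)), ?_⟩
        · show z ((Fin.castAdd l j).castSucc) = x j
          rw [show (Fin.castAdd l j).castSucc = Fin.castAdd (l+1) j from Fin.ext rfl]
          exact hz1 j
        · have he : Fin.snoc (Fin.init z) (z (Fin.last (k+l))) = z := Fin.snoc_init_self z
          rw [he]; exact hz2
      · rintro ⟨w, hw1, t, ht⟩
        refine ⟨Fin.snoc w t, fun j => ?_, ht⟩
        rw [show Fin.castAdd (l+1) j = (Fin.castAdd l j).castSucc from Fin.ext rfl,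
          Fin.snoc_castSucc]
        exact hw1 j
    rw [hs]; exact h2

lemma diff_polyhedral {A B : Set (Fin n → ℝ)} (hA : Polyhedral A) (hB : Polyhedral B) :
    Polyhedral {d : Fin n → ℝ | ∃ a ∈ A, ∃ b ∈ B, d = b - a} := by
  classical
  obtain ⟨mA, aA, bA, rfl⟩ := hA
  obtain ⟨mB, aB, bB, rfl⟩ := hB
  set coef : (Fin mA ⊕ Fin mB) → Fin (n+n) → ℝ :=
    Sum.elim (fun i => Fin.append (fun _ => (0:ℝ)) (aA i)) (fun i => Fin.append (aB i) (aB i))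
    with hcoef
  set rhs : (Fin mA ⊕ Fin mB) → ℝ := Sum.elim bA bB with hrhs
  have hP := polyhedral_of_fintype coef rhs
  have h2 := proj_many n _ hP
  have hsum1 : ∀ (i : Fin mA) (z : Fin (n+n) → ℝ),
      ∑ j, coef (Sum.inl i) j * z j = ∑ j : Fin n, aA i j * z (Fin.natAdd n j) := by
    intro i z
    have e1 : ∀ j : Fin n, coef (Sum.inl i) (Fin.castAdd n j) * z (Fin.castAdd n j) = 0 := by
      intro j; rw [hcoef, Sum.elim_inl, Fin.append_left]; ring
    have e2 : ∀ j : Fin n, coef (Sum.inl i) (Fin.natAdd n j) * z (Fin.natAdd n j)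
        = aA i j * z (Fin.natAdd n j) := by
      intro j; rw [hcoef, Sum.elim_inl, Fin.append_right]
    rw [Fin.sum_univ_add, Finset.sum_eq_zero fun j _ => e1 j,
      Finset.sum_congr rfl fun j _ => e2 j, zero_add]
  have hsum2 : ∀ (i : Fin mB) (z : Fin (n+n) → ℝ),
      ∑ j, coef (Sum.inr i) j * z j
        = ∑ j : Fin n, aB i j * (z (Fin.castAdd n j) + z (Fin.natAdd n j)) := by
    intro i z
    have e1 : ∀ j : Fin n, coef (Sum.inr i) (Fin.castAdd n j) * z (Fin.castAdd n j)
        = aB i j * z (Fin.castAdd n j) := by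
      intro j; rw [hcoef, Sum.elim_inr, Fin.append_left]
    have e2 : ∀ j : Fin n, coef (Sum.inr i) (Fin.natAdd n j) * z (Fin.natAdd n j)
        = aB i j * z (Fin.natAdd n j) := by
      intro j; rw [hcoef, Sum.elim_inr, Fin.append_right]
    rw [Fin.sum_univ_add, Finset.sum_congr rfl fun j _ => e1 j,
      Finset.sum_congr rfl fun j _ => e2 j, ← Finset.sum_add_distrib]
    exact Finset.sum_congr rfl fun j _ => by ring
  have hset : {d : Fin n → ℝ | ∃ a ∈ {x : Fin n → ℝ | ∀ i, ∑ j, aA i j * x j ≤ bA i},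
        ∃ b ∈ {x : Fin n → ℝ | ∀ i, ∑ j, aB i j * x j ≤ bB i}, d = b - a}
      = {x : Fin n → ℝ | ∃ z : Fin (n+n) → ℝ,
          (∀ j : Fin n, z (Fin.castAdd n j) = x j) ∧
            z ∈ {z : Fin (n+n) → ℝ | ∀ i, ∑ j, coef i j * z j ≤ rhs i}} := by
    ext d
    simp only [Set.mem_setOf_eq]
    constructor
    · rintro ⟨av, hav, bv, hbv, rfl⟩
      refine ⟨Fin.append (bv - av) av, fun j => Fin.append_left _ _ _, ?_⟩
      intro i'
      rcases i' with i | i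
      · rw [hsum1]
        rw [show (∑ j : Fin n, aA i j * (Fin.append (bv - av) av : Fin (n+n) → ℝ) (Fin.natAdd n j))
            = ∑ j : Fin n, aA i j * av j from
          Finset.sum_congr rfl fun j _ => by rw [Fin.append_right]]
        exact hav i
      · rw [hsum2]
        have : ∀ j, (Fin.append (bv - av) av : Fin (n+n) → ℝ) (Fin.castAdd n j)
            + (Fin.append (bv - av) av : Fin (n+n) → ℝ) (Fin.natAdd n j) = bv j := by
          intro j
          rw [Fin.append_left, Fin.append_right]
          simp
        simp only [this]
        exact hbv i
    · rintro ⟨z, hz1, hz2⟩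
      refine ⟨fun j => z (Fin.natAdd n j), ?_, fun j => d j + z (Fin.natAdd n j), ?_, ?_⟩
      · intro i
        have := hz2 (Sum.inl i)
        rwa [hsum1] at this
      · intro i
        have := hz2 (Sum.inr i)
        rw [hsum2] at this
        simpa only [hz1, hrhs, Sum.elim_inr] using this
      · funext j; simp
  rw [hset]
  exact h2




lemma ip_neg_right (x y : Fin n → ℝ) : ip x (-y) = - ip x y := by
  rw [ip_comm, ip_neg_left, ip_comm]

lemma Q_continuous : Continuous (Q : (Fin n → ℝ) → ℝ) :=
  continuous_finset_sum _ fun i _ => (continuous_apply i).pow 2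

lemma exists_min_Q {D : Set (Fin n → ℝ)} (hDc : IsClosed D) (hDne : D.Nonempty) :
    ∃ v ∈ D, ∀ c ∈ D, Q v ≤ Q c := by
  obtain ⟨d0, hd0⟩ := hDne
  set K := D ∩ {x | Q x ≤ Q d0} with hK
  have hKne : K.Nonempty := ⟨d0, hd0, by show Q d0 ≤ Q d0; exact le_rfl⟩
  have hKc : IsClosed K := hDc.inter (isClosed_le Q_continuous continuous_const)
  have hKb : Bornology.IsBounded K := by
    rw [Metric.isBounded_iff_subset_closedBall 0]
    refine ⟨Real.sqrt (Q d0), fun x hx => ?_⟩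
    rw [Metric.mem_closedBall]
    rw [dist_pi_le_iff (Real.sqrt_nonneg _)]
    intro i
    rw [Real.dist_eq, Pi.zero_apply, sub_zero, ← Real.sqrt_sq_eq_abs]
    apply Real.sqrt_le_sqrt
    have h1 : (x i)^2 ≤ Q x :=
      Finset.single_le_sum (f := fun i => (x i)^2) (fun i _ => sq_nonneg _) (Finset.mem_univ i)
    exact le_trans h1 hx.2
  have hKcomp : IsCompact K := Metric.isCompact_of_isClosed_isBounded hKc hKb
  obtain ⟨v, hvK, hvmin⟩ := hKcomp.exists_isMinOn hKne Q_continuous.continuousOn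
  rw [isMinOn_iff] at hvmin
  refine ⟨v, hvK.1, fun c hc => ?_⟩
  by_cases h : Q c ≤ Q d0
  · exact hvmin c ⟨hc, h⟩
  · push_neg at h
    have h2 : Q v ≤ Q d0 := hvK.2
    linarith

lemma tendsto_of_Qtendsto {f : ℕ → Fin n → ℝ} {L : Fin n → ℝ}
    (h : Tendsto (fun k => Q (f k - L)) atTop (𝓝 0)) : Tendsto f atTop (𝓝 L) := by
  rw [tendsto_pi_nhds]
  intro i
  rw [tendsto_iff_norm_sub_tendsto_zero]
  have hg : Tendsto (fun k => Real.sqrt (Q (f k - L))) atTop (𝓝 0) := by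
    have := (Real.continuous_sqrt.tendsto 0).comp h
    simpa [Function.comp_def] using this
  refine squeeze_zero (fun k => norm_nonneg _) (fun k => ?_) hg
  rw [Real.norm_eq_abs, ← Real.sqrt_sq_eq_abs]
  apply Real.sqrt_le_sqrt
  have h1 : (f k i - L i)^2 ≤ Q (f k - L) := by
    have := Finset.single_le_sum (f := fun j => ((f k - L) j)^2)
      (fun j _ => sq_nonneg _) (Finset.mem_univ i)
    simpa [Q] using this
  exact h1

lemma Q_le_two (x c : Fin n → ℝ) : Q x ≤ 2 * Q c + 2 * Q (x - c) := by
  have h0 := Q_nonneg (c - (x - c))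
  rw [Q_sub] at h0
  have h1 : x = c + (x - c) := by module
  have h2 : Q x = Q (c + (x - c)) := by rw [← h1]
  rw [h2, Q_add]
  linarith

lemma cluster_aux {A B : Set (Fin n → ℝ)} (hAc : IsClosed A) (hBc : IsClosed B)
    {v : Fin n → ℝ} {g : ℕ → (Fin n → ℝ) × (Fin n → ℝ)}
    (h1 : ∀ k, (g k).1 ∈ A) (h2 : ∀ k, (g k).2 ∈ B)
    (hlim : Tendsto (fun k => (g k).2 - (g k).1) atTop (𝓝 v))
    {p : (Fin n → ℝ) × (Fin n → ℝ)} (hp : MapClusterPt p atTop g) :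
    p.1 ∈ A ∧ p.2 ∈ B ∧ p.2 - p.1 = v := by
  have hc1 : MapClusterPt p.1 atTop (fun k => (g k).1) :=
    hp.continuousAt_comp (f := Prod.fst) continuous_fst.continuousAt
  have hc2 : MapClusterPt p.2 atTop (fun k => (g k).2) :=
    hp.continuousAt_comp (f := Prod.snd) continuous_snd.continuousAt
  have hmemA : p.1 ∈ A := by
    rw [← hAc.closure_eq, mem_closure_iff_clusterPt]
    exact hc1.clusterPt.mono (Filter.le_principal_iff.2
      (Filter.mem_map.2 (Filter.Eventually.of_forall h1)))
  have hmemB : p.2 ∈ B := by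
    rw [← hBc.closure_eq, mem_closure_iff_clusterPt]
    exact hc2.clusterPt.mono (Filter.le_principal_iff.2
      (Filter.mem_map.2 (Filter.Eventually.of_forall h2)))
  have hc3 : MapClusterPt (p.2 - p.1) atTop (fun k => (g k).2 - (g k).1) :=
    hp.continuousAt_comp (f := fun q : (Fin n → ℝ) × (Fin n → ℝ) => q.2 - q.1)
      ((continuous_snd.sub continuous_fst).continuousAt)
  have h4 : ClusterPt (p.2 - p.1) (𝓝 v) := hc3.clusterPt.mono hlim
  exact ⟨hmemA, hmemB, eq_of_nhds_neBot h4⟩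

end S17

open S17 in
/-- Theorem 1, after Bauschke–Combettes–Luke: for nonempty
polyhedral `A, B ⊆ ℝ^n`, Douglas–Rachford iterates `z_{k+1} = ½(R_A R_B + id)(z_k)`
and `x_k = Π_B(z_k)` produce bounded sequences `{x_k}` and `{Π_A Π_B z_k}`, and
every cluster point of `{(Π_A R_B z_k, x_k)}` or of `{(Π_A x_k, x_k)}` is a pair
`(a, b) ∈ A × B` attaining `inf{‖u − v‖ : u ∈ A, v ∈ B}`. -/
theorem statement17 {n : ℕ} (A B : Set (Fin n → ℝ))
    (hApoly : Polyhedral A) (hBpoly : Polyhedral B)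
    (hAne : A.Nonempty) (hBne : B.Nonempty)
    (PA PB : (Fin n → ℝ) → (Fin n → ℝ))
    (hPA : IsEuclProjection A PA) (hPB : IsEuclProjection B PB)
    (z : ℕ → Fin n → ℝ)
    (hz : ∀ k, z (k+1) = (1/2 : ℝ) •
      ((((2:ℝ) • PA ((2:ℝ) • PB (z k) - z k) - ((2:ℝ) • PB (z k) - z k))) + z k)) :
    (∃ M : ℝ, ∀ k, Real.sqrt (∑ i, (PB (z k) i)^2) ≤ M) ∧
    (∃ M : ℝ, ∀ k, Real.sqrt (∑ i, (PA (PB (z k)) i)^2) ≤ M) ∧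
    ∀ p : (Fin n → ℝ) × (Fin n → ℝ),
      (MapClusterPt p atTop (fun k => (PA ((2:ℝ) • PB (z k) - z k), PB (z k))) ∨
       MapClusterPt p atTop (fun k => (PA (PB (z k)), PB (z k)))) →
      p.1 ∈ A ∧ p.2 ∈ B ∧
        ∀ u ∈ A, ∀ v ∈ B, ∑ i, (p.1 i - p.2 i)^2 ≤ ∑ i, (u i - v i)^2 := by
  classical
  have hAconv := Polyhedral.convex hApoly
  have hBconv := Polyhedral.convex hBpoly
  have hAclosed := Polyhedral.isClosed hApoly
  have hBclosed := Polyhedral.isClosed hBpoly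
  -- the difference set and its minimal norm element
  set D : Set (Fin n → ℝ) := {d : Fin n → ℝ | ∃ a ∈ A, ∃ b ∈ B, d = b - a} with hD
  have hDpoly : Polyhedral D := diff_polyhedral hApoly hBpoly
  have hDconv : Convex ℝ D := Polyhedral.convex hDpoly
  have hDclosed : IsClosed D := Polyhedral.isClosed hDpoly
  have hDne : D.Nonempty := by
    obtain ⟨a0, ha0⟩ := hAne
    obtain ⟨b0, hb0⟩ := hBne
    exact ⟨b0 - a0, a0, ha0, b0, hb0, rfl⟩
  obtain ⟨v, hvD, hvmin⟩ := exists_min_Q hDclosed hDne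
  obtain ⟨a, ha, b, hb, hvba⟩ := hvD
  have hvD' : v ∈ D := ⟨a, ha, b, hb, hvba⟩
  have hab : b = a + v := by rw [hvba]; module
  -- variational inequality for v
  have hv : ∀ c ∈ D, 0 ≤ ip v (c - v) := by
    intro c hc
    have hmin0 : ∀ w ∈ D, Q ((0 : Fin n → ℝ) - v) ≤ Q ((0 : Fin n → ℝ) - w) := by
      intro w hw
      rw [zero_sub, zero_sub, Q_neg, Q_neg]
      exact hvmin w hw
    have h := min_varineq hDconv hvD' hmin0 hc
    rw [zero_sub, ip_neg_left] at h
    linarith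
  have hvBge : ∀ w ∈ B, 0 ≤ ip v (w - b) := by
    intro w hw
    have hc : w - a ∈ D := ⟨a, ha, w, hw, rfl⟩
    have h := hv _ hc
    have he : (w - a) - v = w - b := by rw [hab]; module
    rwa [he] at h
  have hvAle : ∀ u ∈ A, ip v (u - a) ≤ 0 := by
    intro u hu
    have hc : b - u ∈ D := ⟨u, hu, b, hb, rfl⟩
    have h := hv _ hc
    have he : (b - u) - v = -(u - a) := by rw [hab]; module
    rw [he, ip_neg_right] at h
    linarith
  -- the auxiliary trajectory
  set y : ℕ → Fin n → ℝ := fun k => a - (k : ℝ) • v with hy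
  have hyB : ∀ k : ℕ, PB (y k) = b := by
    intro k
    apply proj_eq hPB hb
    intro w hw
    have he : y k - b = (-(1+(k:ℝ))) • v := by rw [hy]; simp only; rw [hab]; module
    rw [he, ip_smul_left]
    have h1 := hvBge w hw
    nlinarith [Nat.cast_nonneg (α := ℝ) k]
  have hyA : ∀ k : ℕ, PA ((2:ℝ) • PB (y k) - y k) = a := by
    intro k
    rw [hyB k]
    apply proj_eq hPA ha
    intro u hu
    have he : ((2:ℝ) • b - y k) - a = ((2:ℝ)+(k:ℝ)) • v := by rw [hy]; simp only; rw [hab]; module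
    rw [he, ip_smul_left]
    have h1 := hvAle u hu
    nlinarith [Nat.cast_nonneg (α := ℝ) k]
  -- the iteration operator
  set N : (Fin n → ℝ) → (Fin n → ℝ) :=
    fun w => (2:ℝ) • PA ((2:ℝ) • PB w - w) - ((2:ℝ) • PB w - w) with hN
  have hzN : ∀ k, z (k+1) = (1/2:ℝ) • (N (z k) + z k) := fun k => hz k
  have hyN : ∀ k : ℕ, N (y k) = (2:ℝ) • a - ((2:ℝ) • b - y k) := by
    intro k
    rw [hN]
    simp only
    rw [hyA k, hyB k]
  have hystep : ∀ k : ℕ, y (k+1) = (1/2:ℝ) • (N (y k) + y k) := by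
    intro k
    rw [hyN k]
    simp only [hy, hab]
    push_cast
    module
  have hyv : ∀ k : ℕ, y k - y (k+1) = v := by
    intro k
    rw [hy]
    simp only
    push_cast
    module
  have hNle : ∀ w w', Q (N w - N w') ≤ Q (w - w') := by
    intro w w'
    have h1 := refl_nonexp hPB hBconv w w'
    have h2 := refl_nonexp hPA hAconv ((2:ℝ) • PB w - w) ((2:ℝ) • PB w' - w')
    exact le_trans h2 h1
  -- Fejér-type telescoping
  set s : ℕ → ℝ := fun k => Q (z k - y k) with hs
  have hkey : ∀ k, s (k+1) + Q ((z k - z (k+1)) - v) ≤ s k := by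
    intro k
    have hu : z (k+1) - y (k+1) = (1/2:ℝ) • ((z k - y k) + (N (z k) - N (y k))) := by
      rw [hzN k, hystep k]; module
    have hw : (z k - z (k+1)) - v = (1/2:ℝ) • ((z k - y k) - (N (z k) - N (y k))) := by
      rw [← hyv k, hzN k, hystep k]; module
    show Q (z (k+1) - y (k+1)) + Q ((z k - z (k+1)) - v) ≤ Q (z k - y k)
    rw [hu, hw, parallelogram]
    have := hNle (z k) (y k)
    linarith
  have hs_anti : Antitone s := antitone_nat_of_succ_le fun k => by
    have := hkey k
    have := Q_nonneg ((z k - z (k+1)) - v)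
    linarith
  have hs0 : ∀ k, s k ≤ s 0 := fun k => hs_anti (Nat.zero_le k)
  have hsbdd : BddBelow (Set.range s) := ⟨0, by rintro x ⟨k, rfl⟩; exact Q_nonneg _⟩
  have hconv : Tendsto s atTop (𝓝 (⨅ k, s k)) := tendsto_atTop_ciInf hs_anti hsbdd
  have hconv1 : Tendsto (fun k => s (k+1)) atTop (𝓝 (⨅ k, s k)) :=
    hconv.comp (Filter.tendsto_add_atTop_nat 1)
  have hdiff0 : Tendsto (fun k => s k - s (k+1)) atTop (𝓝 0) := by
    have := hconv.sub hconv1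
    simpa using this
  have hδQ : Tendsto (fun k => Q ((z k - z (k+1)) - v)) atTop (𝓝 0) :=
    squeeze_zero (fun k => Q_nonneg _) (fun k => by have := hkey k; linarith) hdiff0
  have hδ : Tendsto (fun k => z k - z (k+1)) atTop (𝓝 v) := tendsto_of_Qtendsto hδQ
  have hδeq : (fun k => z k - z (k+1))
      = fun k => PB (z k) - PA ((2:ℝ) • PB (z k) - z k) := by
    funext k
    rw [hz k]
    module
  have hδ' : Tendsto (fun k => PB (z k) - PA ((2:ℝ) • PB (z k) - z k)) atTop (𝓝 v) := by
    rwa [hδeq] at hδ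
  -- boundedness
  have hQxb : ∀ k, Q (PB (z k) - b) ≤ s 0 := by
    intro k
    have h1 : Q (PB (z k) - PB (y k)) ≤ Q (z k - y k) := proj_nonexp hPB hBconv _ _
    rw [hyB k] at h1
    exact le_trans h1 (hs0 k)
  have hbd1 : ∃ M : ℝ, ∀ k, Real.sqrt (∑ i, (PB (z k) i)^2) ≤ M := by
    refine ⟨Real.sqrt (2 * Q b + 2 * s 0), fun k => ?_⟩
    apply Real.sqrt_le_sqrt
    have := Q_le_two (PB (z k)) b
    have h2 := hQxb k
    show Q (PB (z k)) ≤ _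
    linarith
  have hbd2 : ∃ M : ℝ, ∀ k, Real.sqrt (∑ i, (PA (PB (z k)) i)^2) ≤ M := by
    refine ⟨Real.sqrt (2 * Q (PA b) + 2 * s 0), fun k => ?_⟩
    apply Real.sqrt_le_sqrt
    have h1 : Q (PA (PB (z k)) - PA b) ≤ Q (PB (z k) - b) := proj_nonexp hPA hAconv _ _
    have h2 := hQxb k
    have h3 := Q_le_two (PA (PB (z k))) (PA b)
    show Q (PA (PB (z k))) ≤ _
    linarith
  -- second shadow sequence limit
  have hDle : ∀ c ∈ D, Q (c - v) ≤ Q c - Q v := by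
    intro c hc
    have h1 := hv c hc
    rw [ip_sub_right] at h1
    have h2 : ip v v = Q v := (Q_eq v).symm
    rw [Q_sub]
    have h3 := ip_comm c v
    linarith
  have hckD : ∀ k, PB (z k) - PA (PB (z k)) ∈ D :=
    fun k => ⟨PA (PB (z k)), (hPA _).1, PB (z k), (hPB _).1, rfl⟩
  have hck1 : ∀ k, Q (PB (z k) - PA (PB (z k)))
      ≤ Q (PB (z k) - PA ((2:ℝ) • PB (z k) - z k)) :=
    fun k => proj_Qmin hPA _ ((hPA _).1)
  have hQδv : Tendsto (fun k => Q (PB (z k) - PA ((2:ℝ) • PB (z k) - z k))) atTop (𝓝 (Q v)) :=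
    (Q_continuous.tendsto v).comp hδ'
  have hgv : Tendsto (fun k => Q (PB (z k) - PA ((2:ℝ) • PB (z k) - z k)) - Q v) atTop (𝓝 0) := by
    have := hQδv.sub_const (Q v)
    simpa using this
  have hc2 : Tendsto (fun k => Q ((PB (z k) - PA (PB (z k))) - v)) atTop (𝓝 0) := by
    refine squeeze_zero (fun k => Q_nonneg _) (fun k => ?_) hgv
    have h1 := hDle _ (hckD k)
    have h2 := hck1 k
    linarith
  have hcT : Tendsto (fun k => PB (z k) - PA (PB (z k))) atTop (𝓝 v) := tendsto_of_Qtendsto hc2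
  -- conclusion
  refine ⟨hbd1, hbd2, fun p hp => ?_⟩
  have hkey2 : p.1 ∈ A ∧ p.2 ∈ B ∧ p.2 - p.1 = v := by
    rcases hp with hp | hp
    · exact cluster_aux hAclosed hBclosed (fun k => (hPA _).1) (fun k => (hPB _).1) hδ' hp
    · exact cluster_aux hAclosed hBclosed (fun k => (hPA _).1) (fun k => (hPB _).1) hcT hp
  obtain ⟨hpA, hpB, hpv⟩ := hkey2
  refine ⟨hpA, hpB, fun u hu w hw => ?_⟩
  have h1 : Q (p.1 - p.2) = Q v := by
    have : p.1 - p.2 = -v := by rw [← hpv]; module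
    rw [this, Q_neg]
  have h2 : Q v ≤ Q (w - u) := hvmin _ ⟨u, hu, w, hw, rfl⟩
  have h3 : Q (w - u) = Q (u - w) := by
    rw [show w - u = -(u - w) by module, Q_neg]
  show Q (p.1 - p.2) ≤ Q (u - w)
  rw [h1]
  linarith
end
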